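/- arXiv:math/0608719 — 5 statements merged into one kernel-verified Lean document; each statement's English description precedes it below -/
import Mathlib

section
/- Let (Ω, F, P) be a probability space and let X be a bounded real random variable on it. For each s ∈ [0,1] let P_s be the probability measure whose density with respect to P is e^{-sX} / E_P[e^{-sX}]. Then log E_P[ exp( -(X - E_P[X]) ) ] = ∫_0^1 (1-s) · Var_{P_s}(X) ds, where Var_{P_s}(X) = E_{P_s}[X²] - (E_{P_s}[X])². -/
open MeasureTheory

/-- The exponentially tilted measure `P_s` with density `e^{-sX}/E_P[e^{-sX}]`
with respect to `P`. -/
noncomputable def tiltedMeasure {Ω : Type*} [MeasurableSpace Ω] (P : Measure Ω)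
    (X : Ω → ℝ) (s : ℝ) : Measure Ω :=
  P.withDensity fun ω =>
    ENNReal.ofReal (Real.exp (-(s * X ω)) / ∫ ω', Real.exp (-(s * X ω')) ∂P)

section Aux

variable {Ω : Type*} [MeasurableSpace Ω] (P : Measure Ω) [IsProbabilityMeasure P]

lemma aux_integrable_of_abs_le {f : Ω → ℝ} (hf : AEStronglyMeasurable f P) {M : ℝ}
    (h : ∀ ω, |f ω| ≤ M) : Integrable f P :=
  (integrable_const M).mono' hf (Filter.Eventually.of_forall fun ω => by
    simpa [Real.norm_eq_abs] using h ω)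

lemma aux_hasDerivAt {X g : Ω → ℝ} (hX : Measurable X) (hg : Measurable g)
    {C D : ℝ} (hC : ∀ ω, |X ω| ≤ C) (hD : ∀ ω, |g ω| ≤ D) (s : ℝ) :
    HasDerivAt (fun t => ∫ ω, g ω * Real.exp (-(t * X ω)) ∂P)
      (∫ ω, -(X ω * g ω * Real.exp (-(s * X ω))) ∂P) s := by
  have hΩ : Nonempty Ω := by
    rcases isEmpty_or_nonempty Ω with h | h
    · exfalso
      have h1 : P Set.univ = 1 := measure_univ
      rw [Set.univ_eq_empty_iff.mpr h, measure_empty] at h1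
      simp at h1
    · exact h
  have hC0 : 0 ≤ C := (abs_nonneg _).trans (hC (Classical.arbitrary Ω))
  have hD0 : 0 ≤ D := (abs_nonneg _).trans (hD (Classical.arbitrary Ω))
  have hexp_le : ∀ (t : ℝ) (ω : Ω), |t| ≤ |s| + 1 →
      Real.exp (-(t * X ω)) ≤ Real.exp ((|s| + 1) * C) := by
    intro t ω ht
    apply Real.exp_le_exp.2
    calc -(t * X ω) ≤ |t * X ω| := neg_le_abs _
      _ = |t| * |X ω| := abs_mul _ _
      _ ≤ (|s| + 1) * C := mul_le_mul ht (hC ω) (abs_nonneg _)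
          (by positivity)
  have key := hasDerivAt_integral_of_dominated_loc_of_deriv_le
    (F := fun t ω => g ω * Real.exp (-(t * X ω)))
    (F' := fun t ω => -(X ω * g ω * Real.exp (-(t * X ω))))
    (x₀ := s) (μ := P)
    (bound := fun _ => C * D * Real.exp ((|s| + 1) * C))
    (s := Metric.ball s 1) (Metric.ball_mem_nhds s one_pos)
    (Filter.Eventually.of_forall fun t =>
      ((hg.mul ((hX.const_mul t).neg.exp)).aestronglyMeasurable))
    (aux_integrable_of_abs_le P
      ((hg.mul ((hX.const_mul s).neg.exp)).aestronglyMeasurable)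
      (M := D * Real.exp ((|s| + 1) * C)) (fun ω => by
        rw [abs_mul, abs_of_nonneg (Real.exp_pos _).le]
        exact mul_le_mul (hD ω) (hexp_le s ω (by linarith)) (Real.exp_pos _).le hD0))
    (((hX.mul hg).mul ((hX.const_mul s).neg.exp)).neg.aestronglyMeasurable)
    (Filter.Eventually.of_forall fun ω => by
      intro t ht
      have ht' : |t| ≤ |s| + 1 := by
        have : |t - s| < 1 := by simpa [Metric.mem_ball, Real.dist_eq] using ht
        calc |t| = |t - s + s| := by ring_nf
          _ ≤ |t - s| + |s| := abs_add_le _ _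
          _ ≤ |s| + 1 := by linarith
      rw [Real.norm_eq_abs, abs_neg, abs_mul, abs_mul, abs_of_nonneg (Real.exp_pos _).le]
      exact mul_le_mul (mul_le_mul (hC ω) (hD ω) (abs_nonneg _) hC0)
        (hexp_le t ω ht') (Real.exp_pos _).le (by positivity))
    (integrable_const _)
    (Filter.Eventually.of_forall fun ω => by
      intro t ht
      have h1 : HasDerivAt (fun t : ℝ => -(t * X ω)) (-(X ω)) t :=
        (hasDerivAt_mul_const (X ω)).neg
      have h2 := (h1.exp).const_mul (g ω)
      refine h2.congr_deriv (Eq.symm ?_)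
      ring)
  exact key.2

end Aux

/-- For a bounded random variable `X` on a probability space `(Ω, F, P)`,
`log E_P[exp(-(X - E_P[X]))] = ∫₀¹ (1-s) Var_{P_s}(X) ds`, where `P_s` is the
exponentially tilted measure with density `e^{-sX}/E_P[e^{-sX}]` and
`Var_{P_s}(X) = E_{P_s}[X²] - (E_{P_s}[X])²`. -/
theorem log_laplace_eq_integral_tilted_variance
    {Ω : Type*} [MeasurableSpace Ω] (P : Measure Ω) [IsProbabilityMeasure P]
    (X : Ω → ℝ) (hX : Measurable X) (hbdd : ∃ C : ℝ, ∀ ω, |X ω| ≤ C) :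
    Real.log (∫ ω, Real.exp (-(X ω - ∫ ω', X ω' ∂P)) ∂P) =
      ∫ s in (0 : ℝ)..1, (1 - s) *
        ((∫ ω, (X ω) ^ 2 ∂(tiltedMeasure P X s)) -
          (∫ ω, X ω ∂(tiltedMeasure P X s)) ^ 2) := by
  obtain ⟨C, hC⟩ := hbdd
  set Z : ℝ → ℝ := fun s => ∫ ω, Real.exp (-(s * X ω)) ∂P with hZdef
  set Z1 : ℝ → ℝ := fun s => ∫ ω, X ω * Real.exp (-(s * X ω)) ∂P with hZ1def
  set Z2 : ℝ → ℝ := fun s => ∫ ω, X ω ^ 2 * Real.exp (-(s * X ω)) ∂P with hZ2def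
  -- integrability of exp(-(s X))
  have hint : ∀ s : ℝ, Integrable (fun ω => Real.exp (-(s * X ω))) P := by
    intro s
    apply aux_integrable_of_abs_le P ((hX.const_mul s).neg.exp).aestronglyMeasurable
      (M := Real.exp (|s| * C))
    intro ω
    rw [abs_of_nonneg (Real.exp_pos _).le]
    apply Real.exp_le_exp.2
    calc -(s * X ω) ≤ |s * X ω| := neg_le_abs _
      _ = |s| * |X ω| := abs_mul _ _
      _ ≤ |s| * C := by
          exact mul_le_mul_of_nonneg_left (hC ω) (abs_nonneg _)
  have hZpos : ∀ s : ℝ, 0 < Z s := fun s => integral_exp_pos (by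
    simpa using hint s)
  -- derivatives
  have hZ : ∀ s, HasDerivAt Z (-Z1 s) s := by
    intro s
    have h := aux_hasDerivAt P hX measurable_one (g := fun _ => (1 : ℝ))
      (D := 1) hC (fun ω => by norm_num) s
    simp only [one_mul, mul_one, integral_neg] at h
    exact h
  have hZ1 : ∀ s, HasDerivAt Z1 (-Z2 s) s := by
    intro s
    have h := aux_hasDerivAt P hX hX (g := X) (D := C) hC hC s
    simp only [integral_neg] at h
    refine h.congr_deriv (congrArg Neg.neg (Eq.symm ?_))
    refine integral_congr_ae (Filter.Eventually.of_forall fun ω => ?_)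
    ring
  -- tilted integrals
  have htilt : ∀ (s : ℝ) (g : Ω → ℝ),
      ∫ ω, g ω ∂(tiltedMeasure P X s) = (∫ ω, g ω * Real.exp (-(s * X ω)) ∂P) / Z s := by
    intro s g
    have : tiltedMeasure P X s = P.tilted (fun ω => -(s * X ω)) := rfl
    rw [this, integral_tilted]
    simp only [smul_eq_mul]
    rw [← integral_div]
    refine integral_congr_ae (Filter.Eventually.of_forall fun ω => ?_)
    rw [hZdef]
    ring
  -- functions
  set φ : ℝ → ℝ := fun s => -Z1 s / Z s with hφdef
  set V : ℝ → ℝ := fun s => Z2 s / Z s - (Z1 s / Z s) ^ 2 with hVdef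
  have hφ : ∀ s, HasDerivAt φ (V s) s := by
    intro s
    have h := ((hZ1 s).neg.div (hZ s) (hZpos s).ne')
    refine h.congr_deriv (Eq.symm ?_)
    have hz := (hZpos s).ne'
    show Z2 s / Z s - (Z1 s / Z s) ^ 2 = _
    rw [Pi.neg_apply, div_pow, div_sub_div _ _ hz (pow_ne_zero 2 hz),
      div_eq_div_iff (mul_ne_zero hz (pow_ne_zero 2 hz)) (pow_ne_zero 2 hz)]
    ring
  have hψ : ∀ s, HasDerivAt (fun t => Real.log (Z t)) (φ s) s := by
    intro s
    exact (hZ s).log (hZpos s).ne'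
  -- continuity
  have hZc : Continuous Z := by
    rw [continuous_iff_continuousAt]; exact fun s => (hZ s).continuousAt
  have hZ1c : Continuous Z1 := by
    rw [continuous_iff_continuousAt]; exact fun s => (hZ1 s).continuousAt
  have hZ2c : Continuous Z2 := by
    rw [continuous_iff_continuousAt]
    intro s
    exact (aux_hasDerivAt P hX (hX.pow_const 2) (g := fun ω => X ω ^ 2)
      (D := C ^ 2) hC (fun ω => by
        rw [abs_pow]
        exact pow_le_pow_left₀ (abs_nonneg _) (hC ω) 2) s).continuousAt
  have hZne : ∀ s : ℝ, Z s ≠ 0 := fun s => (hZpos s).ne'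
  have hφc : Continuous φ := hZ1c.neg.div hZc hZne
  have hVc : Continuous V := (hZ2c.div hZc hZne).sub ((hZ1c.div hZc hZne).pow 2)
  -- rewrite RHS integrand
  have hRHS : (∫ s in (0 : ℝ)..1, (1 - s) *
        ((∫ ω, (X ω) ^ 2 ∂(tiltedMeasure P X s)) -
          (∫ ω, X ω ∂(tiltedMeasure P X s)) ^ 2)) =
      ∫ s in (0 : ℝ)..1, (1 - s) * V s := by
    apply intervalIntegral.integral_congr
    intro s _
    dsimp only
    rw [htilt s (fun ω => X ω ^ 2), htilt s X, hVdef]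
  rw [hRHS]
  -- integration by parts
  have hparts : (∫ s in (0 : ℝ)..1, (1 - s) * V s) =
      (1 - 1) * φ 1 - (1 - 0) * φ 0 - ∫ s in (0 : ℝ)..1, (-1) * φ s := by
    apply intervalIntegral.integral_mul_deriv_eq_deriv_mul
      (u := fun s => 1 - s) (u' := fun _ => -1) (v := φ) (v' := V)
    · intro x _
      simpa using ((hasDerivAt_id x).const_sub 1)
    · intro x _
      exact hφ x
    · exact (continuous_const).intervalIntegrable 0 1
    · exact hVc.intervalIntegrable 0 1
  -- FTC
  have hftc : (∫ s in (0 : ℝ)..1, φ s) = Real.log (Z 1) - Real.log (Z 0) :=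
    intervalIntegral.integral_eq_sub_of_hasDerivAt (fun s _ => hψ s)
      (hφc.intervalIntegrable 0 1)
  have hZ0 : Z 0 = 1 := by simp [hZdef]
  have hZ10 : Z1 0 = ∫ ω, X ω ∂P := by simp [hZ1def]
  have hφ0 : φ 0 = -(∫ ω, X ω ∂P) := by
    rw [hφdef]; simp [hZ0, hZ10]
  -- LHS
  have hLHS : (∫ ω, Real.exp (-(X ω - ∫ ω', X ω' ∂P)) ∂P) =
      Real.exp (∫ ω', X ω' ∂P) * Z 1 := by
    rw [hZdef]
    simp only
    rw [← integral_const_mul]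
    refine integral_congr_ae (Filter.Eventually.of_forall fun ω => ?_)
    dsimp only
    rw [← Real.exp_add]
    congr 1
    ring
  rw [hLHS, Real.log_mul (Real.exp_ne_zero _) (hZne 1), Real.log_exp]
  rw [hparts]
  rw [intervalIntegral.integral_congr (g := fun s => -(φ s)) (fun s _ => by ring)]
  rw [intervalIntegral.integral_neg, hftc, hφ0, hZ0, Real.log_one]
  ring
end

section
/- Let n ≥ 1 and let ψ_0, …, ψ_{n-1} be real-valued functions in L²(ℝ) with ∫_ℝ ψ_l ψ_m dλ = δ_{lm}. Define p_n(λ_1, …, λ_n) = (det{ψ_{j-1}(λ_k)}_{j,k=1}^n)² / n! and K_n(λ, μ) = Σ_{l=0}^{n-1} ψ_l(λ) ψ_l(μ). Then p_n is a probability density on ℝⁿ, and for every bounded measurable φ : ℝ → ℝ, the variance of the linear statistic N_n[φ](λ_1, …, λ_n) = Σ_{l=1}^n φ(λ_l) with respect to p_n equals (1/2) ∫_ℝ ∫_ℝ (φ(λ_1) - φ(λ_2))² K_n(λ_1, λ_2)² dλ_1 dλ_2. -/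
open MeasureTheory

/-- The determinantal density `p_n(λ) = (det{ψ_{j-1}(λ_k)}_{j,k=1}^n)²/n!` built from the
functions `ψ_0, …, ψ_{n-1}`. -/
noncomputable def detDensity (n : ℕ) (ψ : Fin n → ℝ → ℝ) (lam : Fin n → ℝ) : ℝ :=
  (Matrix.of fun j k : Fin n => ψ j (lam k)).det ^ 2 / (n.factorial : ℝ)

section Aux
open Finset
variable {n : ℕ}
private noncomputable def sgn (σ : Equiv.Perm (Fin n)) : ℝ := ((Equiv.Perm.sign σ : ℤ) : ℝ)
private lemma sgn_mul_self (σ : Equiv.Perm (Fin n)) : sgn σ * sgn σ = 1 := by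
  unfold sgn
  rcases Int.units_eq_one_or (Equiv.Perm.sign σ) with h | h <;> simp [h]
private lemma sgn_mul_swap (σ : Equiv.Perm (Fin n)) {l m : Fin n} (hlm : l ≠ m) :
    sgn σ * sgn (σ * Equiv.swap l m) = -1 := by
  unfold sgn
  rw [Equiv.Perm.sign_mul, Equiv.Perm.sign_swap hlm]
  rcases Int.units_eq_one_or (Equiv.Perm.sign σ) with h | h <;> simp [h]
private lemma perm_eq_of_agree_off_one (σ τ : Equiv.Perm (Fin n)) (l : Fin n)
    (h : ∀ k, k ≠ l → σ k = τ k) : σ = τ := by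
  have hl : σ l = τ l := by
    by_contra hne
    have h1 : τ (τ.symm (σ l)) = σ l := τ.apply_symm_apply _
    have h2 : τ.symm (σ l) ≠ l := fun hc => hne (by rw [← h1, hc])
    have h3 : σ (τ.symm (σ l)) = σ l := by rw [h _ h2, h1]
    exact h2 (σ.injective h3)
  apply Equiv.ext
  intro k
  by_cases hk : k = l
  · rw [hk]; exact hl
  · exact h k hk
private lemma perm_fix_two (ρ : Equiv.Perm (Fin n)) (l m : Fin n) (hlm : l ≠ m)
    (h : ∀ k, k ≠ l → k ≠ m → ρ k = k) : ρ = 1 ∨ ρ = Equiv.swap l m := by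
  have hl : ρ l = l ∨ ρ l = m := by
    by_contra hc
    push_neg at hc
    have := h (ρ l) hc.1 hc.2
    exact hc.1 (ρ.injective this)
  rcases hl with hl | hl
  · left
    have hm : ρ m = m := by
      by_contra hc
      have h1 : ρ m ≠ l := fun he => hlm (ρ.injective (he.trans hl.symm)).symm
      have h2 := h (ρ m) h1 hc
      exact hc (ρ.injective h2)
    apply Equiv.ext
    intro k
    by_cases hk1 : k = l
    · rw [hk1, hl]; rfl
    by_cases hk2 : k = m
    · rw [hk2, hm]; rfl
    · rw [h k hk1 hk2]; rfl
  · right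
    have hm : ρ m = l := by
      by_contra hc
      have h2 : ρ m ≠ m := fun he => hlm (ρ.injective (hl.trans he.symm))
      have h3 := h (ρ m) hc h2
      exact h2 (ρ.injective h3)
    apply Equiv.ext
    intro k
    by_cases hk1 : k = l
    · rw [hk1, hl, Equiv.swap_apply_left]
    by_cases hk2 : k = m
    · rw [hk2, hm, Equiv.swap_apply_right]
    · rw [h k hk1 hk2, Equiv.swap_apply_of_ne_of_ne hk1 hk2]

private lemma prod_one_off {F : Fin n → ℝ} {l : Fin n} (h1 : ∀ k, k ≠ l → F k = 1) :
    ∏ k, F k = F l := by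
  rw [← Finset.mul_prod_erase Finset.univ F (Finset.mem_univ l),
    Finset.prod_eq_one fun k hk => h1 k (Finset.mem_erase.mp hk).1, mul_one]

private lemma prod_two_off {F : Fin n → ℝ} {l m : Fin n} (hlm : l ≠ m)
    (h1 : ∀ k, k ≠ l → k ≠ m → F k = 1) : ∏ k, F k = F l * F m := by
  rw [← Finset.mul_prod_erase Finset.univ F (Finset.mem_univ l),
    ← Finset.mul_prod_erase _ F (Finset.mem_erase.mpr ⟨Ne.symm hlm, Finset.mem_univ m⟩),
    Finset.prod_eq_one fun k hk => by
      have h2 := Finset.mem_erase.mp hk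
      have h3 := Finset.mem_erase.mp h2.2
      exact h1 k h3.1 h2.1,
    mul_one]

private lemma algA :
    (∑ σ : Equiv.Perm (Fin n), ∑ τ : Equiv.Perm (Fin n),
      sgn σ * sgn τ * ∏ k, (if σ k = τ k then (1:ℝ) else 0)) = (n.factorial : ℝ) := by
  have h1 : ∀ σ : Equiv.Perm (Fin n), (∑ τ : Equiv.Perm (Fin n),
      sgn σ * sgn τ * ∏ k, (if σ k = τ k then (1:ℝ) else 0)) = 1 := by
    intro σ
    rw [Finset.sum_eq_single σ]
    · rw [Finset.prod_eq_one fun k _ => if_pos rfl, mul_one, sgn_mul_self]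
    · intro τ _ hτ
      have : ∃ k : Fin n, σ k ≠ τ k := by
        by_contra hc
        push_neg at hc
        exact hτ (Equiv.ext fun k => hc k).symm
      obtain ⟨k, hk⟩ := this
      rw [Finset.prod_eq_zero (Finset.mem_univ k)
        (show (if σ k = τ k then (1:ℝ) else 0) = 0 from if_neg hk), mul_zero]
    · intro h; exact absurd (Finset.mem_univ σ) h
  simp only [h1, Finset.sum_const, Finset.card_univ, Fintype.card_perm, Fintype.card_fin,
    nsmul_eq_mul, mul_one]

private lemma algB (l : Fin n) (M : Fin n → Fin n → ℝ) :
    (∑ σ : Equiv.Perm (Fin n), ∑ τ : Equiv.Perm (Fin n),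
      sgn σ * sgn τ * ∏ k, (if k = l then M (σ k) (τ k) else if σ k = τ k then (1:ℝ) else 0))
    = ∑ σ : Equiv.Perm (Fin n), M (σ l) (σ l) := by
  refine Finset.sum_congr rfl fun σ _ => ?_
  rw [Finset.sum_eq_single σ]
  · have hp : (∏ k, (if k = l then M (σ k) (σ k) else if σ k = σ k then (1:ℝ) else 0))
        = M (σ l) (σ l) := by
      rw [prod_one_off (l := l) fun k hk => by rw [if_neg hk, if_pos rfl], if_pos rfl]
    rw [hp, sgn_mul_self, one_mul]
  · intro τ _ hτ
    have : ∃ k : Fin n, k ≠ l ∧ σ k ≠ τ k := by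
      by_contra hc
      push_neg at hc
      exact hτ (perm_eq_of_agree_off_one σ τ l hc).symm
    obtain ⟨k, hk1, hk2⟩ := this
    rw [Finset.prod_eq_zero (Finset.mem_univ k) (by rw [if_neg hk1, if_neg hk2]), mul_zero]
  · intro h; exact absurd (Finset.mem_univ σ) h

private lemma algC (l m : Fin n) (hlm : l ≠ m) (M : Fin n → Fin n → ℝ) :
    (∑ σ : Equiv.Perm (Fin n), ∑ τ : Equiv.Perm (Fin n),
      sgn σ * sgn τ * ∏ k, (if k = l then M (σ k) (τ k) else if k = m then M (σ k) (τ k)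
        else if σ k = τ k then (1:ℝ) else 0))
    = ∑ σ : Equiv.Perm (Fin n),
        (M (σ l) (σ l) * M (σ m) (σ m) - M (σ l) (σ m) * M (σ m) (σ l)) := by
  refine Finset.sum_congr rfl fun σ _ => ?_
  have hne : σ ≠ σ * Equiv.swap l m := by
    intro he
    have h1 : σ * 1 = σ * Equiv.swap l m := by rw [mul_one]; exact he
    have h2 : (1 : Equiv.Perm (Fin n)) = Equiv.swap l m := mul_left_cancel h1
    have h3 := congrArg (fun e : Equiv.Perm (Fin n) => e l) h2
    simp only [Equiv.Perm.one_apply, Equiv.swap_apply_left] at h3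
    exact hlm h3
  have hzero : ∀ τ ∈ (Finset.univ : Finset (Equiv.Perm (Fin n))),
      τ ∉ ({σ, σ * Equiv.swap l m} : Finset (Equiv.Perm (Fin n))) →
      sgn σ * sgn τ * ∏ k, (if k = l then M (σ k) (τ k) else if k = m then M (σ k) (τ k)
        else if σ k = τ k then (1:ℝ) else 0) = 0 := by
    intro τ _ hτ
    have hex : ∃ k : Fin n, k ≠ l ∧ k ≠ m ∧ σ k ≠ τ k := by
      by_contra hc
      push_neg at hc
      have hρ : ∀ k, k ≠ l → k ≠ m → (σ⁻¹ * τ) k = k := by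
        intro k h1 h2
        rw [Equiv.Perm.mul_apply, ← hc k h1 h2]
        exact σ.symm_apply_apply k
      have hτσ : τ = σ * (σ⁻¹ * τ) := by group
      rcases perm_fix_two (σ⁻¹ * τ) l m hlm hρ with h | h
      · rw [h, mul_one] at hτσ
        exact hτ (by rw [hτσ]; exact Finset.mem_insert_self _ _)
      · rw [h] at hτσ
        exact hτ (by rw [hτσ]; exact Finset.mem_insert_of_mem (Finset.mem_singleton_self _))
    obtain ⟨k, hk1, hk2, hk3⟩ := hex
    rw [Finset.prod_eq_zero (Finset.mem_univ k)
      (by rw [if_neg hk1, if_neg hk2, if_neg hk3]), mul_zero]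
  rw [← Finset.sum_subset (Finset.subset_univ {σ, σ * Equiv.swap l m}) hzero,
    Finset.sum_pair hne]
  have hval1 : (∏ k, (if k = l then M (σ k) (σ k) else if k = m then M (σ k) (σ k)
      else if σ k = σ k then (1:ℝ) else 0)) = M (σ l) (σ l) * M (σ m) (σ m) := by
    rw [prod_two_off hlm fun k h1 h2 => by rw [if_neg h1, if_neg h2, if_pos rfl]]
    simp [Ne.symm hlm]
  have hsl : (σ * Equiv.swap l m) l = σ m := by
    rw [Equiv.Perm.mul_apply, Equiv.swap_apply_left]
  have hsm : (σ * Equiv.swap l m) m = σ l := by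
    rw [Equiv.Perm.mul_apply, Equiv.swap_apply_right]
  have hval2 : (∏ k, (if k = l then M (σ k) ((σ * Equiv.swap l m) k)
      else if k = m then M (σ k) ((σ * Equiv.swap l m) k)
      else if σ k = (σ * Equiv.swap l m) k then (1:ℝ) else 0))
      = M (σ l) (σ m) * M (σ m) (σ l) := by
    rw [prod_two_off hlm fun k h1 h2 => by
      rw [if_neg h1, if_neg h2, if_pos (by
        rw [Equiv.Perm.mul_apply, Equiv.swap_apply_of_ne_of_ne h1 h2])]]
    simp [Ne.symm hlm, hsl, hsm]
  rw [hval1, hval2, sgn_mul_self, sgn_mul_swap σ hlm]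
  ring

variable {ψ : Fin n → ℝ → ℝ}

private lemma integrable_psi_mul (hmeas : ∀ l, Measurable (ψ l))
    (hL2 : ∀ l, MemLp (ψ l) 2 (volume : Measure ℝ)) (a b : Fin n) :
    Integrable (fun t => ψ a t * ψ b t) := by
  have h1 := (hL2 a).integrable_sq
  have h2 := (hL2 b).integrable_sq
  have h3 : Integrable (fun t => (ψ a t ^ 2 + ψ b t ^ 2) / 2) := (h1.add h2).div_const 2
  refine h3.mono' ((hmeas a).mul (hmeas b)).aestronglyMeasurable
    (Filter.Eventually.of_forall fun t => ?_)
  rw [Real.norm_eq_abs, abs_mul]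
  nlinarith [sq_nonneg (|ψ a t| - |ψ b t|), sq_abs (ψ a t), sq_abs (ψ b t),
    abs_nonneg (ψ a t), abs_nonneg (ψ b t)]

private lemma integrable_w_psi (hmeas : ∀ l, Measurable (ψ l))
    (hL2 : ∀ l, MemLp (ψ l) 2 (volume : Measure ℝ)) {w : ℝ → ℝ} (hw : Measurable w)
    (hwb : ∃ C, ∀ t, |w t| ≤ C) (a b : Fin n) :
    Integrable (fun t => w t * (ψ a t * ψ b t)) := by
  obtain ⟨C, hC⟩ := hwb
  exact (integrable_psi_mul hmeas hL2 a b).bdd_mul hw.aestronglyMeasurable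
    (Filter.Eventually.of_forall fun t => by rw [Real.norm_eq_abs]; exact hC t)

private lemma det_sq_expand (w : Fin n → ℝ → ℝ) (lam : Fin n → ℝ) :
    (∏ k, w k (lam k)) * (Matrix.of fun j k : Fin n => ψ j (lam k)).det ^ 2
    = ∑ σ : Equiv.Perm (Fin n), ∑ τ : Equiv.Perm (Fin n),
        sgn σ * sgn τ * ∏ k, (w k (lam k) * (ψ (σ k) (lam k) * ψ (τ k) (lam k))) := by
  rw [Matrix.det_apply, sq, Finset.sum_mul_sum, Finset.mul_sum]
  refine Finset.sum_congr rfl fun σ _ => ?_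
  rw [Finset.mul_sum]
  refine Finset.sum_congr rfl fun τ _ => ?_
  simp only [Matrix.of_apply, Units.smul_def, zsmul_eq_mul]
  rw [Finset.prod_mul_distrib, Finset.prod_mul_distrib]
  unfold sgn
  ring

private lemma integrable_term (hmeas : ∀ l, Measurable (ψ l))
    (hL2 : ∀ l, MemLp (ψ l) 2 (volume : Measure ℝ)) (w : Fin n → ℝ → ℝ)
    (hw : ∀ k, Measurable (w k)) (hwb : ∀ k, ∃ C, ∀ t, |w k t| ≤ C)
    (σ τ : Equiv.Perm (Fin n)) :
    Integrable (fun lam : Fin n → ℝ =>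
      sgn σ * sgn τ * ∏ k, (w k (lam k) * (ψ (σ k) (lam k) * ψ (τ k) (lam k)))) :=
  (Integrable.fintype_prod (f := fun k t => w k t * (ψ (σ k) t * ψ (τ k) t))
    fun k => integrable_w_psi hmeas hL2 (hw k) (hwb k) _ _).const_mul _

private lemma integrable_w_det_sq (hmeas : ∀ l, Measurable (ψ l))
    (hL2 : ∀ l, MemLp (ψ l) 2 (volume : Measure ℝ)) (w : Fin n → ℝ → ℝ)
    (hw : ∀ k, Measurable (w k)) (hwb : ∀ k, ∃ C, ∀ t, |w k t| ≤ C) :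
    Integrable (fun lam : Fin n → ℝ =>
      (∏ k, w k (lam k)) * (Matrix.of fun j k : Fin n => ψ j (lam k)).det ^ 2) := by
  have h : (fun lam : Fin n → ℝ =>
      (∏ k, w k (lam k)) * (Matrix.of fun j k : Fin n => ψ j (lam k)).det ^ 2)
      = fun lam => ∑ σ : Equiv.Perm (Fin n), ∑ τ : Equiv.Perm (Fin n),
        sgn σ * sgn τ * ∏ k, (w k (lam k) * (ψ (σ k) (lam k) * ψ (τ k) (lam k))) :=
    funext (det_sq_expand w)
  rw [h]
  exact integrable_finset_sum _ fun σ _ => integrable_finset_sum _ fun τ _ =>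
    integrable_term hmeas hL2 w hw hwb σ τ

private lemma integral_w_det_sq (hmeas : ∀ l, Measurable (ψ l))
    (hL2 : ∀ l, MemLp (ψ l) 2 (volume : Measure ℝ)) (w : Fin n → ℝ → ℝ)
    (hw : ∀ k, Measurable (w k)) (hwb : ∀ k, ∃ C, ∀ t, |w k t| ≤ C) :
    ∫ lam : Fin n → ℝ, (∏ k, w k (lam k)) * (Matrix.of fun j k : Fin n => ψ j (lam k)).det ^ 2
    = ∑ σ : Equiv.Perm (Fin n), ∑ τ : Equiv.Perm (Fin n),
        sgn σ * sgn τ * ∏ k, ∫ t : ℝ, w k t * (ψ (σ k) t * ψ (τ k) t) := by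
  simp_rw [det_sq_expand w]
  rw [integral_finset_sum _ (fun σ _ => integrable_finset_sum _ fun τ _ =>
    integrable_term hmeas hL2 w hw hwb σ τ)]
  refine Finset.sum_congr rfl fun σ _ => ?_
  rw [integral_finset_sum _ (fun τ _ => integrable_term hmeas hL2 w hw hwb σ τ)]
  refine Finset.sum_congr rfl fun τ _ => ?_
  rw [integral_const_mul,
    MeasureTheory.integral_fintype_prod_volume_eq_prod (ι := Fin n)
      (fun k t => w k t * (ψ (σ k) t * ψ (τ k) t))]

private lemma momentA (hmeas : ∀ l, Measurable (ψ l))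
    (hL2 : ∀ l, MemLp (ψ l) 2 (volume : Measure ℝ))
    (horth : ∀ l m, (∫ t : ℝ, ψ l t * ψ m t) = if l = m then (1 : ℝ) else 0) :
    ∫ lam : Fin n → ℝ, (Matrix.of fun j k : Fin n => ψ j (lam k)).det ^ 2
      = (n.factorial : ℝ) := by
  have h0 : (fun lam : Fin n → ℝ => (Matrix.of fun j k : Fin n => ψ j (lam k)).det ^ 2)
      = fun lam => (∏ k, (fun _ : Fin n => fun _ : ℝ => (1:ℝ)) k (lam k)) *
        (Matrix.of fun j k : Fin n => ψ j (lam k)).det ^ 2 := by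
    funext lam; simp
  rw [h0, integral_w_det_sq hmeas hL2 _ (fun _ => measurable_const)
    (fun _ => ⟨1, fun t => by norm_num⟩)]
  rw [← algA (n := n)]
  refine Finset.sum_congr rfl fun σ _ => Finset.sum_congr rfl fun τ _ => ?_
  congr 1
  refine Finset.prod_congr rfl fun k _ => ?_
  simp [horth (σ k) (τ k)]

private def wB (f : ℝ → ℝ) (l : Fin n) : Fin n → ℝ → ℝ :=
  fun k => if k = l then f else fun _ => 1

private lemma wB_meas {f : ℝ → ℝ} (hf : Measurable f) (l k : Fin n) :
    Measurable (wB f l k) := by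
  unfold wB; by_cases hk : k = l <;> simp [hk, hf]

private lemma wB_bdd {f : ℝ → ℝ} (hfb : ∃ C, ∀ t, |f t| ≤ C) (l k : Fin n) :
    ∃ C, ∀ t, |wB f l k t| ≤ C := by
  unfold wB; by_cases hk : k = l
  · simpa [hk] using hfb
  · exact ⟨1, fun t => by simp [hk]⟩

private lemma wB_prod (f : ℝ → ℝ) (l : Fin n) (lam : Fin n → ℝ) :
    ∏ k, wB f l k (lam k) = f (lam l) := by
  rw [prod_one_off (l := l) fun k hk => by simp [wB, hk]]
  simp [wB]

private lemma integrable_momentB (hmeas : ∀ l, Measurable (ψ l))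
    (hL2 : ∀ l, MemLp (ψ l) 2 (volume : Measure ℝ))
    {f : ℝ → ℝ} (hf : Measurable f) (hfb : ∃ C, ∀ t, |f t| ≤ C) (l : Fin n) :
    Integrable (fun lam : Fin n → ℝ =>
      f (lam l) * (Matrix.of fun j k : Fin n => ψ j (lam k)).det ^ 2) := by
  have h0 : (fun lam : Fin n → ℝ =>
      f (lam l) * (Matrix.of fun j k : Fin n => ψ j (lam k)).det ^ 2)
      = fun lam => (∏ k, wB f l k (lam k)) *
        (Matrix.of fun j k : Fin n => ψ j (lam k)).det ^ 2 := by
    funext lam; rw [wB_prod]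
  rw [h0]
  exact integrable_w_det_sq hmeas hL2 _ (wB_meas hf l) (wB_bdd hfb l)

private lemma momentB (hmeas : ∀ l, Measurable (ψ l))
    (hL2 : ∀ l, MemLp (ψ l) 2 (volume : Measure ℝ))
    (horth : ∀ l m, (∫ t : ℝ, ψ l t * ψ m t) = if l = m then (1 : ℝ) else 0)
    {f : ℝ → ℝ} (hf : Measurable f) (hfb : ∃ C, ∀ t, |f t| ≤ C) (l : Fin n) :
    ∫ lam : Fin n → ℝ, f (lam l) * (Matrix.of fun j k : Fin n => ψ j (lam k)).det ^ 2
    = ∑ σ : Equiv.Perm (Fin n), ∫ t : ℝ, f t * (ψ (σ l) t * ψ (σ l) t) := by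
  have h0 : (fun lam : Fin n → ℝ =>
      f (lam l) * (Matrix.of fun j k : Fin n => ψ j (lam k)).det ^ 2)
      = fun lam => (∏ k, wB f l k (lam k)) *
        (Matrix.of fun j k : Fin n => ψ j (lam k)).det ^ 2 := by
    funext lam; rw [wB_prod]
  rw [h0, integral_w_det_sq hmeas hL2 _ (wB_meas hf l) (wB_bdd hfb l)]
  rw [← algB l (fun a b => ∫ t : ℝ, f t * (ψ a t * ψ b t))]
  refine Finset.sum_congr rfl fun σ _ => Finset.sum_congr rfl fun τ _ => ?_
  congr 1
  refine Finset.prod_congr rfl fun k _ => ?_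
  by_cases hk : k = l
  · simp [wB, hk]
  · simp [wB, hk, horth (σ k) (τ k)]

private def wC (f : ℝ → ℝ) (l m : Fin n) : Fin n → ℝ → ℝ :=
  fun k => if k = l then f else if k = m then f else fun _ => 1

private lemma wC_meas {f : ℝ → ℝ} (hf : Measurable f) (l m k : Fin n) :
    Measurable (wC f l m k) := by
  unfold wC
  by_cases hk : k = l
  · simp [hk, hf]
  by_cases hk2 : k = m <;> simp [hk, hk2, hf]

private lemma wC_bdd {f : ℝ → ℝ} (hfb : ∃ C, ∀ t, |f t| ≤ C) (l m k : Fin n) :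
    ∃ C, ∀ t, |wC f l m k t| ≤ C := by
  unfold wC
  by_cases hk : k = l
  · simpa [hk] using hfb
  by_cases hk2 : k = m
  · simpa [hk, hk2] using hfb
  · exact ⟨1, fun t => by simp [hk, hk2]⟩

private lemma wC_prod (f : ℝ → ℝ) {l m : Fin n} (hlm : l ≠ m) (lam : Fin n → ℝ) :
    ∏ k, wC f l m k (lam k) = f (lam l) * f (lam m) := by
  rw [prod_two_off hlm fun k hk1 hk2 => by simp [wC, hk1, hk2]]
  simp [wC, hlm, Ne.symm hlm]

private lemma integrable_momentC (hmeas : ∀ l, Measurable (ψ l))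
    (hL2 : ∀ l, MemLp (ψ l) 2 (volume : Measure ℝ))
    {f : ℝ → ℝ} (hf : Measurable f) (hfb : ∃ C, ∀ t, |f t| ≤ C)
    {l m : Fin n} (hlm : l ≠ m) :
    Integrable (fun lam : Fin n → ℝ =>
      f (lam l) * f (lam m) * (Matrix.of fun j k : Fin n => ψ j (lam k)).det ^ 2) := by
  have h0 : (fun lam : Fin n → ℝ =>
      f (lam l) * f (lam m) * (Matrix.of fun j k : Fin n => ψ j (lam k)).det ^ 2)
      = fun lam => (∏ k, wC f l m k (lam k)) *
        (Matrix.of fun j k : Fin n => ψ j (lam k)).det ^ 2 := by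
    funext lam; rw [wC_prod f hlm]
  rw [h0]
  exact integrable_w_det_sq hmeas hL2 _ (wC_meas hf l m) (wC_bdd hfb l m)

private lemma momentC (hmeas : ∀ l, Measurable (ψ l))
    (hL2 : ∀ l, MemLp (ψ l) 2 (volume : Measure ℝ))
    (horth : ∀ l m, (∫ t : ℝ, ψ l t * ψ m t) = if l = m then (1 : ℝ) else 0)
    {f : ℝ → ℝ} (hf : Measurable f) (hfb : ∃ C, ∀ t, |f t| ≤ C)
    {l m : Fin n} (hlm : l ≠ m) :
    ∫ lam : Fin n → ℝ,
        f (lam l) * f (lam m) * (Matrix.of fun j k : Fin n => ψ j (lam k)).det ^ 2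
    = ∑ σ : Equiv.Perm (Fin n),
        ((∫ t : ℝ, f t * (ψ (σ l) t * ψ (σ l) t)) * (∫ t : ℝ, f t * (ψ (σ m) t * ψ (σ m) t))
          - (∫ t : ℝ, f t * (ψ (σ l) t * ψ (σ m) t)) *
            (∫ t : ℝ, f t * (ψ (σ m) t * ψ (σ l) t))) := by
  have h0 : (fun lam : Fin n → ℝ =>
      f (lam l) * f (lam m) * (Matrix.of fun j k : Fin n => ψ j (lam k)).det ^ 2)
      = fun lam => (∏ k, wC f l m k (lam k)) *
        (Matrix.of fun j k : Fin n => ψ j (lam k)).det ^ 2 := by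
    funext lam; rw [wC_prod f hlm]
  rw [h0, integral_w_det_sq hmeas hL2 _ (wC_meas hf l m) (wC_bdd hfb l m)]
  rw [← algC l m hlm (fun a b => ∫ t : ℝ, f t * (ψ a t * ψ b t))]
  refine Finset.sum_congr rfl fun σ _ => Finset.sum_congr rfl fun τ _ => ?_
  congr 1
  refine Finset.prod_congr rfl fun k _ => ?_
  by_cases hk : k = l
  · simp [wC, hk]
  by_cases hk2 : k = m
  · simp [wC, hk, hk2]
  · simp [wC, hk, hk2, horth (σ k) (τ k)]

private lemma count1 (F : Fin n → ℝ) :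
    ∑ l : Fin n, ∑ σ : Equiv.Perm (Fin n), F (σ l)
      = (n.factorial : ℝ) * ∑ a, F a := by
  rw [Finset.sum_comm, Finset.sum_congr rfl fun σ _ => Equiv.sum_comp σ F,
    Finset.sum_const, Finset.card_univ, Fintype.card_perm, Fintype.card_fin, nsmul_eq_mul]

private lemma count2 (G : Fin n → Fin n → ℝ) :
    ∑ l : Fin n, ∑ m : Fin n, ∑ σ : Equiv.Perm (Fin n), G (σ l) (σ m)
      = (n.factorial : ℝ) * ∑ a, ∑ b, G a b := by
  have h1 : ∀ σ : Equiv.Perm (Fin n), (∑ l, ∑ m, G (σ l) (σ m)) = ∑ a, ∑ b, G a b := by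
    intro σ
    rw [Finset.sum_congr rfl fun l _ => Equiv.sum_comp σ (fun b => G (σ l) b)]
    exact Equiv.sum_comp σ (fun a => ∑ b, G a b)
  rw [Finset.sum_congr rfl fun l (_ : l ∈ Finset.univ) => Finset.sum_comm, Finset.sum_comm,
    Finset.sum_congr rfl fun σ _ => h1 σ,
    Finset.sum_const, Finset.card_univ, Fintype.card_perm, Fintype.card_fin, nsmul_eq_mul]

private lemma final_alg (M M₂ : Fin n → Fin n → ℝ) (hM : ∀ a b, M a b = M b a) :
    (∑ a, ∑ b, (if a = b then M₂ a a else (M a a * M b b - M a b * M b a)))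
      - (∑ a, M a a) ^ 2
    = (∑ a, M₂ a a) - ∑ a, ∑ b, (M a b) ^ 2 := by
  have h1 : ∀ a b : Fin n, (if a = b then M₂ a a else (M a a * M b b - M a b * M b a))
      = M a a * M b b - (M a b) ^ 2 + (if a = b then M₂ a a else 0) := by
    intro a b
    by_cases h : a = b
    · subst h; simp; ring
    · rw [if_neg h, if_neg h, ← hM a b]; ring
  simp_rw [h1, Finset.sum_add_distrib, Finset.sum_ite_eq, Finset.mem_univ, if_pos,
    Finset.sum_sub_distrib]
  rw [← Finset.sum_mul_sum Finset.univ Finset.univ (fun a => M a a) (fun b => M b b)]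
  ring

private lemma rhs_inner (hmeas : ∀ l, Measurable (ψ l))
    (hL2 : ∀ l, MemLp (ψ l) 2 (volume : Measure ℝ))
    (horth : ∀ l m, (∫ t : ℝ, ψ l t * ψ m t) = if l = m then (1 : ℝ) else 0)
    {φ : ℝ → ℝ} (hφm : Measurable φ) {C : ℝ} (hC : ∀ t, |φ t| ≤ C) (t₁ : ℝ) :
    ∫ t₂ : ℝ, (φ t₁ - φ t₂) ^ 2 * (∑ l, ψ l t₁ * ψ l t₂) ^ 2
    = ∑ a : Fin n, ∑ b : Fin n, (ψ a t₁ * ψ b t₁) *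
        ((φ t₁) ^ 2 * (if a = b then (1:ℝ) else 0)
          - 2 * φ t₁ * (∫ t : ℝ, φ t * (ψ a t * ψ b t))
          + (∫ t : ℝ, (φ t * φ t) * (ψ a t * ψ b t))) := by
  have hC0 : 0 ≤ C := le_trans (abs_nonneg (φ 0)) (hC 0)
  have hwm : Measurable (fun t : ℝ => (φ t₁ - φ t) ^ 2) :=
    ((measurable_const.sub hφm).pow measurable_const)
  have hwb : ∀ t : ℝ, |(φ t₁ - φ t) ^ 2| ≤ (|φ t₁| + C) ^ 2 := by
    intro t
    rw [abs_of_nonneg (sq_nonneg _)]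
    nlinarith [hC t, le_abs_self (φ t), neg_abs_le (φ t), le_abs_self (φ t₁),
      neg_abs_le (φ t₁), abs_nonneg (φ t₁), abs_nonneg (φ t)]
  -- pointwise expansion of the square of the kernel
  have hpt : (fun t₂ : ℝ => (φ t₁ - φ t₂) ^ 2 * (∑ l, ψ l t₁ * ψ l t₂) ^ 2)
      = fun t₂ => ∑ a : Fin n, ∑ b : Fin n,
          (ψ a t₁ * ψ b t₁) * ((φ t₁ - φ t₂) ^ 2 * (ψ a t₂ * ψ b t₂)) := by
    funext t₂
    rw [sq (∑ l, ψ l t₁ * ψ l t₂), Finset.sum_mul_sum, Finset.mul_sum]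
    refine Finset.sum_congr rfl fun a _ => ?_
    rw [Finset.mul_sum]
    refine Finset.sum_congr rfl fun b _ => ?_
    ring
  have hint : ∀ a b : Fin n, Integrable (fun t : ℝ => (φ t₁ - φ t) ^ 2 * (ψ a t * ψ b t)) :=
    fun a b => integrable_w_psi hmeas hL2 hwm ⟨(|φ t₁| + C) ^ 2, hwb⟩ a b
  rw [hpt, integral_finset_sum _ (fun a _ => integrable_finset_sum _ fun b _ =>
    (hint a b).const_mul _)]
  refine Finset.sum_congr rfl fun a _ => ?_
  rw [integral_finset_sum _ (fun b _ => (hint a b).const_mul _)]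
  refine Finset.sum_congr rfl fun b _ => ?_
  rw [integral_const_mul]
  congr 1
  -- expand the squared difference inside the integral
  have hpt2 : (fun t : ℝ => (φ t₁ - φ t) ^ 2 * (ψ a t * ψ b t))
      = fun t => ((φ t₁) ^ 2 * (ψ a t * ψ b t) - 2 * φ t₁ * (φ t * (ψ a t * ψ b t)))
          + (φ t * φ t) * (ψ a t * ψ b t) := by
    funext t; ring
  have i1 : Integrable (fun t : ℝ => (φ t₁) ^ 2 * (ψ a t * ψ b t)) :=
    (integrable_psi_mul hmeas hL2 a b).const_mul _
  have i2 : Integrable (fun t : ℝ => 2 * φ t₁ * (φ t * (ψ a t * ψ b t))) :=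
    ((integrable_w_psi hmeas hL2 hφm ⟨C, hC⟩ a b).const_mul _)
  have i3 : Integrable (fun t : ℝ => (φ t * φ t) * (ψ a t * ψ b t)) := by
    refine integrable_w_psi hmeas hL2 (hφm.mul hφm) ⟨C * C, fun t => ?_⟩ a b
    rw [Pi.mul_apply, abs_mul]
    exact mul_le_mul (hC t) (hC t) (abs_nonneg _) hC0
  have i12 : Integrable (fun t : ℝ => (φ t₁) ^ 2 * (ψ a t * ψ b t)
      - 2 * φ t₁ * (φ t * (ψ a t * ψ b t))) := i1.sub i2
  rw [hpt2, integral_add i12 i3, integral_sub i1 i2, integral_const_mul,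
    integral_const_mul, horth a b]

private lemma rhs_value (hmeas : ∀ l, Measurable (ψ l))
    (hL2 : ∀ l, MemLp (ψ l) 2 (volume : Measure ℝ))
    (horth : ∀ l m, (∫ t : ℝ, ψ l t * ψ m t) = if l = m then (1 : ℝ) else 0)
    {φ : ℝ → ℝ} (hφm : Measurable φ) {C : ℝ} (hC : ∀ t, |φ t| ≤ C) :
    ∫ t₁ : ℝ, ∫ t₂ : ℝ, (φ t₁ - φ t₂) ^ 2 * (∑ l, ψ l t₁ * ψ l t₂) ^ 2
    = 2 * (∑ a : Fin n, ∫ t : ℝ, (φ t * φ t) * (ψ a t * ψ a t))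
      - 2 * ∑ a : Fin n, ∑ b : Fin n, (∫ t : ℝ, φ t * (ψ a t * ψ b t)) ^ 2 := by
  have hC0 : 0 ≤ C := le_trans (abs_nonneg (φ 0)) (hC 0)
  rw [integral_congr_ae (Filter.EventuallyEq.of_eq
    (funext fun t₁ => rhs_inner hmeas hL2 horth hφm hC t₁))]
  -- set up notation for the two coefficient integrals
  set M : Fin n → Fin n → ℝ := fun a b => ∫ t : ℝ, φ t * (ψ a t * ψ b t) with hMdef
  set M₂ : Fin n → Fin n → ℝ := fun a b => ∫ t : ℝ, (φ t * φ t) * (ψ a t * ψ b t) with hM2def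
  have hub : ∀ (a b : Fin n) (t : ℝ),
      |(φ t) ^ 2 * (if a = b then (1:ℝ) else 0) - 2 * φ t * M a b + M₂ a b|
        ≤ C ^ 2 * 1 + 2 * C * |M a b| + |M₂ a b| := by
    intro a b t
    have h1 : |(φ t) ^ 2 * (if a = b then (1:ℝ) else 0)| ≤ C ^ 2 * 1 := by
      rw [abs_mul]
      refine mul_le_mul ?_ ?_ (abs_nonneg _) (by positivity)
      · rw [abs_of_nonneg (sq_nonneg _)]
        nlinarith [hC t, le_abs_self (φ t), neg_abs_le (φ t)]
      · by_cases h : a = b <;> simp [h]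
    have h2 : |2 * φ t * M a b| ≤ 2 * C * |M a b| := by
      rw [abs_mul, abs_mul]
      have : |(2:ℝ)| = 2 := by norm_num
      rw [this]
      refine mul_le_mul_of_nonneg_right ?_ (abs_nonneg _)
      nlinarith [hC t]
    calc |(φ t) ^ 2 * (if a = b then (1:ℝ) else 0) - 2 * φ t * M a b + M₂ a b|
        ≤ |(φ t) ^ 2 * (if a = b then (1:ℝ) else 0) - 2 * φ t * M a b| + |M₂ a b| :=
          abs_add_le _ _
      _ ≤ (|(φ t) ^ 2 * (if a = b then (1:ℝ) else 0)| + |2 * φ t * M a b|) + |M₂ a b| := by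
          gcongr; exact abs_sub _ _
      _ ≤ (C ^ 2 * 1 + 2 * C * |M a b|) + |M₂ a b| := by gcongr
  have hintab : ∀ a b : Fin n, Integrable (fun t₁ : ℝ => (ψ a t₁ * ψ b t₁) *
      ((φ t₁) ^ 2 * (if a = b then (1:ℝ) else 0) - 2 * φ t₁ * M a b + M₂ a b)) := by
    intro a b
    have hw : Measurable (fun t : ℝ =>
        (φ t) ^ 2 * (if a = b then (1:ℝ) else 0) - 2 * φ t * M a b + M₂ a b) := by
      exact (((hφm.pow measurable_const).mul measurable_const).sub
        ((measurable_const.mul hφm).mul measurable_const)).add measurable_const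
    have := integrable_w_psi hmeas hL2 hw
      ⟨C ^ 2 * 1 + 2 * C * |M a b| + |M₂ a b|, hub a b⟩ a b
    exact this.congr (Filter.EventuallyEq.of_eq (funext fun t => mul_comm _ _))
  rw [integral_finset_sum _ (fun a _ => integrable_finset_sum _ fun b _ => hintab a b)]
  have hterm : ∀ a b : Fin n, (∫ t₁ : ℝ, (ψ a t₁ * ψ b t₁) *
      ((φ t₁) ^ 2 * (if a = b then (1:ℝ) else 0) - 2 * φ t₁ * M a b + M₂ a b))
      = (if a = b then (1:ℝ) else 0) * M₂ a b - 2 * M a b * M a b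
          + M₂ a b * (if a = b then (1:ℝ) else 0) := by
    intro a b
    have hpt : (fun t₁ : ℝ => (ψ a t₁ * ψ b t₁) *
        ((φ t₁) ^ 2 * (if a = b then (1:ℝ) else 0) - 2 * φ t₁ * M a b + M₂ a b))
        = fun t₁ => ((if a = b then (1:ℝ) else 0) * ((φ t₁ * φ t₁) * (ψ a t₁ * ψ b t₁))
            - (2 * M a b) * (φ t₁ * (ψ a t₁ * ψ b t₁)))
          + M₂ a b * (ψ a t₁ * ψ b t₁) := by
      funext t₁; ring
    have i1 : Integrable (fun t : ℝ =>
        (if a = b then (1:ℝ) else 0) * ((φ t * φ t) * (ψ a t * ψ b t))) := by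
      refine Integrable.const_mul ?_ _
      refine integrable_w_psi hmeas hL2 (hφm.mul hφm) ⟨C * C, fun t => ?_⟩ a b
      rw [Pi.mul_apply, abs_mul]
      exact mul_le_mul (hC t) (hC t) (abs_nonneg _) hC0
    have i2 : Integrable (fun t : ℝ => (2 * M a b) * (φ t * (ψ a t * ψ b t))) :=
      (integrable_w_psi hmeas hL2 hφm ⟨C, hC⟩ a b).const_mul _
    have i3 : Integrable (fun t : ℝ => M₂ a b * (ψ a t * ψ b t)) :=
      (integrable_psi_mul hmeas hL2 a b).const_mul _
    have i12 : Integrable (fun t : ℝ =>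
        (if a = b then (1:ℝ) else 0) * ((φ t * φ t) * (ψ a t * ψ b t))
          - (2 * M a b) * (φ t * (ψ a t * ψ b t))) := i1.sub i2
    rw [hpt, integral_add i12 i3, integral_sub i1 i2, integral_const_mul,
      integral_const_mul, integral_const_mul, horth a b, hMdef, hM2def]
  rw [Finset.sum_congr rfl fun a _ => integral_finset_sum _ fun b _ => hintab a b]
  rw [Finset.sum_congr rfl fun a (_ : a ∈ Finset.univ) =>
    Finset.sum_congr rfl fun b _ => hterm a b]
  simp_rw [Finset.sum_add_distrib, Finset.sum_sub_distrib]
  have e1 : ∀ a : Fin n, ∑ b, (if a = b then (1:ℝ) else 0) * M₂ a b = M₂ a a := by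
    intro a
    rw [Finset.sum_congr rfl fun b _ => by
      rw [show (if a = b then (1:ℝ) else 0) * M₂ a b
        = (if a = b then M₂ a b else 0) from by by_cases h : a = b <;> simp [h]]]
    rw [Finset.sum_ite_eq, if_pos (Finset.mem_univ a)]
  have e2 : ∀ a : Fin n, ∑ b, M₂ a b * (if a = b then (1:ℝ) else 0) = M₂ a a := by
    intro a
    rw [Finset.sum_congr rfl fun b _ => by
      rw [show M₂ a b * (if a = b then (1:ℝ) else 0)
        = (if a = b then M₂ a b else 0) from by by_cases h : a = b <;> simp [h]]]
    rw [Finset.sum_ite_eq, if_pos (Finset.mem_univ a)]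
  rw [Finset.sum_congr rfl fun a (_ : a ∈ Finset.univ) => e1 a,
    Finset.sum_congr rfl fun a (_ : a ∈ Finset.univ) => e2 a]
  have e3 : ∀ a b : Fin n, 2 * M a b * M a b = 2 * (M a b) ^ 2 := fun a b => by ring
  simp_rw [e3, ← Finset.mul_sum]
  ring

end Aux

/-- For orthonormal `ψ_0, …, ψ_{n-1}` in `L²(ℝ)`, the determinantal density
`p_n = (det{ψ_{j-1}(λ_k)})²/n!` is a probability density on `ℝⁿ`, and for every bounded
measurable `φ` the variance of the linear statistic `Σ_l φ(λ_l)` with respect to `p_n`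
equals `(1/2) ∬ (φ(λ₁)-φ(λ₂))² K_n(λ₁,λ₂)² dλ₁ dλ₂`, where
`K_n(λ,μ) = Σ_{l<n} ψ_l(λ) ψ_l(μ)`. -/
theorem variance_linear_statistic_detDensity (n : ℕ) (hn : 1 ≤ n)
    (ψ : Fin n → ℝ → ℝ) (hmeas : ∀ l, Measurable (ψ l))
    (hL2 : ∀ l, MemLp (ψ l) 2 (volume : Measure ℝ))
    (horth : ∀ l m, (∫ t : ℝ, ψ l t * ψ m t) = if l = m then (1 : ℝ) else 0)
    (φ : ℝ → ℝ) (hφm : Measurable φ) (hφb : ∃ C : ℝ, ∀ t, |φ t| ≤ C) :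
    (∀ lam : Fin n → ℝ, 0 ≤ detDensity n ψ lam) ∧
    (∫ lam : Fin n → ℝ, detDensity n ψ lam) = 1 ∧
    (∫ lam : Fin n → ℝ, (∑ l, φ (lam l)) ^ 2 * detDensity n ψ lam) -
        (∫ lam : Fin n → ℝ, (∑ l, φ (lam l)) * detDensity n ψ lam) ^ 2 =
      (1 / 2) * ∫ t₁ : ℝ, ∫ t₂ : ℝ,
        (φ t₁ - φ t₂) ^ 2 * (∑ l, ψ l t₁ * ψ l t₂) ^ 2 := by
  obtain ⟨C, hC⟩ := hφb
  have hC0 : 0 ≤ C := le_trans (abs_nonneg (φ 0)) (hC 0)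
  have hn0 : 0 < n := hn
  have hNne : (n.factorial : ℝ) ≠ 0 := Nat.cast_ne_zero.mpr n.factorial_ne_zero
  have hφ2b : ∀ t, |φ t * φ t| ≤ C * C := fun t => by
    rw [abs_mul]; exact mul_le_mul (hC t) (hC t) (abs_nonneg _) hC0
  refine ⟨?_, ?_, ?_⟩
  · intro lam
    unfold detDensity
    positivity
  · unfold detDensity
    rw [integral_div, momentA hmeas hL2 horth, div_self hNne]
  -- mean
  have hE1 : (∫ lam : Fin n → ℝ, (∑ l, φ (lam l)) * detDensity n ψ lam)
      = ∑ a, ∫ t : ℝ, φ t * (ψ a t * ψ a t) := by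
    have h0 : ∀ lam : Fin n → ℝ, (∑ l, φ (lam l)) * detDensity n ψ lam
        = (∑ l, φ (lam l) * (Matrix.of fun j k : Fin n => ψ j (lam k)).det ^ 2)
            / (n.factorial : ℝ) := by
      intro lam
      unfold detDensity
      rw [Finset.sum_mul, Finset.sum_div]
      exact Finset.sum_congr rfl fun l _ => (mul_div_assoc _ _ _).symm
    rw [integral_congr_ae (Filter.EventuallyEq.of_eq (funext h0)), integral_div,
      integral_finset_sum _ (fun l _ => integrable_momentB hmeas hL2 hφm ⟨C, hC⟩ l),
      Finset.sum_congr rfl fun l _ => momentB hmeas hL2 horth hφm ⟨C, hC⟩ l,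
      count1 (fun a => ∫ t : ℝ, φ t * (ψ a t * ψ a t)),
      mul_div_cancel_left₀ _ hNne]
  -- second moment
  have hE2 : (∫ lam : Fin n → ℝ, (∑ l, φ (lam l)) ^ 2 * detDensity n ψ lam)
      = ∑ a, ∑ b, (if a = b then (∫ t : ℝ, (φ t * φ t) * (ψ a t * ψ a t))
          else ((∫ t : ℝ, φ t * (ψ a t * ψ a t)) * (∫ t : ℝ, φ t * (ψ b t * ψ b t))
            - (∫ t : ℝ, φ t * (ψ a t * ψ b t)) * (∫ t : ℝ, φ t * (ψ b t * ψ a t)))) := by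
    have h0 : ∀ lam : Fin n → ℝ, (∑ l, φ (lam l)) ^ 2 * detDensity n ψ lam
        = (∑ l, ∑ m, φ (lam l) * φ (lam m) *
            (Matrix.of fun j k : Fin n => ψ j (lam k)).det ^ 2) / (n.factorial : ℝ) := by
      intro lam
      unfold detDensity
      rw [sq (∑ l, φ (lam l)), Finset.sum_mul_sum, Finset.sum_mul, Finset.sum_div]
      refine Finset.sum_congr rfl fun l _ => ?_
      rw [Finset.sum_mul, Finset.sum_div]
      exact Finset.sum_congr rfl fun m _ => (mul_div_assoc _ _ _).symm
    have hint : ∀ l m : Fin n, Integrable (fun lam : Fin n → ℝ =>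
        φ (lam l) * φ (lam m) * (Matrix.of fun j k : Fin n => ψ j (lam k)).det ^ 2) := by
      intro l m
      by_cases hlm : l = m
      · subst hlm
        exact integrable_momentB hmeas hL2 (hφm.mul hφm) ⟨C * C, hφ2b⟩ l
      · exact integrable_momentC hmeas hL2 hφm ⟨C, hC⟩ hlm
    have hv : ∀ l m : Fin n, (∫ lam : Fin n → ℝ, φ (lam l) * φ (lam m) *
        (Matrix.of fun j k : Fin n => ψ j (lam k)).det ^ 2)
        = ∑ σ : Equiv.Perm (Fin n),
            (if σ l = σ m then (∫ t : ℝ, (φ t * φ t) * (ψ (σ l) t * ψ (σ l) t))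
              else ((∫ t : ℝ, φ t * (ψ (σ l) t * ψ (σ l) t)) *
                    (∫ t : ℝ, φ t * (ψ (σ m) t * ψ (σ m) t))
                - (∫ t : ℝ, φ t * (ψ (σ l) t * ψ (σ m) t)) *
                  (∫ t : ℝ, φ t * (ψ (σ m) t * ψ (σ l) t)))) := by
      intro l m
      by_cases hlm : l = m
      · subst hlm
        have h1 := momentB (f := fun t => φ t * φ t) hmeas hL2 horth (hφm.mul hφm)
          ⟨C * C, hφ2b⟩ l
        exact h1.trans (Finset.sum_congr rfl fun σ _ => (if_pos rfl).symm)
      · have h1 := momentC (f := φ) hmeas hL2 horth hφm ⟨C, hC⟩ hlm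
        exact h1.trans (Finset.sum_congr rfl fun σ _ =>
          (if_neg (fun h => hlm (σ.injective h))).symm)
    have hc2 : (∑ l : Fin n, ∑ m : Fin n, ∑ σ : Equiv.Perm (Fin n),
        (if σ l = σ m then (∫ t : ℝ, (φ t * φ t) * (ψ (σ l) t * ψ (σ l) t))
          else ((∫ t : ℝ, φ t * (ψ (σ l) t * ψ (σ l) t)) *
                (∫ t : ℝ, φ t * (ψ (σ m) t * ψ (σ m) t))
            - (∫ t : ℝ, φ t * (ψ (σ l) t * ψ (σ m) t)) *
              (∫ t : ℝ, φ t * (ψ (σ m) t * ψ (σ l) t)))))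
        = (n.factorial : ℝ) * ∑ a, ∑ b,
            (if a = b then (∫ t : ℝ, (φ t * φ t) * (ψ a t * ψ a t))
              else ((∫ t : ℝ, φ t * (ψ a t * ψ a t)) * (∫ t : ℝ, φ t * (ψ b t * ψ b t))
                - (∫ t : ℝ, φ t * (ψ a t * ψ b t)) * (∫ t : ℝ, φ t * (ψ b t * ψ a t)))) :=
      count2 (fun a b => (if a = b then (∫ t : ℝ, (φ t * φ t) * (ψ a t * ψ a t))
              else ((∫ t : ℝ, φ t * (ψ a t * ψ a t)) * (∫ t : ℝ, φ t * (ψ b t * ψ b t))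
                - (∫ t : ℝ, φ t * (ψ a t * ψ b t)) * (∫ t : ℝ, φ t * (ψ b t * ψ a t)))))
    rw [integral_congr_ae (Filter.EventuallyEq.of_eq (funext h0)), integral_div,
      integral_finset_sum _ (fun l _ => integrable_finset_sum _ fun m _ => hint l m),
      Finset.sum_congr rfl fun l (_ : l ∈ Finset.univ) =>
        integral_finset_sum _ (fun m _ => hint l m),
      Finset.sum_congr rfl fun l (_ : l ∈ Finset.univ) =>
        Finset.sum_congr rfl fun m _ => hv l m,
      hc2, mul_div_cancel_left₀ _ hNne]
  rw [hE1, hE2, rhs_value hmeas hL2 horth hφm hC]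
  have hMsymm : ∀ a b : Fin n, (∫ t : ℝ, φ t * (ψ a t * ψ b t))
      = ∫ t : ℝ, φ t * (ψ b t * ψ a t) := by
    intro a b
    exact integral_congr_ae (Filter.EventuallyEq.of_eq (funext fun t => by ring))
  have hfin : (∑ a : Fin n, ∑ b : Fin n,
      (if a = b then (∫ t : ℝ, (φ t * φ t) * (ψ a t * ψ a t))
        else ((∫ t : ℝ, φ t * (ψ a t * ψ a t)) * (∫ t : ℝ, φ t * (ψ b t * ψ b t))
          - (∫ t : ℝ, φ t * (ψ a t * ψ b t)) * (∫ t : ℝ, φ t * (ψ b t * ψ a t)))))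
      - (∑ a : Fin n, ∫ t : ℝ, φ t * (ψ a t * ψ a t)) ^ 2
      = (∑ a : Fin n, ∫ t : ℝ, (φ t * φ t) * (ψ a t * ψ a t))
        - ∑ a : Fin n, ∑ b : Fin n, (∫ t : ℝ, φ t * (ψ a t * ψ b t)) ^ 2 :=
    final_alg (fun a b => ∫ t : ℝ, φ t * (ψ a t * ψ b t))
      (fun a b => ∫ t : ℝ, (φ t * φ t) * (ψ a t * ψ b t)) hMsymm
  rw [hfin]
  ring
end

section
/- Let n ≥ 1 and let ψ_0, …, ψ_{n-1} be real-valued functions in L²(ℝ) with ∫_ℝ ψ_l ψ_m dλ = δ_{lm}. Define p_n(λ_1, …, λ_n) = (det{ψ_{j-1}(λ_k)}_{j,k=1}^n)² / n! and K_n(λ, μ) = Σ_{l=0}^{n-1} ψ_l(λ) ψ_l(μ). Then for all bounded measurable φ_1, φ_2 : ℝ → ℝ, the covariance of the linear statistics N_n[φ_1] = Σ_{l=1}^n φ_1(λ_l) and N_n[φ_2] = Σ_{l=1}^n φ_2(λ_l) with respect to p_n equals (1/2) ∫_ℝ ∫_ℝ (φ_1(λ_1) - φ_1(λ_2)) (φ_2(λ_1)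 - φ_2(λ_2)) K_n(λ_1, λ_2)² dλ_1 dλ_2. -/
open MeasureTheory

theorem Equiv.Perm.apply_inv_self {α : Type*} (f : Equiv.Perm α) (x : α) : f (f⁻¹ x) = x :=
  f.apply_symm_apply x

namespace DetCov


/-- Bounded measurable real function. -/
def BM (f : ℝ → ℝ) : Prop := Measurable f ∧ ∃ C : ℝ, ∀ t, |f t| ≤ C

lemma BM.one : BM (fun _ => (1 : ℝ)) :=
  ⟨measurable_const, 1, fun _ => by norm_num⟩

lemma BM.mul {f g : ℝ → ℝ} (hf : BM f) (hg : BM g) : BM (fun t => f t * g t) := by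
  obtain ⟨hfm, Cf, hCf⟩ := hf
  obtain ⟨hgm, Cg, hCg⟩ := hg
  have hCf0 : 0 ≤ Cf := le_trans (abs_nonneg _) (hCf 0)
  refine ⟨hfm.mul hgm, Cf * Cg, fun t => ?_⟩
  rw [abs_mul]
  exact mul_le_mul (hCf t) (hCg t) (abs_nonneg _) hCf0

lemma BM.ite {f g : ℝ → ℝ} (p : Prop) [Decidable p] (hf : BM f) (hg : BM g) :
    BM (if p then f else g) := by
  by_cases h : p <;> simp [h, hf, hg]

variable {n : ℕ} {ψ : Fin n → ℝ → ℝ}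

/-- The basic one-dimensional integral `∫ f ψ_l ψ_m`. -/
noncomputable def II (ψ : Fin n → ℝ → ℝ) (f : ℝ → ℝ) (l m : Fin n) : ℝ :=
  ∫ t : ℝ, f t * (ψ l t * ψ m t)

lemma integrable_psi_mul (hmeas : ∀ l, Measurable (ψ l))
    (hL2 : ∀ l, MemLp (ψ l) 2 (volume : Measure ℝ)) (l m : Fin n) :
    Integrable (fun t => ψ l t * ψ m t) := by
  exact (hL2 l).integrable_mul (hL2 m)

lemma integrable_bm_psi_mul (hmeas : ∀ l, Measurable (ψ l))
    (hL2 : ∀ l, MemLp (ψ l) 2 (volume : Measure ℝ)) {f : ℝ → ℝ} (hf : BM f) (l m : Fin n) :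
    Integrable (fun t => f t * (ψ l t * ψ m t)) := by
  obtain ⟨C, hC⟩ := hf.2
  refine (integrable_psi_mul hmeas hL2 l m).bdd_mul hf.1.aestronglyMeasurable (c := C) ?_
  exact Filter.Eventually.of_forall fun t => by simpa [Real.norm_eq_abs] using hC t



lemma perm_eq_of_eq_off {n : ℕ} (i : Fin n) (σ τ : Equiv.Perm (Fin n))
    (h : ∀ k, k ≠ i → σ k = τ k) : σ = τ := by
  refine Equiv.ext fun k => ?_
  by_cases hk : k = i
  · subst hk
    by_cases h2 : τ⁻¹ (σ k) = k
    · have h4 := congrArg τ h2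
      rwa [Equiv.Perm.apply_inv_self] at h4
    · have h3 : σ (τ⁻¹ (σ k)) = τ (τ⁻¹ (σ k)) := h _ h2
      rw [Equiv.Perm.apply_inv_self] at h3
      exact absurd (σ.injective h3) h2
  · exact h k hk

lemma perm_pair_of_eq_off {n : ℕ} {i j : Fin n} (hij : i ≠ j) (σ τ : Equiv.Perm (Fin n))
    (h : ∀ k, k ≠ i → k ≠ j → σ k = τ k) :
    τ = σ ∨ τ = σ * Equiv.swap i j := by
  have mem : ∀ k, (k = i ∨ k = j) → σ⁻¹ (τ k) = i ∨ σ⁻¹ (τ k) = j := by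
    intro k hk
    by_contra hcon
    push_neg at hcon
    obtain ⟨h1, h2⟩ := hcon
    have e1 : σ (σ⁻¹ (τ k)) = τ (σ⁻¹ (τ k)) := h _ h1 h2
    rw [Equiv.Perm.apply_inv_self] at e1
    have hkk : k = σ⁻¹ (τ k) := τ.injective e1
    rcases hk with rfl | rfl
    · exact h1 hkk.symm
    · exact h2 hkk.symm
  have appinv : ∀ k l, σ⁻¹ (τ k) = l → τ k = σ l := by
    intro k l hkl
    have := congrArg σ hkl
    rwa [Equiv.Perm.apply_inv_self] at this
  rcases mem i (Or.inl rfl) with hi1 | hi2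
  · have hti : τ i = σ i := appinv _ _ hi1
    have htj : τ j = σ j := by
      rcases mem j (Or.inr rfl) with hj1 | hj2
      · exact absurd (τ.injective ((appinv _ _ hj1).trans hti.symm)) (Ne.symm hij)
      · exact appinv _ _ hj2
    left
    refine Equiv.ext fun k => ?_
    by_cases hk1 : k = i
    · rw [hk1, hti]
    by_cases hk2 : k = j
    · rw [hk2, htj]
    · exact (h k hk1 hk2).symm
  · have hti : τ i = σ j := appinv _ _ hi2
    have htj : τ j = σ i := by
      rcases mem j (Or.inr rfl) with hj1 | hj2
      · exact appinv _ _ hj1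
      · exact absurd (τ.injective ((appinv _ _ hj2).trans hti.symm)) (Ne.symm hij)
    right
    refine Equiv.ext fun k => ?_
    rw [Equiv.Perm.mul_apply]
    by_cases hk1 : k = i
    · rw [hk1, hti, Equiv.swap_apply_left]
    by_cases hk2 : k = j
    · rw [hk2, htj, Equiv.swap_apply_right]
    · rw [Equiv.swap_apply_of_ne_of_ne hk1 hk2]
      exact (h k hk1 hk2).symm

/-- shorthand for the real-valued sign -/
noncomputable def sgn {n : ℕ} (σ : Equiv.Perm (Fin n)) : ℝ :=
  ((Equiv.Perm.sign σ : ℤ) : ℝ)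

lemma sgn_mul_self {n : ℕ} (σ : Equiv.Perm (Fin n)) : sgn σ * sgn σ = 1 := by
  unfold sgn
  rcases Int.units_eq_one_or (Equiv.Perm.sign σ) with h | h <;> rw [h] <;> norm_num

lemma sgn_mul_swap {n : ℕ} {i j : Fin n} (hij : i ≠ j) (σ : Equiv.Perm (Fin n)) :
    sgn (σ * Equiv.swap i j) = - sgn σ := by
  unfold sgn
  rw [Equiv.Perm.sign_mul, Equiv.Perm.sign_swap hij]
  push_cast [Units.val_mul]
  ring




lemma core_key (w : Fin n → ℝ → ℝ) (lam : Fin n → ℝ) :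
    (∏ k, w k (lam k)) * detDensity n ψ lam
      = ∑ σ : Equiv.Perm (Fin n), ∑ τ : Equiv.Perm (Fin n),
          (sgn σ * sgn τ / (n.factorial : ℝ)) *
            ∏ k, (w k (lam k) * (ψ (σ k) (lam k) * ψ (τ k) (lam k))) := by
  have hdet : (Matrix.of fun j k : Fin n => ψ j (lam k)).det
      = ∑ σ : Equiv.Perm (Fin n), sgn σ * ∏ k, ψ (σ k) (lam k) := by
    rw [Matrix.det_apply']
    rfl
  rw [detDensity, hdet, sq, Finset.sum_mul_sum]
  rw [Finset.sum_div, Finset.mul_sum]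
  refine Finset.sum_congr rfl fun σ _ => ?_
  rw [Finset.sum_div, Finset.mul_sum]
  refine Finset.sum_congr rfl fun τ _ => ?_
  rw [Finset.prod_mul_distrib, Finset.prod_mul_distrib]
  ring

lemma core_integrable (hmeas : ∀ l, Measurable (ψ l))
    (hL2 : ∀ l, MemLp (ψ l) 2 (volume : Measure ℝ))
    (w : Fin n → ℝ → ℝ) (hw : ∀ k, BM (w k)) :
    Integrable (fun lam : Fin n → ℝ => (∏ k, w k (lam k)) * detDensity n ψ lam) := by
  have heq : (fun lam : Fin n → ℝ => (∏ k, w k (lam k)) * detDensity n ψ lam)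
      = fun lam => ∑ σ : Equiv.Perm (Fin n), ∑ τ : Equiv.Perm (Fin n),
          (sgn σ * sgn τ / (n.factorial : ℝ)) *
            ∏ k, (w k (lam k) * (ψ (σ k) (lam k) * ψ (τ k) (lam k))) :=
    funext (core_key w)
  rw [heq]
  refine integrable_finset_sum _ fun σ _ => integrable_finset_sum _ fun τ _ => ?_
  exact (Integrable.fintype_prod (f := fun k t => w k t * (ψ (σ k) t * ψ (τ k) t))
    fun k => integrable_bm_psi_mul hmeas hL2 (hw k) _ _).const_mul _

lemma core_integral (hmeas : ∀ l, Measurable (ψ l))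
    (hL2 : ∀ l, MemLp (ψ l) 2 (volume : Measure ℝ))
    (w : Fin n → ℝ → ℝ) (hw : ∀ k, BM (w k)) :
    (∫ lam : Fin n → ℝ, (∏ k, w k (lam k)) * detDensity n ψ lam)
      = ∑ σ : Equiv.Perm (Fin n), ∑ τ : Equiv.Perm (Fin n),
          (sgn σ * sgn τ / (n.factorial : ℝ)) *
            ∏ k, ∫ t : ℝ, w k t * (ψ (σ k) t * ψ (τ k) t) := by
  simp_rw [core_key w]
  rw [integral_finset_sum _ (fun σ _ => integrable_finset_sum _ fun τ _ =>
    (Integrable.fintype_prod (f := fun k t => w k t * (ψ (σ k) t * ψ (τ k) t))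
      fun k => integrable_bm_psi_mul hmeas hL2 (hw k) _ _).const_mul _)]
  refine Finset.sum_congr rfl fun σ _ => ?_
  rw [integral_finset_sum _ (fun τ _ =>
    (Integrable.fintype_prod (f := fun k t => w k t * (ψ (σ k) t * ψ (τ k) t))
      fun k => integrable_bm_psi_mul hmeas hL2 (hw k) _ _).const_mul _)]
  refine Finset.sum_congr rfl fun τ _ => ?_
  rw [integral_const_mul,
    MeasureTheory.integral_fintype_prod_volume_eq_prod
      (fun k t => w k t * (ψ (σ k) t * ψ (τ k) t))]




/-- weight for the one-point function -/
noncomputable def wOne (f : ℝ → ℝ) (i k : Fin n) : ℝ → ℝ :=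
  if k = i then f else fun _ => 1

lemma wOne_bm {f : ℝ → ℝ} (hf : BM f) (i k : Fin n) : BM (wOne f i k) := by
  unfold wOne; by_cases h : k = i <;> simp [h, hf, BM.one]

lemma wOne_prod (f : ℝ → ℝ) (i : Fin n) (lam : Fin n → ℝ) :
    (∏ k, wOne f i k (lam k)) = f (lam i) := by
  have h : ∀ k, wOne f i k (lam k) = if k = i then f (lam k) else 1 := by
    intro k; unfold wOne; by_cases h : k = i <;> simp [h]
  simp_rw [h]
  exact Fintype.prod_ite_eq' i fun k => f (lam k)

lemma one_point (hmeas : ∀ l, Measurable (ψ l))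
    (hL2 : ∀ l, MemLp (ψ l) 2 (volume : Measure ℝ))
    (horth : ∀ l m, (∫ t : ℝ, ψ l t * ψ m t) = if l = m then (1 : ℝ) else 0)
    {f : ℝ → ℝ} (hf : BM f) :
    (∫ lam : Fin n → ℝ, (∑ i, f (lam i)) * detDensity n ψ lam) = ∑ l, II ψ f l l := by
  have heq : (fun lam : Fin n → ℝ => (∑ i, f (lam i)) * detDensity n ψ lam)
      = fun lam => ∑ i, (∏ k, wOne f i k (lam k)) * detDensity n ψ lam := by
    funext lam
    rw [Finset.sum_mul]
    exact Finset.sum_congr rfl fun i _ => by rw [wOne_prod]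
  rw [heq, integral_finset_sum _ (fun i _ => core_integrable hmeas hL2 _ (wOne_bm hf i))]
  rw [Finset.sum_congr rfl fun i _ => core_integral hmeas hL2 _ (wOne_bm hf i)]
  have hJ : ∀ (i : Fin n) (σ τ : Equiv.Perm (Fin n)) (k : Fin n),
      (∫ t : ℝ, wOne f i k t * (ψ (σ k) t * ψ (τ k) t))
        = if k = i then II ψ f (σ k) (τ k) else if σ k = τ k then (1:ℝ) else 0 := by
    intro i σ τ k
    by_cases h : k = i
    · simp [wOne, h, II]
    · simp only [wOne, if_neg h, one_mul]
      exact horth _ _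
  have hτ : ∀ (i : Fin n) (σ : Equiv.Perm (Fin n)),
      (∑ τ : Equiv.Perm (Fin n), (sgn σ * sgn τ / (n.factorial : ℝ)) *
        ∏ k, ∫ t : ℝ, wOne f i k t * (ψ (σ k) t * ψ (τ k) t))
      = (1 / (n.factorial : ℝ)) * II ψ f (σ i) (σ i) := by
    intro i σ
    rw [Finset.sum_eq_single σ]
    · have h1 : ∀ k, (∫ t : ℝ, wOne f i k t * (ψ (σ k) t * ψ (σ k) t))
          = if k = i then II ψ f (σ k) (σ k) else 1 := by
        intro k; rw [hJ]; by_cases h : k = i <;> simp [h]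
      rw [Finset.prod_congr rfl fun k _ => h1 k, Fintype.prod_ite_eq', sgn_mul_self]
    · intro τ _ hτσ
      have hex : ∃ k, k ≠ i ∧ σ k ≠ τ k := by
        by_contra hc
        push_neg at hc
        exact hτσ (perm_eq_of_eq_off i σ τ fun k hk => hc k hk).symm
      obtain ⟨k, hk, hne⟩ := hex
      have h0 : (∏ k', ∫ t : ℝ, wOne f i k' t * (ψ (σ k') t * ψ (τ k') t)) = 0 :=
        Finset.prod_eq_zero (Finset.mem_univ k) (by rw [hJ]; simp [hk, hne])
      rw [h0, mul_zero]
    · intro h; exact absurd (Finset.mem_univ σ) h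
  rw [Finset.sum_congr rfl fun i _ => Finset.sum_congr rfl fun σ _ => hτ i σ]
  rw [Finset.sum_comm]
  have hsum : ∀ σ : Equiv.Perm (Fin n),
      (∑ i, (1 / (n.factorial : ℝ)) * II ψ f (σ i) (σ i))
        = (1 / (n.factorial : ℝ)) * ∑ l, II ψ f l l := by
    intro σ
    rw [← Finset.mul_sum]
    congr 1
    exact Equiv.sum_comp σ fun l => II ψ f l l
  rw [Finset.sum_congr rfl fun σ _ => hsum σ, Finset.sum_const, Finset.card_univ,
    Fintype.card_perm, Fintype.card_fin, nsmul_eq_mul]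
  have h0 : (n.factorial : ℝ) ≠ 0 := Nat.cast_ne_zero.2 n.factorial_ne_zero
  field_simp




/-- weight for the two-point function -/
noncomputable def wTwo (φ₁ φ₂ : ℝ → ℝ) (p : Fin n × Fin n) (k : Fin n) : ℝ → ℝ :=
  fun t => (if k = p.1 then φ₁ t else 1) * (if k = p.2 then φ₂ t else 1)

lemma wTwo_bm {φ₁ φ₂ : ℝ → ℝ} (h₁ : BM φ₁) (h₂ : BM φ₂) (p : Fin n × Fin n) (k : Fin n) :
    BM (wTwo φ₁ φ₂ p k) := by
  unfold wTwo
  refine BM.mul ?_ ?_ <;> [skip; skip]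
  · by_cases h : k = p.1 <;> simp [h, h₁, BM.one]
  · by_cases h : k = p.2 <;> simp [h, h₂, BM.one]

lemma wTwo_prod (φ₁ φ₂ : ℝ → ℝ) (p : Fin n × Fin n) (lam : Fin n → ℝ) :
    (∏ k, wTwo φ₁ φ₂ p k (lam k)) = φ₁ (lam p.1) * φ₂ (lam p.2) := by
  unfold wTwo
  rw [Finset.prod_mul_distrib]
  congr 1
  · exact Fintype.prod_ite_eq' p.1 fun k => φ₁ (lam k)
  · exact Fintype.prod_ite_eq' p.2 fun k => φ₂ (lam k)

lemma two_point (hmeas : ∀ l, Measurable (ψ l))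
    (hL2 : ∀ l, MemLp (ψ l) 2 (volume : Measure ℝ))
    (horth : ∀ l m, (∫ t : ℝ, ψ l t * ψ m t) = if l = m then (1 : ℝ) else 0)
    {φ₁ φ₂ : ℝ → ℝ} (h₁ : BM φ₁) (h₂ : BM φ₂) :
    (∫ lam : Fin n → ℝ,
        (∑ p ∈ Finset.univ.offDiag, φ₁ (lam p.1) * φ₂ (lam p.2)) * detDensity n ψ lam)
      = ∑ q ∈ Finset.univ.offDiag,
          (II ψ φ₁ q.1 q.1 * II ψ φ₂ q.2 q.2 - II ψ φ₁ q.1 q.2 * II ψ φ₂ q.2 q.1) := by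
  have heq : (fun lam : Fin n → ℝ =>
        (∑ p ∈ Finset.univ.offDiag, φ₁ (lam p.1) * φ₂ (lam p.2)) * detDensity n ψ lam)
      = fun lam => ∑ p ∈ Finset.univ.offDiag,
          (∏ k, wTwo φ₁ φ₂ p k (lam k)) * detDensity n ψ lam := by
    funext lam
    rw [Finset.sum_mul]
    exact Finset.sum_congr rfl fun p _ => by rw [wTwo_prod]
  rw [heq, integral_finset_sum _ (fun p _ => core_integrable hmeas hL2 _ (wTwo_bm h₁ h₂ p))]
  rw [Finset.sum_congr rfl fun p _ => core_integral hmeas hL2 _ (wTwo_bm h₁ h₂ p)]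
  have hJ : ∀ (p : Fin n × Fin n), p.1 ≠ p.2 → ∀ (σ τ : Equiv.Perm (Fin n)) (k : Fin n),
      (∫ t : ℝ, wTwo φ₁ φ₂ p k t * (ψ (σ k) t * ψ (τ k) t))
        = if k = p.1 then II ψ φ₁ (σ k) (τ k)
          else if k = p.2 then II ψ φ₂ (σ k) (τ k)
          else if σ k = τ k then (1:ℝ) else 0 := by
    intro p hp σ τ k
    by_cases hk1 : k = p.1
    · have hk2 : k ≠ p.2 := fun h => hp (hk1 ▸ h ▸ rfl)
      simp [wTwo, hk1, hk2, hp, II]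
    · by_cases hk2 : k = p.2
      · simp [wTwo, hk1, hk2, Ne.symm hp, II]
      · simp only [wTwo, if_neg hk1, if_neg hk2, one_mul]
        rw [horth]
  -- collapse the τ sum
  have hτ : ∀ (p : Fin n × Fin n), p ∈ Finset.univ.offDiag → ∀ (σ : Equiv.Perm (Fin n)),
      (∑ τ : Equiv.Perm (Fin n), (sgn σ * sgn τ / (n.factorial : ℝ)) *
        ∏ k, ∫ t : ℝ, wTwo φ₁ φ₂ p k t * (ψ (σ k) t * ψ (τ k) t))
      = (1 / (n.factorial : ℝ)) *
          (II ψ φ₁ (σ p.1) (σ p.1) * II ψ φ₂ (σ p.2) (σ p.2)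
            - II ψ φ₁ (σ p.1) (σ p.2) * II ψ φ₂ (σ p.2) (σ p.1)) := by
    intro p hpmem σ
    have hp : p.1 ≠ p.2 := (Finset.mem_offDiag.1 hpmem).2.2
    have hne : σ ≠ σ * Equiv.swap p.1 p.2 := by
      intro hcon
      have h1 : σ p.1 = σ p.2 := by
        conv_lhs => rw [hcon]
        rw [Equiv.Perm.mul_apply, Equiv.swap_apply_left]
      exact hp (σ.injective h1)
    have hvanish : ∀ τ ∈ (Finset.univ : Finset (Equiv.Perm (Fin n))),
        τ ∉ ({σ, σ * Equiv.swap p.1 p.2} : Finset (Equiv.Perm (Fin n))) →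
        (sgn σ * sgn τ / (n.factorial : ℝ)) *
          (∏ k, ∫ t : ℝ, wTwo φ₁ φ₂ p k t * (ψ (σ k) t * ψ (τ k) t)) = 0 := by
      intro τ _ hτmem
      simp only [Finset.mem_insert, Finset.mem_singleton] at hτmem
      push_neg at hτmem
      have hex : ∃ k, k ≠ p.1 ∧ k ≠ p.2 ∧ σ k ≠ τ k := by
        by_contra hc
        push_neg at hc
        rcases perm_pair_of_eq_off hp σ τ (fun k hk1 hk2 => hc k hk1 hk2) with h | h
        · exact hτmem.1 h
        · exact hτmem.2 h
      obtain ⟨k, hk1, hk2, hkne⟩ := hex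
      have h0 : (∏ k', ∫ t : ℝ, wTwo φ₁ φ₂ p k' t * (ψ (σ k') t * ψ (τ k') t)) = 0 :=
        Finset.prod_eq_zero (Finset.mem_univ k)
          (by rw [hJ p hp]; simp [hk1, hk2, hkne])
      rw [h0, mul_zero]
    rw [← Finset.sum_subset (Finset.subset_univ _) hvanish,
      Finset.sum_insert (by simp [hne]), Finset.sum_singleton]
    have hval1 : (∏ k, ∫ t : ℝ, wTwo φ₁ φ₂ p k t * (ψ (σ k) t * ψ (σ k) t))
        = II ψ φ₁ (σ p.1) (σ p.1) * II ψ φ₂ (σ p.2) (σ p.2) := by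
      have h1 : ∀ k, (∫ t : ℝ, wTwo φ₁ φ₂ p k t * (ψ (σ k) t * ψ (σ k) t))
          = (if k = p.1 then II ψ φ₁ (σ k) (σ k) else 1) *
            (if k = p.2 then II ψ φ₂ (σ k) (σ k) else 1) := by
        intro k
        rw [hJ p hp]
        by_cases hk1 : k = p.1
        · subst hk1
          rw [if_pos rfl, if_pos rfl, if_neg hp, mul_one]
        · by_cases hk2 : k = p.2
          · subst hk2
            rw [if_neg hk1, if_pos rfl, if_neg hk1, if_pos rfl, one_mul]
          · rw [if_neg hk1, if_neg hk2, if_neg hk1, if_neg hk2, mul_one, if_pos rfl]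
      rw [Finset.prod_congr rfl fun k _ => h1 k, Finset.prod_mul_distrib,
        Fintype.prod_ite_eq' p.1 (fun k => II ψ φ₁ (σ k) (σ k)),
        Fintype.prod_ite_eq' p.2 (fun k => II ψ φ₂ (σ k) (σ k))]
    have hval2 : (∏ k, ∫ t : ℝ,
          wTwo φ₁ φ₂ p k t * (ψ (σ k) t * ψ ((σ * Equiv.swap p.1 p.2) k) t))
        = II ψ φ₁ (σ p.1) (σ p.2) * II ψ φ₂ (σ p.2) (σ p.1) := by
      have h1 : ∀ k, (∫ t : ℝ, wTwo φ₁ φ₂ p k t * (ψ (σ k) t * ψ ((σ * Equiv.swap p.1 p.2) k) t))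
          = (if k = p.1 then II ψ φ₁ (σ p.1) (σ p.2) else 1) *
            (if k = p.2 then II ψ φ₂ (σ p.2) (σ p.1) else 1) := by
        intro k
        rw [hJ p hp]
        by_cases hk1 : k = p.1
        · have hk2 : k ≠ p.2 := fun h => hp (hk1 ▸ h ▸ rfl)
          subst hk1
          rw [if_pos rfl, if_pos rfl, if_neg hk2, mul_one]
          congr 1
          rw [Equiv.Perm.mul_apply, Equiv.swap_apply_left]
        · by_cases hk2 : k = p.2
          · subst hk2
            rw [if_neg hk1, if_pos rfl, if_neg hk1, if_pos rfl, one_mul]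
            congr 1
            rw [Equiv.Perm.mul_apply, Equiv.swap_apply_right]
          · rw [if_neg hk1, if_neg hk2, if_neg hk1, if_neg hk2, mul_one]
            have : (σ * Equiv.swap p.1 p.2) k = σ k := by
              rw [Equiv.Perm.mul_apply, Equiv.swap_apply_of_ne_of_ne hk1 hk2]
            rw [this, if_pos rfl]
      rw [Finset.prod_congr rfl fun k _ => h1 k, Finset.prod_mul_distrib,
        Fintype.prod_ite_eq' p.1 (fun _ => II ψ φ₁ (σ p.1) (σ p.2)),
        Fintype.prod_ite_eq' p.2 (fun _ => II ψ φ₂ (σ p.2) (σ p.1))]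
    rw [hval1, hval2, sgn_mul_swap hp σ, mul_neg (sgn σ) (sgn σ), sgn_mul_self]
    ring
  rw [Finset.sum_congr rfl fun p hp => Finset.sum_congr rfl fun σ _ => hτ p hp σ]
  rw [Finset.sum_comm]
  have hsum : ∀ σ : Equiv.Perm (Fin n),
      (∑ p ∈ Finset.univ.offDiag, (1 / (n.factorial : ℝ)) *
          (II ψ φ₁ (σ p.1) (σ p.1) * II ψ φ₂ (σ p.2) (σ p.2)
            - II ψ φ₁ (σ p.1) (σ p.2) * II ψ φ₂ (σ p.2) (σ p.1)))
        = (1 / (n.factorial : ℝ)) * ∑ q ∈ Finset.univ.offDiag,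
            (II ψ φ₁ q.1 q.1 * II ψ φ₂ q.2 q.2 - II ψ φ₁ q.1 q.2 * II ψ φ₂ q.2 q.1) := by
    intro σ
    rw [← Finset.mul_sum]
    congr 1
    refine Finset.sum_equiv (Equiv.prodCongr σ σ) ?_ ?_
    · intro q
      simp only [Finset.mem_offDiag, Finset.mem_univ, true_and, Equiv.prodCongr_apply,
        Prod.map_fst, Prod.map_snd, ne_eq, EmbeddingLike.apply_eq_iff_eq]
    · intro q _
      simp [Equiv.prodCongr_apply]
  rw [Finset.sum_congr rfl fun σ _ => hsum σ, Finset.sum_const, Finset.card_univ,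
    Fintype.card_perm, Fintype.card_fin, nsmul_eq_mul]
  have h0 : (n.factorial : ℝ) ≠ 0 := Nat.cast_ne_zero.2 n.factorial_ne_zero
  field_simp




section

variable (hmeas : ∀ l, Measurable (ψ l))
    (hL2 : ∀ l, MemLp (ψ l) 2 (volume : Measure ℝ))
    (horth : ∀ l m, (∫ t : ℝ, ψ l t * ψ m t) = if l = m then (1 : ℝ) else 0)
    {φ₁ φ₂ : ℝ → ℝ} (h₁ : BM φ₁) (h₂ : BM φ₂)

include hmeas hL2 h₁ h₂

lemma expand1_integrable (a b : ℝ) (l m : Fin n) :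
    Integrable (fun t => (a - φ₁ t) * (b - φ₂ t) * (ψ l t * ψ m t)) := by
  have hpt : (fun t => (a - φ₁ t) * (b - φ₂ t) * (ψ l t * ψ m t))
      = fun t => (a * b) * (ψ l t * ψ m t) - a * (φ₂ t * (ψ l t * ψ m t))
          - b * (φ₁ t * (ψ l t * ψ m t)) + (φ₁ t * φ₂ t) * (ψ l t * ψ m t) := by
    funext t; ring
  rw [hpt]
  exact ((((integrable_psi_mul hmeas hL2 l m).const_mul _).sub
    ((integrable_bm_psi_mul hmeas hL2 h₂ l m).const_mul a)).sub
    ((integrable_bm_psi_mul hmeas hL2 h₁ l m).const_mul b)).add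
    (integrable_bm_psi_mul hmeas hL2 (h₁.mul h₂) l m)

include horth

lemma expand1_integral (a b : ℝ) (l m : Fin n) :
    (∫ t : ℝ, (a - φ₁ t) * (b - φ₂ t) * (ψ l t * ψ m t))
      = a * b * (if l = m then (1:ℝ) else 0) - a * II ψ φ₂ l m - b * II ψ φ₁ l m
        + II ψ (fun s => φ₁ s * φ₂ s) l m := by
  have hpt : (fun t => (a - φ₁ t) * (b - φ₂ t) * (ψ l t * ψ m t))
      = fun t => (a * b) * (ψ l t * ψ m t) - a * (φ₂ t * (ψ l t * ψ m t))
          - b * (φ₁ t * (ψ l t * ψ m t)) + (φ₁ t * φ₂ t) * (ψ l t * ψ m t) := by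
    funext t; ring
  rw [hpt]
  have i0 : Integrable (fun t => a * b * (ψ l t * ψ m t)) :=
    (integrable_psi_mul hmeas hL2 l m).const_mul _
  have i1 : Integrable (fun t => a * (φ₂ t * (ψ l t * ψ m t))) :=
    (integrable_bm_psi_mul hmeas hL2 h₂ l m).const_mul a
  have i2 : Integrable (fun t => b * (φ₁ t * (ψ l t * ψ m t))) :=
    (integrable_bm_psi_mul hmeas hL2 h₁ l m).const_mul b
  have i3 : Integrable (fun t => φ₁ t * φ₂ t * (ψ l t * ψ m t)) :=
    integrable_bm_psi_mul hmeas hL2 (h₁.mul h₂) l m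
  have i01 : Integrable (fun t => a * b * (ψ l t * ψ m t) - a * (φ₂ t * (ψ l t * ψ m t))) :=
    i0.sub i1
  have i012 : Integrable (fun t => a * b * (ψ l t * ψ m t) - a * (φ₂ t * (ψ l t * ψ m t))
      - b * (φ₁ t * (ψ l t * ψ m t))) := i01.sub i2
  rw [integral_add i012 i3, integral_sub i01 i2, integral_sub i0 i1,
    integral_const_mul, integral_const_mul, integral_const_mul, horth]
  rfl

lemma rhs_inner (t₁ : ℝ) :
    (∫ t₂ : ℝ, (φ₁ t₁ - φ₁ t₂) * (φ₂ t₁ - φ₂ t₂) * (∑ l, ψ l t₁ * ψ l t₂) ^ 2)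
      = ∑ l, ∑ m, (ψ l t₁ * ψ m t₁) *
          (φ₁ t₁ * φ₂ t₁ * (if l = m then (1:ℝ) else 0) - φ₁ t₁ * II ψ φ₂ l m
            - φ₂ t₁ * II ψ φ₁ l m + II ψ (fun s => φ₁ s * φ₂ s) l m) := by
  have hpt : ∀ t₂ : ℝ, (φ₁ t₁ - φ₁ t₂) * (φ₂ t₁ - φ₂ t₂) * (∑ l, ψ l t₁ * ψ l t₂) ^ 2
      = ∑ l, ∑ m, (ψ l t₁ * ψ m t₁) *
          ((φ₁ t₁ - φ₁ t₂) * (φ₂ t₁ - φ₂ t₂) * (ψ l t₂ * ψ m t₂)) := by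
    intro t₂
    rw [sq, Fintype.sum_mul_sum, Finset.mul_sum]
    refine Finset.sum_congr rfl fun l _ => ?_
    rw [Finset.mul_sum]
    refine Finset.sum_congr rfl fun m _ => ?_
    ring
  simp_rw [hpt]
  rw [integral_finset_sum _ (fun l _ => integrable_finset_sum _ fun m _ =>
    ((expand1_integrable hmeas hL2 h₁ h₂ (φ₁ t₁) (φ₂ t₁) l m).const_mul _))]
  refine Finset.sum_congr rfl fun l _ => ?_
  rw [integral_finset_sum _ (fun m _ =>
    ((expand1_integrable hmeas hL2 h₁ h₂ (φ₁ t₁) (φ₂ t₁) l m).const_mul _))]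
  refine Finset.sum_congr rfl fun m _ => ?_
  rw [integral_const_mul, expand1_integral hmeas hL2 horth h₁ h₂]

lemma rhs_eval :
    (∫ t₁ : ℝ, ∫ t₂ : ℝ,
        (φ₁ t₁ - φ₁ t₂) * (φ₂ t₁ - φ₂ t₂) * (∑ l, ψ l t₁ * ψ l t₂) ^ 2)
      = 2 * ((∑ l, II ψ (fun s => φ₁ s * φ₂ s) l l)
          - ∑ l, ∑ m, II ψ φ₁ l m * II ψ φ₂ l m) := by
  have houter : ∀ (l m : Fin n), (fun t₁ => (ψ l t₁ * ψ m t₁) *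
        (φ₁ t₁ * φ₂ t₁ * (if l = m then (1:ℝ) else 0) - φ₁ t₁ * II ψ φ₂ l m
          - φ₂ t₁ * II ψ φ₁ l m + II ψ (fun s => φ₁ s * φ₂ s) l m))
      = fun t₁ => (if l = m then (1:ℝ) else 0) * ((φ₁ t₁ * φ₂ t₁) * (ψ l t₁ * ψ m t₁))
          - II ψ φ₂ l m * (φ₁ t₁ * (ψ l t₁ * ψ m t₁))
          - II ψ φ₁ l m * (φ₂ t₁ * (ψ l t₁ * ψ m t₁))
          + II ψ (fun s => φ₁ s * φ₂ s) l m * (ψ l t₁ * ψ m t₁) := by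
    intro l m; funext t₁; ring
  have hint : ∀ (l m : Fin n), Integrable (fun t₁ => (ψ l t₁ * ψ m t₁) *
        (φ₁ t₁ * φ₂ t₁ * (if l = m then (1:ℝ) else 0) - φ₁ t₁ * II ψ φ₂ l m
          - φ₂ t₁ * II ψ φ₁ l m + II ψ (fun s => φ₁ s * φ₂ s) l m)) := by
    intro l m
    rw [houter]
    exact ((((integrable_bm_psi_mul hmeas hL2 (h₁.mul h₂) l m).const_mul _).sub
      ((integrable_bm_psi_mul hmeas hL2 h₁ l m).const_mul _)).sub
      ((integrable_bm_psi_mul hmeas hL2 h₂ l m).const_mul _)).add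
      ((integrable_psi_mul hmeas hL2 l m).const_mul _)
  have hval : ∀ (l m : Fin n), (∫ t₁ : ℝ, (ψ l t₁ * ψ m t₁) *
        (φ₁ t₁ * φ₂ t₁ * (if l = m then (1:ℝ) else 0) - φ₁ t₁ * II ψ φ₂ l m
          - φ₂ t₁ * II ψ φ₁ l m + II ψ (fun s => φ₁ s * φ₂ s) l m))
      = (if l = m then (1:ℝ) else 0) * II ψ (fun s => φ₁ s * φ₂ s) l m
          - II ψ φ₂ l m * II ψ φ₁ l m - II ψ φ₁ l m * II ψ φ₂ l m
          + II ψ (fun s => φ₁ s * φ₂ s) l m * (if l = m then (1:ℝ) else 0) := by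
    intro l m
    rw [houter]
    have j0 : Integrable (fun t₁ => (if l = m then (1:ℝ) else 0) *
        (φ₁ t₁ * φ₂ t₁ * (ψ l t₁ * ψ m t₁))) :=
      (integrable_bm_psi_mul hmeas hL2 (h₁.mul h₂) l m).const_mul _
    have j1 : Integrable (fun t₁ => II ψ φ₂ l m * (φ₁ t₁ * (ψ l t₁ * ψ m t₁))) :=
      (integrable_bm_psi_mul hmeas hL2 h₁ l m).const_mul _
    have j2 : Integrable (fun t₁ => II ψ φ₁ l m * (φ₂ t₁ * (ψ l t₁ * ψ m t₁))) :=
      (integrable_bm_psi_mul hmeas hL2 h₂ l m).const_mul _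
    have j3 : Integrable (fun t₁ => II ψ (fun s => φ₁ s * φ₂ s) l m * (ψ l t₁ * ψ m t₁)) :=
      (integrable_psi_mul hmeas hL2 l m).const_mul _
    have j01 : Integrable (fun t₁ => (if l = m then (1:ℝ) else 0) *
        (φ₁ t₁ * φ₂ t₁ * (ψ l t₁ * ψ m t₁)) - II ψ φ₂ l m * (φ₁ t₁ * (ψ l t₁ * ψ m t₁))) :=
      j0.sub j1
    have j012 : Integrable (fun t₁ => (if l = m then (1:ℝ) else 0) *
        (φ₁ t₁ * φ₂ t₁ * (ψ l t₁ * ψ m t₁)) - II ψ φ₂ l m * (φ₁ t₁ * (ψ l t₁ * ψ m t₁))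
        - II ψ φ₁ l m * (φ₂ t₁ * (ψ l t₁ * ψ m t₁))) := j01.sub j2
    rw [integral_add j012 j3, integral_sub j01 j2, integral_sub j0 j1,
      integral_const_mul, integral_const_mul, integral_const_mul, integral_const_mul, horth]
    rfl
  have hdel : ∀ (X : Fin n → ℝ) (l : Fin n),
      (∑ m, (if l = m then (1:ℝ) else 0) * X m) = X l := by
    intro X l
    rw [Finset.sum_eq_single l]
    · simp
    · intro m _ hm; rw [if_neg (Ne.symm hm), zero_mul]
    · intro h; exact absurd (Finset.mem_univ l) h
  calc (∫ t₁ : ℝ, ∫ t₂ : ℝ,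
        (φ₁ t₁ - φ₁ t₂) * (φ₂ t₁ - φ₂ t₂) * (∑ l, ψ l t₁ * ψ l t₂) ^ 2)
      = ∫ t₁ : ℝ, ∑ l, ∑ m, (ψ l t₁ * ψ m t₁) *
          (φ₁ t₁ * φ₂ t₁ * (if l = m then (1:ℝ) else 0) - φ₁ t₁ * II ψ φ₂ l m
            - φ₂ t₁ * II ψ φ₁ l m + II ψ (fun s => φ₁ s * φ₂ s) l m) := by
        exact congrArg (integral volume) (funext fun t₁ =>
          rhs_inner hmeas hL2 horth h₁ h₂ t₁)
    _ = ∑ l, ∑ m, ((if l = m then (1:ℝ) else 0) * II ψ (fun s => φ₁ s * φ₂ s) l m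
          - II ψ φ₂ l m * II ψ φ₁ l m - II ψ φ₁ l m * II ψ φ₂ l m
          + II ψ (fun s => φ₁ s * φ₂ s) l m * (if l = m then (1:ℝ) else 0)) := by
        rw [integral_finset_sum _ (fun l _ => integrable_finset_sum _ fun m _ => hint l m)]
        refine Finset.sum_congr rfl fun l _ => ?_
        rw [integral_finset_sum _ (fun m _ => hint l m)]
        exact Finset.sum_congr rfl fun m _ => hval l m
    _ = 2 * ((∑ l, II ψ (fun s => φ₁ s * φ₂ s) l l)
          - ∑ l, ∑ m, II ψ φ₁ l m * II ψ φ₂ l m) := by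
        have hterm : ∀ l m : Fin n, ((if l = m then (1:ℝ) else 0) * II ψ (fun s => φ₁ s * φ₂ s) l m
              - II ψ φ₂ l m * II ψ φ₁ l m - II ψ φ₁ l m * II ψ φ₂ l m
              + II ψ (fun s => φ₁ s * φ₂ s) l m * (if l = m then (1:ℝ) else 0))
            = 2 * ((if l = m then (1:ℝ) else 0) * II ψ (fun s => φ₁ s * φ₂ s) l m)
              - 2 * (II ψ φ₁ l m * II ψ φ₂ l m) := by
          intro l m; ring
        rw [Finset.sum_congr rfl fun l _ => Finset.sum_congr rfl fun m _ => hterm l m]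
        have hrow : ∀ l : Fin n, (∑ m, (2 * ((if l = m then (1:ℝ) else 0) *
              II ψ (fun s => φ₁ s * φ₂ s) l m) - 2 * (II ψ φ₁ l m * II ψ φ₂ l m)))
            = 2 * II ψ (fun s => φ₁ s * φ₂ s) l l - 2 * ∑ m, II ψ φ₁ l m * II ψ φ₂ l m := by
          intro l
          rw [Finset.sum_sub_distrib, ← Finset.mul_sum, ← Finset.mul_sum,
            hdel (fun m => II ψ (fun s => φ₁ s * φ₂ s) l m) l]
        rw [Finset.sum_congr rfl fun l _ => hrow l, Finset.sum_sub_distrib,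
          ← Finset.mul_sum, ← Finset.mul_sum]
        ring

end


lemma II_symm (f : ℝ → ℝ) (l m : Fin n) : II ψ f l m = II ψ f m l := by
  unfold II
  congr 1
  funext t
  ring

lemma one_point_integrable (hmeas : ∀ l, Measurable (ψ l))
    (hL2 : ∀ l, MemLp (ψ l) 2 (volume : Measure ℝ))
    {f : ℝ → ℝ} (hf : BM f) :
    Integrable (fun lam : Fin n → ℝ => (∑ i, f (lam i)) * detDensity n ψ lam) := by
  have heq : (fun lam : Fin n → ℝ => (∑ i, f (lam i)) * detDensity n ψ lam)
      = fun lam => ∑ i, (∏ k, wOne f i k (lam k)) * detDensity n ψ lam := by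
    funext lam
    rw [Finset.sum_mul]
    exact Finset.sum_congr rfl fun i _ => by rw [wOne_prod]
  rw [heq]
  exact integrable_finset_sum _ fun i _ => core_integrable hmeas hL2 _ (wOne_bm hf i)

lemma two_point_integrable (hmeas : ∀ l, Measurable (ψ l))
    (hL2 : ∀ l, MemLp (ψ l) 2 (volume : Measure ℝ))
    {φ₁ φ₂ : ℝ → ℝ} (h₁ : BM φ₁) (h₂ : BM φ₂) :
    Integrable (fun lam : Fin n → ℝ =>
      (∑ p ∈ Finset.univ.offDiag, φ₁ (lam p.1) * φ₂ (lam p.2)) * detDensity n ψ lam) := by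
  have heq : (fun lam : Fin n → ℝ =>
        (∑ p ∈ Finset.univ.offDiag, φ₁ (lam p.1) * φ₂ (lam p.2)) * detDensity n ψ lam)
      = fun lam => ∑ p ∈ Finset.univ.offDiag,
          (∏ k, wTwo φ₁ φ₂ p k (lam k)) * detDensity n ψ lam := by
    funext lam
    rw [Finset.sum_mul]
    exact Finset.sum_congr rfl fun p _ => by rw [wTwo_prod]
  rw [heq]
  exact integrable_finset_sum _ fun p _ => core_integrable hmeas hL2 _ (wTwo_bm h₁ h₂ p)

lemma sum_split (h : Fin n → Fin n → ℝ) :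
    (∑ l, ∑ m, h l m) = (∑ q ∈ Finset.univ.offDiag, h q.1 q.2) + ∑ l, h l l := by
  rw [← Finset.sum_product', ← Finset.diag_union_offDiag,
    Finset.sum_union (Finset.disjoint_diag_offDiag _), Finset.sum_diag, add_comm]

end DetCov

open DetCov in
/-- For orthonormal `ψ_0, …, ψ_{n-1}` in `L²(ℝ)` and bounded measurable `φ₁, φ₂`, the
covariance of the linear statistics `Σ_l φ₁(λ_l)` and `Σ_l φ₂(λ_l)` with respect to the
determinantal density `p_n` equals
`(1/2) ∬ (φ₁(λ₁)-φ₁(λ₂))(φ₂(λ₁)-φ₂(λ₂)) K_n(λ₁,λ₂)² dλ₁ dλ₂`. -/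
theorem covariance_linear_statistics_detDensity (n : ℕ) (hn : 1 ≤ n)
    (ψ : Fin n → ℝ → ℝ) (hmeas : ∀ l, Measurable (ψ l))
    (hL2 : ∀ l, MemLp (ψ l) 2 (volume : Measure ℝ))
    (horth : ∀ l m, (∫ t : ℝ, ψ l t * ψ m t) = if l = m then (1 : ℝ) else 0)
    (φ₁ φ₂ : ℝ → ℝ) (hφ₁m : Measurable φ₁) (hφ₁b : ∃ C : ℝ, ∀ t, |φ₁ t| ≤ C)
    (hφ₂m : Measurable φ₂) (hφ₂b : ∃ C : ℝ, ∀ t, |φ₂ t| ≤ C) :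
    (∫ lam : Fin n → ℝ,
        ((∑ l, φ₁ (lam l)) * (∑ l, φ₂ (lam l))) * detDensity n ψ lam) -
        (∫ lam : Fin n → ℝ, (∑ l, φ₁ (lam l)) * detDensity n ψ lam) *
          (∫ lam : Fin n → ℝ, (∑ l, φ₂ (lam l)) * detDensity n ψ lam) =
      (1 / 2) * ∫ t₁ : ℝ, ∫ t₂ : ℝ,
        (φ₁ t₁ - φ₁ t₂) * (φ₂ t₁ - φ₂ t₂) * (∑ l, ψ l t₁ * ψ l t₂) ^ 2 := by
  have h₁ : BM φ₁ := ⟨hφ₁m, hφ₁b⟩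
  have h₂ : BM φ₂ := ⟨hφ₂m, hφ₂b⟩
  have h₁₂ : BM (fun t => φ₁ t * φ₂ t) := h₁.mul h₂
  -- split the product of the two linear statistics
  have hsplitfun : (fun lam : Fin n → ℝ =>
        ((∑ l, φ₁ (lam l)) * (∑ l, φ₂ (lam l))) * detDensity n ψ lam)
      = fun lam =>
          (∑ p ∈ Finset.univ.offDiag, φ₁ (lam p.1) * φ₂ (lam p.2)) * detDensity n ψ lam
          + (∑ i, φ₁ (lam i) * φ₂ (lam i)) * detDensity n ψ lam := by
    funext lam
    rw [← add_mul]
    congr 1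
    rw [Fintype.sum_mul_sum]
    exact sum_split fun l m => φ₁ (lam l) * φ₂ (lam m)
  have hE12 : (∫ lam : Fin n → ℝ,
        ((∑ l, φ₁ (lam l)) * (∑ l, φ₂ (lam l))) * detDensity n ψ lam)
      = (∑ q ∈ Finset.univ.offDiag,
          (II ψ φ₁ q.1 q.1 * II ψ φ₂ q.2 q.2 - II ψ φ₁ q.1 q.2 * II ψ φ₂ q.2 q.1))
        + ∑ l, II ψ (fun s => φ₁ s * φ₂ s) l l := by
    rw [hsplitfun, integral_add (two_point_integrable hmeas hL2 h₁ h₂)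
      (one_point_integrable hmeas hL2 h₁₂), two_point hmeas hL2 horth h₁ h₂]
    congr 1
    exact one_point hmeas hL2 horth h₁₂
  have hE1 : (∫ lam : Fin n → ℝ, (∑ l, φ₁ (lam l)) * detDensity n ψ lam)
      = ∑ l, II ψ φ₁ l l := one_point hmeas hL2 horth h₁
  have hE2 : (∫ lam : Fin n → ℝ, (∑ l, φ₂ (lam l)) * detDensity n ψ lam)
      = ∑ l, II ψ φ₂ l l := one_point hmeas hL2 horth h₂
  rw [hE12, hE1, hE2, rhs_eval hmeas hL2 horth h₁ h₂]
  -- now pure finite-sum algebra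
  have hsym : ∀ q : Fin n × Fin n, II ψ φ₂ q.2 q.1 = II ψ φ₂ q.1 q.2 :=
    fun q => II_symm φ₂ q.2 q.1
  rw [Finset.sum_congr rfl fun q _ => by rw [hsym q]]
  have hprod : (∑ l, II ψ φ₁ l l) * (∑ l, II ψ φ₂ l l)
      = (∑ q ∈ Finset.univ.offDiag, II ψ φ₁ q.1 q.1 * II ψ φ₂ q.2 q.2)
        + ∑ l, II ψ φ₁ l l * II ψ φ₂ l l := by
    rw [Fintype.sum_mul_sum]
    exact sum_split fun l m => II ψ φ₁ l l * II ψ φ₂ m m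
  have hdouble : (∑ l, ∑ m, II ψ φ₁ l m * II ψ φ₂ l m)
      = (∑ q ∈ Finset.univ.offDiag, II ψ φ₁ q.1 q.2 * II ψ φ₂ q.1 q.2)
        + ∑ l, II ψ φ₁ l l * II ψ φ₂ l l :=
    sum_split fun l m => II ψ φ₁ l m * II ψ φ₂ l m
  rw [hprod, hdouble, Finset.sum_sub_distrib]
  ring
end

section
/- Let n ≥ 1 and let ψ_0, …, ψ_n be real-valued functions in L²(ℝ) with ∫_ℝ ψ_l ψ_m dλ = δ_{lm} for 0 ≤ l, m ≤ n, and suppose there are reals r_0, …, r_{n-1} > 0 and s_0, …, s_{n-1} (with the convention r_{-1} = 0, ψ_{-1} = 0) such that for all λ ∈ ℝ and 0 ≤ l ≤ n-1: λ ψ_l(λ) = r_l ψ_{l+1}(λ) + s_l ψ_l(λ) + r_{l-1} ψ_{l-1}(λ). Define p_n(λ_1, …, λ_n) = (det{ψ_{j-1}(λ_k)}_{j,k=1}^n)² / n!. Then for every bounded measurable φ : ℝ → ℝ, the variance of N_n[φ] = Σ_{l=1}^n φ(λ_l) with respect to p_n equals ∫_ℝ ∫_ℝ ((φ(λ_1)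 - φ(λ_2))/(λ_1 - λ_2))² · (1/2) [ r_{n-1} ( ψ_n(λ_1) ψ_{n-1}(λ_2) - ψ_{n-1}(λ_1) ψ_n(λ_2) ) ]² dλ_1 dλ_2. -/
open MeasureTheory

/-- Two permutations agreeing off one point are equal. -/
lemma cdaux_perm_eq_of_agree_off_one {n : ℕ} (σ τ : Equiv.Perm (Fin n)) (l : Fin n)
    (h : ∀ k, k ≠ l → σ k = τ k) : σ = τ := by
  have hl : τ l = σ l := by
    by_contra hne
    have hx : τ (τ.symm (σ l)) = σ l := τ.apply_symm_apply _
    have hxl : τ.symm (σ l) ≠ l := by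
      intro he
      apply hne
      rw [← hx, he]
    have h2 := h _ hxl
    rw [hx] at h2
    exact hxl (σ.injective h2)
  ext k
  by_cases hk : k = l
  · rw [hk, hl.symm]
  · rw [h k hk]

/-- A permutation fixing everything outside `{l, m}` is the identity or the swap. -/
lemma cdaux_perm_fix_two {n : ℕ} (π : Equiv.Perm (Fin n)) (l m : Fin n) (hlm : l ≠ m)
    (hfix : ∀ k, k ≠ l → k ≠ m → π k = k) : π = 1 ∨ π = Equiv.swap l m := by
  have hmem : ∀ k, π k ≠ l → π k ≠ m → π k = k := by
    intro k h1 h2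
    have := hfix (π k) h1 h2
    exact π.injective this
  have hπl : π l = l ∨ π l = m := by
    by_contra hc
    push_neg at hc
    exact hc.1 (hmem l hc.1 hc.2)
  rcases hπl with h1 | h1
  · left
    have hπm : π m = m := by
      rcases eq_or_ne (π m) l with h2 | h2
      · exact absurd (π.injective (h1.trans h2.symm)) hlm
      rcases eq_or_ne (π m) m with h3 | h3
      · exact h3
      · exact hmem m h2 h3
    ext k
    by_cases hk : k = l
    · simp [hk, h1]
    by_cases hk2 : k = m
    · simp [hk2, hπm]
    · simp [hfix k hk hk2]
  · right
    have hπm : π m = l := by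
      have h2 : π m ≠ m := fun he => hlm (π.injective (h1.trans he.symm))
      rcases eq_or_ne (π m) l with h3 | h3
      · exact h3
      · exact absurd (hmem m h3 h2) h2
    ext k
    by_cases hk : k = l
    · simp [hk, h1, Equiv.swap_apply_left]
    by_cases hk2 : k = m
    · simp [hk2, hπm, Equiv.swap_apply_right]
    · rw [hfix k hk hk2, Equiv.swap_apply_of_ne_of_ne hk hk2]

/-- Two permutations agreeing off two points: equal or differ by the transposition. -/
lemma cdaux_perm_cases {n : ℕ} (σ τ : Equiv.Perm (Fin n)) (l m : Fin n) (hlm : l ≠ m)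
    (h : ∀ k, k ≠ l → k ≠ m → σ k = τ k) : τ = σ ∨ τ = σ * Equiv.swap l m := by
  have hfix : ∀ k, k ≠ l → k ≠ m → (σ⁻¹ * τ) k = k := by
    intro k h1 h2
    simp only [Equiv.Perm.mul_apply]
    rw [← h k h1 h2]
    exact σ.symm_apply_apply k
  have hτ : τ = σ * (σ⁻¹ * τ) := by rw [← mul_assoc]; simp
  rcases cdaux_perm_fix_two (σ⁻¹ * τ) l m hlm hfix with h1 | h1
  · left
    rw [hτ, h1, mul_one]
  · right
    rw [hτ, h1]

/-- Christoffel–Darboux identity from the three-term recurrence. -/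
lemma cdaux_CD (n : ℕ) (hn : 1 ≤ n) (ψ : ℕ → ℝ → ℝ) (r s : ℕ → ℝ)
    (hrec : ∀ l < n, ∀ t : ℝ, t * ψ l t =
      r l * ψ (l + 1) t + s l * ψ l t +
        (if l = 0 then 0 else r (l - 1) * ψ (l - 1) t)) (t₁ t₂ : ℝ) :
    r (n - 1) * (ψ n t₁ * ψ (n - 1) t₂ - ψ (n - 1) t₁ * ψ n t₂) =
      (t₁ - t₂) * ∑ j ∈ Finset.range n, ψ j t₁ * ψ j t₂ := by
  induction n, hn using Nat.le_induction with
  | base =>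
    have h1 := hrec 0 (by norm_num) t₁
    have h2 := hrec 0 (by norm_num) t₂
    norm_num at h1 h2
    simp only [Finset.sum_range_one]
    norm_num
    linear_combination h2 * ψ 0 t₁ - h1 * ψ 0 t₂
  | succ n hn ih =>
    have ih' := ih (fun l hl t => hrec l (Nat.lt_succ_of_lt hl) t)
    have h1 := hrec n (Nat.lt_succ_self n) t₁
    have h2 := hrec n (Nat.lt_succ_self n) t₂
    have hn0 : n ≠ 0 := Nat.one_le_iff_ne_zero.mp hn
    rw [if_neg hn0] at h1 h2
    have hsn : n + 1 - 1 = n := rfl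
    rw [hsn, Finset.sum_range_succ, mul_add, ← ih']
    linear_combination h2 * ψ n t₁ - h1 * ψ n t₂



lemma cdaux_sign_sq {n : ℕ} (σ : Equiv.Perm (Fin n)) :
    ((Equiv.Perm.sign σ : ℤ) : ℝ) * ((Equiv.Perm.sign σ : ℤ) : ℝ) = 1 := by
  rw [← Int.cast_mul, ← Units.val_mul, ← pow_two]
  simp

lemma cdaux_prod_pair {n : ℕ} (l m : Fin n) (hlm : l ≠ m) (f : Fin n → ℝ)
    (h : ∀ k, k ≠ l → k ≠ m → f k = 1) : ∏ k, f k = f l * f m := by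
  rw [← Finset.prod_pair hlm]
  refine (Finset.prod_subset (Finset.subset_univ _) fun k _ hk => ?_).symm
  simp only [Finset.mem_insert, Finset.mem_singleton] at hk
  push_neg at hk
  exact h k hk.1 hk.2

lemma cdaux_collapse_one {n : ℕ} (E : Fin n → Fin n → Fin n → ℝ) (l : Fin n)
    (hE : ∀ k, k ≠ l → ∀ j j' : Fin n, E k j j' = if j = j' then 1 else 0)
    (σ : Equiv.Perm (Fin n)) :
    ∑ τ : Equiv.Perm (Fin n),
        (((Equiv.Perm.sign σ : ℤ) : ℝ) * ((Equiv.Perm.sign τ : ℤ) : ℝ)) *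
          ∏ k, E k (σ k) (τ k) = E l (σ l) (σ l) := by
  rw [Finset.sum_eq_single σ]
  · rw [cdaux_sign_sq, one_mul]
    refine Finset.prod_eq_single l (fun k _ hk => by rw [hE k hk, if_pos rfl])
      (fun h => absurd (Finset.mem_univ l) h)
  · intro τ _ hτ
    have : ∃ k, k ≠ l ∧ σ k ≠ τ k := by
      by_contra hc
      push_neg at hc
      exact hτ (cdaux_perm_eq_of_agree_off_one σ τ l (fun k hk => hc k hk)).symm
    obtain ⟨k, hk, hne⟩ := this
    rw [Finset.prod_eq_zero (Finset.mem_univ k) (by rw [hE k hk, if_neg hne]), mul_zero]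
  · exact fun h => absurd (Finset.mem_univ σ) h

lemma cdaux_collapse_two {n : ℕ} (E : Fin n → Fin n → Fin n → ℝ) (l m : Fin n) (hlm : l ≠ m)
    (hE : ∀ k, k ≠ l → k ≠ m → ∀ j j' : Fin n, E k j j' = if j = j' then 1 else 0)
    (σ : Equiv.Perm (Fin n)) :
    ∑ τ : Equiv.Perm (Fin n),
        (((Equiv.Perm.sign σ : ℤ) : ℝ) * ((Equiv.Perm.sign τ : ℤ) : ℝ)) *
          ∏ k, E k (σ k) (τ k) =
      E l (σ l) (σ l) * E m (σ m) (σ m) - E l (σ l) (σ m) * E m (σ m) (σ l) := by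
  have hne : σ ≠ σ * Equiv.swap l m := by
    intro h
    have : (1 : Equiv.Perm (Fin n)) = Equiv.swap l m := mul_left_cancel (by rw [← h, mul_one])
    exact hlm (Equiv.swap_eq_one_iff.mp this.symm)
  have hzero : ∀ τ ∈ Finset.univ, τ ∉ ({σ, σ * Equiv.swap l m} : Finset (Equiv.Perm (Fin n))) →
      (((Equiv.Perm.sign σ : ℤ) : ℝ) * ((Equiv.Perm.sign τ : ℤ) : ℝ)) * ∏ k, E k (σ k) (τ k) = 0 := by
    intro τ _ hτ
    simp only [Finset.mem_insert, Finset.mem_singleton] at hτ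
    push_neg at hτ
    have : ∃ k, k ≠ l ∧ k ≠ m ∧ σ k ≠ τ k := by
      by_contra hc
      push_neg at hc
      rcases cdaux_perm_cases σ τ l m hlm (fun k h1 h2 => hc k h1 h2) with h | h
      · exact hτ.1 h
      · exact hτ.2 h
    obtain ⟨k, hk1, hk2, hne'⟩ := this
    rw [Finset.prod_eq_zero (Finset.mem_univ k) (by rw [hE k hk1 hk2, if_neg hne']), mul_zero]
  rw [← Finset.sum_subset (Finset.subset_univ {σ, σ * Equiv.swap l m}) hzero,
    Finset.sum_pair hne]
  have h1 : (((Equiv.Perm.sign σ : ℤ) : ℝ) * ((Equiv.Perm.sign σ : ℤ) : ℝ)) *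
      ∏ k, E k (σ k) (σ k) = E l (σ l) (σ l) * E m (σ m) (σ m) := by
    rw [cdaux_sign_sq, one_mul]
    exact cdaux_prod_pair l m hlm _ (fun k h1 h2 => by rw [hE k h1 h2, if_pos rfl])
  have h2 : (((Equiv.Perm.sign σ : ℤ) : ℝ) * ((Equiv.Perm.sign (σ * Equiv.swap l m) : ℤ) : ℝ)) *
      ∏ k, E k (σ k) ((σ * Equiv.swap l m) k) = -(E l (σ l) (σ m) * E m (σ m) (σ l)) := by
    have hsgn : ((Equiv.Perm.sign (σ * Equiv.swap l m) : ℤ) : ℝ) =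
        -((Equiv.Perm.sign σ : ℤ) : ℝ) := by
      rw [Equiv.Perm.sign_mul, Equiv.Perm.sign_swap hlm]
      push_cast
      ring
    rw [hsgn]
    have hprod : ∏ k, E k (σ k) ((σ * Equiv.swap l m) k) = E l (σ l) (σ m) * E m (σ m) (σ l) := by
      rw [cdaux_prod_pair l m hlm _ (fun k h1 h2 => by
        rw [Equiv.Perm.mul_apply, Equiv.swap_apply_of_ne_of_ne h1 h2, hE k h1 h2, if_pos rfl])]
      rw [Equiv.Perm.mul_apply, Equiv.Perm.mul_apply, Equiv.swap_apply_left,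
        Equiv.swap_apply_right]
    rw [hprod]
    have h := cdaux_sign_sq σ
    linear_combination (-(E l (σ l) (σ m) * E m (σ m) (σ l))) * h
  rw [h1, h2]
  ring


lemma cdaux_master (n : ℕ) (F : Fin n → ℝ → ℝ) (w : Fin n → ℝ → ℝ)
    (hF : ∀ j k : Fin n, Integrable (fun t => F j t * F k t) (volume : Measure ℝ))
    (hw : ∀ k, AEStronglyMeasurable (w k) (volume : Measure ℝ))
    (hwb : ∀ k, ∃ C, ∀ t, ‖w k t‖ ≤ C) :
    Integrable (fun lam : Fin n → ℝ => (∏ k, w k (lam k)) * detDensity n F lam) ∧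
    ∫ lam : Fin n → ℝ, (∏ k, w k (lam k)) * detDensity n F lam
      = ∑ σ : Equiv.Perm (Fin n), ∑ τ : Equiv.Perm (Fin n),
          ((n.factorial : ℝ)⁻¹ * (((Equiv.Perm.sign σ : ℤ) : ℝ) * ((Equiv.Perm.sign τ : ℤ) : ℝ))) *
            ∏ k, ∫ t, w k t * (F (σ k) t * F (τ k) t) := by
  have hdet : ∀ lam : Fin n → ℝ, (Matrix.of fun j k : Fin n => F j (lam k)).det
      = ∑ σ : Equiv.Perm (Fin n), ((Equiv.Perm.sign σ : ℤ) : ℝ) * ∏ i, F (σ i) (lam i) := by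
    intro lam
    rw [Matrix.det_apply']
    refine Finset.sum_congr rfl fun σ _ => ?_
    simp [Units.smul_def, zsmul_eq_mul, Matrix.of_apply]
  have hpt : ∀ lam : Fin n → ℝ, (∏ k, w k (lam k)) * detDensity n F lam
      = ∑ σ : Equiv.Perm (Fin n), ∑ τ : Equiv.Perm (Fin n),
          ((n.factorial : ℝ)⁻¹ * (((Equiv.Perm.sign σ : ℤ) : ℝ) * ((Equiv.Perm.sign τ : ℤ) : ℝ))) *
            ∏ k, (w k (lam k) * (F (σ k) (lam k) * F (τ k) (lam k))) := by
    intro lam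
    rw [detDensity, hdet, pow_two, Finset.sum_mul_sum, Finset.sum_div, Finset.mul_sum]
    refine Finset.sum_congr rfl fun σ _ => ?_
    rw [Finset.sum_div, Finset.mul_sum]
    refine Finset.sum_congr rfl fun τ _ => ?_
    rw [Finset.prod_mul_distrib, Finset.prod_mul_distrib]
    ring
  have hterm : ∀ σ τ : Equiv.Perm (Fin n),
      Integrable (fun lam : Fin n → ℝ =>
        ((n.factorial : ℝ)⁻¹ * (((Equiv.Perm.sign σ : ℤ) : ℝ) * ((Equiv.Perm.sign τ : ℤ) : ℝ))) *
          ∏ k, (w k (lam k) * (F (σ k) (lam k) * F (τ k) (lam k)))) := by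
    intro σ τ
    exact (Integrable.fintype_prod
      (f := fun k t => w k t * (F (σ k) t * F (τ k) t))
      (fun k => (hF (σ k) (τ k)).bdd_mul (hw k) (ae_of_all _ (hwb k).choose_spec))).const_mul _
  constructor
  · refine Integrable.congr (f := fun lam : Fin n → ℝ =>
      ∑ σ : Equiv.Perm (Fin n), ∑ τ : Equiv.Perm (Fin n),
          ((n.factorial : ℝ)⁻¹ * (((Equiv.Perm.sign σ : ℤ) : ℝ) * ((Equiv.Perm.sign τ : ℤ) : ℝ))) *
            ∏ k, (w k (lam k) * (F (σ k) (lam k) * F (τ k) (lam k))))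
      (integrable_finset_sum _ fun σ _ =>
        integrable_finset_sum _ fun τ _ => hterm σ τ) ?_
    filter_upwards with lam using (hpt lam).symm
  · rw [show (fun lam : Fin n → ℝ => (∏ k, w k (lam k)) * detDensity n F lam) = _ from funext hpt]
    rw [integral_finset_sum _ fun σ _ => integrable_finset_sum _ fun τ _ => hterm σ τ]
    refine Finset.sum_congr rfl fun σ _ => ?_
    rw [integral_finset_sum _ fun τ _ => hterm σ τ]
    refine Finset.sum_congr rfl fun τ _ => ?_
    rw [integral_const_mul]
    congr 1
    exact integral_fintype_prod_eq_prod (ι := Fin n) (f := fun k t => w k t * (F (σ k) t * F (τ k) t))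


/-- `∫ ψ_j ψ_k`. -/
noncomputable def cdA (ψ : ℕ → ℝ → ℝ) (j k : ℕ) : ℝ := ∫ t : ℝ, ψ j t * ψ k t

/-- `∫ φ ψ_j ψ_k`. -/
noncomputable def cda (φ : ℝ → ℝ) (ψ : ℕ → ℝ → ℝ) (j k : ℕ) : ℝ :=
  ∫ t : ℝ, φ t * (ψ j t * ψ k t)

/-- `∫ φ² ψ_j ψ_k`. -/
noncomputable def cdb (φ : ℝ → ℝ) (ψ : ℕ → ℝ → ℝ) (j k : ℕ) : ℝ :=
  ∫ t : ℝ, (φ t * φ t) * (ψ j t * ψ k t)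

/-- Christoffel–Darboux form of the variance: for orthonormal `ψ_0, …, ψ_n` in `L²(ℝ)`
satisfying the three-term recurrence `λψ_l = r_l ψ_{l+1} + s_l ψ_l + r_{l-1} ψ_{l-1}`
(`r_{-1} = 0`), the variance of `Σ_l φ(λ_l)` with respect to `p_n` equals
`∬ ((φ(λ₁)-φ(λ₂))/(λ₁-λ₂))² · (1/2)[r_{n-1}(ψ_n(λ₁)ψ_{n-1}(λ₂)-ψ_{n-1}(λ₁)ψ_n(λ₂))]² dλ₁ dλ₂`. -/
theorem variance_linear_statistic_christoffel_darboux (n : ℕ) (hn : 1 ≤ n)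
    (ψ : ℕ → ℝ → ℝ) (r s : ℕ → ℝ)
    (hmeas : ∀ l ≤ n, Measurable (ψ l))
    (hL2 : ∀ l ≤ n, MemLp (ψ l) 2 (volume : Measure ℝ))
    (horth : ∀ l ≤ n, ∀ m ≤ n,
      (∫ t : ℝ, ψ l t * ψ m t) = if l = m then (1 : ℝ) else 0)
    (hr : ∀ l < n, 0 < r l)
    (hrec : ∀ l < n, ∀ t : ℝ, t * ψ l t =
      r l * ψ (l + 1) t + s l * ψ l t +
        (if l = 0 then 0 else r (l - 1) * ψ (l - 1) t))
    (φ : ℝ → ℝ) (hφm : Measurable φ) (hφb : ∃ C : ℝ, ∀ t, |φ t| ≤ C) :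
    (∫ lam : Fin n → ℝ,
        (∑ l, φ (lam l)) ^ 2 * detDensity n (fun l : Fin n => ψ l) lam) -
        (∫ lam : Fin n → ℝ,
          (∑ l, φ (lam l)) * detDensity n (fun l : Fin n => ψ l) lam) ^ 2 =
      ∫ t₁ : ℝ, ∫ t₂ : ℝ, ((φ t₁ - φ t₂) / (t₁ - t₂)) ^ 2 *
        ((r (n - 1) * (ψ n t₁ * ψ (n - 1) t₂ - ψ (n - 1) t₁ * ψ n t₂)) ^ 2 / 2) := by
  obtain ⟨C, hC⟩ := hφb
  have hC0 : 0 ≤ C := le_trans (abs_nonneg _) (hC 0)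
  have hφsm : AEStronglyMeasurable φ (volume : Measure ℝ) := hφm.aestronglyMeasurable
  have hkn : ∀ k : Fin n, (k : ℕ) ≤ n := fun k => le_of_lt k.2
  -- basic integrability
  have hmulN : ∀ j ≤ n, ∀ k ≤ n, Integrable (fun t => ψ j t * ψ k t) (volume : Measure ℝ) := by
    intro j hj k hk
    have hj2 := (hL2 j hj).integrable_sq
    have hk2 := (hL2 k hk).integrable_sq
    refine Integrable.mono' ((hj2.add hk2).div_const 2)
      (((hmeas j hj).mul (hmeas k hk)).aestronglyMeasurable) ?_
    filter_upwards with t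
    rw [Real.norm_eq_abs, abs_mul]
    simp only [Pi.add_apply]
    nlinarith [sq_nonneg (|ψ j t| - |ψ k t|), sq_abs (ψ j t), sq_abs (ψ k t),
      abs_nonneg (ψ j t), abs_nonneg (ψ k t)]
  have haIntN : ∀ j ≤ n, ∀ k ≤ n,
      Integrable (fun t => φ t * (ψ j t * ψ k t)) (volume : Measure ℝ) := by
    intro j hj k hk
    exact (hmulN j hj k hk).bdd_mul hφsm (c := C) (ae_of_all _ fun t => by rw [Real.norm_eq_abs]; exact hC t)
  have hbIntN : ∀ j ≤ n, ∀ k ≤ n,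
      Integrable (fun t => (φ t * φ t) * (ψ j t * ψ k t)) (volume : Measure ℝ) := by
    intro j hj k hk
    refine (hmulN j hj k hk).bdd_mul (hφsm.mul hφsm) (c := C * C) (ae_of_all _ fun t => ?_)
    rw [Real.norm_eq_abs, abs_mul]
    exact mul_le_mul (hC t) (hC t) (abs_nonneg _) hC0
  -- the orthogonality in `Fin n` form
  have hAfin : ∀ j k : Fin n, cdA ψ j k = if j = k then (1 : ℝ) else 0 := by
    intro j k
    rw [cdA, horth j (hkn j) k (hkn k)]
    simp [Fin.val_eq_val]
  -- factorial nonzero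
  have hfac : ((n.factorial : ℝ)) ≠ 0 := Nat.cast_ne_zero.mpr (Nat.factorial_ne_zero n)
  have hFint : ∀ j k : Fin n,
      Integrable (fun t => ψ (j : ℕ) t * ψ (k : ℕ) t) (volume : Measure ℝ) :=
    fun j k => hmulN _ (hkn j) _ (hkn k)
  -- first moment
  have hM1 : (∫ lam : Fin n → ℝ,
      (∑ l, φ (lam l)) * detDensity n (fun l : Fin n => ψ l) lam) =
      ∑ j : Fin n, cda φ ψ j j := by
    have hw : ∀ (l : Fin n) (k : Fin n),
        AEStronglyMeasurable (fun t : ℝ => if k = l then φ t else 1) (volume : Measure ℝ) := by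
      intro l k
      by_cases h : k = l
      · simpa [h] using hφsm
      · simp only [if_neg h]
        exact aestronglyMeasurable_const
    have hwb : ∀ (l : Fin n) (k : Fin n), ∃ C', ∀ t : ℝ, ‖if k = l then φ t else (1:ℝ)‖ ≤ C' := by
      intro l k
      refine ⟨C + 1, fun t => ?_⟩
      by_cases h : k = l
      · simp only [if_pos h, Real.norm_eq_abs]
        linarith [hC t]
      · simp only [if_neg h, norm_one]
        linarith
    have hmaster := fun l : Fin n => cdaux_master n (fun j : Fin n => ψ (j : ℕ))
      (fun k t => if k = l then φ t else 1) hFint (hw l) (hwb l)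
    have hpt : ∀ lam : Fin n → ℝ,
        (∑ l, φ (lam l)) * detDensity n (fun l : Fin n => ψ l) lam
        = ∑ l : Fin n, (∏ k : Fin n, (if k = l then φ (lam k) else 1)) *
            detDensity n (fun l : Fin n => ψ (l : ℕ)) lam := by
      intro lam
      rw [Finset.sum_mul]
      refine Finset.sum_congr rfl fun l _ => ?_
      congr 1
      rw [Finset.prod_ite_eq' Finset.univ l (fun k => φ (lam k)), if_pos (Finset.mem_univ l)]
    rw [show (fun lam : Fin n → ℝ =>
        (∑ l, φ (lam l)) * detDensity n (fun l : Fin n => ψ l) lam) = _ from funext hpt]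
    rw [integral_finset_sum _ (fun l _ => (hmaster l).1)]
    have hE : ∀ l : Fin n, ∀ k, k ≠ l → ∀ j j' : Fin n,
        (∫ t : ℝ, (if k = l then φ t else 1) * (ψ (j:ℕ) t * ψ (j':ℕ) t))
          = if j = j' then (1:ℝ) else 0 := by
      intro l k hk j j'
      simp only [if_neg hk, one_mul]
      rw [horth _ (hkn j) _ (hkn j')]
      simp [Fin.val_eq_val]
    have hval : ∀ l : Fin n,
        (∫ lam : Fin n → ℝ, (∏ k : Fin n, (if k = l then φ (lam k) else 1)) *
            detDensity n (fun l : Fin n => ψ (l : ℕ)) lam)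
        = (n.factorial : ℝ)⁻¹ * ∑ σ : Equiv.Perm (Fin n), cda φ ψ (σ l : ℕ) (σ l : ℕ) := by
      intro l
      rw [(hmaster l).2]
      rw [Finset.mul_sum]
      refine Finset.sum_congr rfl fun σ _ => ?_
      have hcoll := cdaux_collapse_one
        (fun k (j j' : Fin n) => ∫ t : ℝ, (if k = l then φ t else 1) * (ψ (j:ℕ) t * ψ (j':ℕ) t))
        l (hE l) σ
      calc ∑ τ : Equiv.Perm (Fin n),
            ((n.factorial : ℝ)⁻¹ * (((Equiv.Perm.sign σ : ℤ) : ℝ) * ((Equiv.Perm.sign τ : ℤ) : ℝ))) *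
              ∏ k, ∫ t : ℝ, (if k = l then φ t else 1) * (ψ ((σ k : Fin n):ℕ) t * ψ ((τ k : Fin n):ℕ) t)
          = ∑ τ : Equiv.Perm (Fin n), (n.factorial : ℝ)⁻¹ *
              ((((Equiv.Perm.sign σ : ℤ) : ℝ) * ((Equiv.Perm.sign τ : ℤ) : ℝ)) *
              ∏ k, ∫ t : ℝ, (if k = l then φ t else 1) * (ψ ((σ k : Fin n):ℕ) t * ψ ((τ k : Fin n):ℕ) t)) :=
            Finset.sum_congr rfl fun τ _ => mul_assoc _ _ _
        _ = (n.factorial : ℝ)⁻¹ * cda φ ψ ((σ l : Fin n):ℕ) ((σ l : Fin n):ℕ) := by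
            rw [← Finset.mul_sum, hcoll]
            congr 1
            rw [cda]
            congr 1
            funext t
            rw [if_pos rfl]
    calc ∑ l : Fin n, ∫ lam : Fin n → ℝ, (∏ k : Fin n, (if k = l then φ (lam k) else 1)) *
            detDensity n (fun l : Fin n => ψ (l : ℕ)) lam
        = ∑ l : Fin n, (n.factorial : ℝ)⁻¹ *
            ∑ σ : Equiv.Perm (Fin n), cda φ ψ (σ l : ℕ) (σ l : ℕ) :=
          Finset.sum_congr rfl fun l _ => hval l
      _ = (n.factorial : ℝ)⁻¹ * ∑ σ : Equiv.Perm (Fin n), ∑ l : Fin n,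
            cda φ ψ (σ l : ℕ) (σ l : ℕ) := by
          rw [← Finset.mul_sum, Finset.sum_comm]
      _ = (n.factorial : ℝ)⁻¹ * ∑ _σ : Equiv.Perm (Fin n), ∑ j : Fin n, cda φ ψ (j:ℕ) (j:ℕ) := by
          congr 1
          exact Finset.sum_congr rfl fun σ _ =>
            Equiv.sum_comp σ (fun j : Fin n => cda φ ψ (j:ℕ) (j:ℕ))
      _ = ∑ j : Fin n, cda φ ψ (j:ℕ) (j:ℕ) := by
          rw [Finset.sum_const, Finset.card_univ, Fintype.card_perm, Fintype.card_fin,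
            nsmul_eq_mul]
          field_simp
  -- second moment
  have hM2 : (∫ lam : Fin n → ℝ,
      (∑ l, φ (lam l)) ^ 2 * detDensity n (fun l : Fin n => ψ l) lam) =
      ∑ j : Fin n, cdb φ ψ j j +
        ∑ j : Fin n, ∑ k : Fin n,
          (cda φ ψ j j * cda φ ψ k k - cda φ ψ j k * cda φ ψ k j) := by
    have hw : ∀ (l : Fin n) (k : Fin n),
        AEStronglyMeasurable (fun t : ℝ => if k = l then φ t else 1) (volume : Measure ℝ) := by
      intro l k
      by_cases h : k = l
      · simpa [h] using hφsm
      · simp only [if_neg h]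
        exact aestronglyMeasurable_const
    have hnb : ∀ (l : Fin n) (k : Fin n) (t : ℝ), ‖if k = l then φ t else (1:ℝ)‖ ≤ C + 1 := by
      intro l k t
      by_cases h : k = l
      · simp only [if_pos h, Real.norm_eq_abs]
        linarith [hC t]
      · simp only [if_neg h, norm_one]
        linarith
    have hw2 : ∀ (l m : Fin n) (k : Fin n),
        AEStronglyMeasurable
          (fun t : ℝ => (if k = l then φ t else 1) * (if k = m then φ t else 1))
          (volume : Measure ℝ) := fun l m k => (hw l k).mul (hw m k)
    have hwb2 : ∀ (l m : Fin n) (k : Fin n), ∃ C', ∀ t : ℝ,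
        ‖(if k = l then φ t else (1:ℝ)) * (if k = m then φ t else 1)‖ ≤ C' := by
      intro l m k
      refine ⟨(C + 1) * (C + 1), fun t => ?_⟩
      rw [norm_mul]
      exact mul_le_mul (hnb l k t) (hnb m k t) (norm_nonneg _) (by linarith)
    have hmaster2 := fun l m : Fin n => cdaux_master n (fun j : Fin n => ψ (j : ℕ))
      (fun k t => (if k = l then φ t else 1) * (if k = m then φ t else 1))
      hFint (hw2 l m) (hwb2 l m)
    have hpt : ∀ lam : Fin n → ℝ,
        (∑ l, φ (lam l)) ^ 2 * detDensity n (fun l : Fin n => ψ l) lam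
        = ∑ l : Fin n, ∑ m : Fin n,
            (∏ k : Fin n, (if k = l then φ (lam k) else 1) * (if k = m then φ (lam k) else 1)) *
            detDensity n (fun l : Fin n => ψ (l : ℕ)) lam := by
      intro lam
      rw [pow_two, Finset.sum_mul_sum, Finset.sum_mul]
      refine Finset.sum_congr rfl fun l _ => ?_
      rw [Finset.sum_mul]
      refine Finset.sum_congr rfl fun m _ => ?_
      congr 1
      rw [Finset.prod_mul_distrib,
        Finset.prod_ite_eq' Finset.univ l (fun k => φ (lam k)), if_pos (Finset.mem_univ l),
        Finset.prod_ite_eq' Finset.univ m (fun k => φ (lam k)), if_pos (Finset.mem_univ m)]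
    rw [show (fun lam : Fin n → ℝ =>
        (∑ l, φ (lam l)) ^ 2 * detDensity n (fun l : Fin n => ψ l) lam) = _ from funext hpt]
    rw [integral_finset_sum _ (fun l _ => integrable_finset_sum _ (fun m _ => (hmaster2 l m).1))]
    have hsums : ∀ l : Fin n, (∫ lam : Fin n → ℝ, ∑ m : Fin n,
        (∏ k : Fin n, (if k = l then φ (lam k) else 1) * (if k = m then φ (lam k) else 1)) *
        detDensity n (fun l : Fin n => ψ (l : ℕ)) lam) = ∑ m : Fin n, ∫ lam : Fin n → ℝ,
        (∏ k : Fin n, (if k = l then φ (lam k) else 1) * (if k = m then φ (lam k) else 1)) *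
        detDensity n (fun l : Fin n => ψ (l : ℕ)) lam :=
      fun l => integral_finset_sum _ (fun m _ => (hmaster2 l m).1)
    simp only [hsums]
    -- per (l, m) evaluation
    have hval2 : ∀ l m : Fin n, (∫ lam : Fin n → ℝ,
        (∏ k : Fin n, (if k = l then φ (lam k) else 1) * (if k = m then φ (lam k) else 1)) *
        detDensity n (fun l : Fin n => ψ (l : ℕ)) lam)
        = (n.factorial : ℝ)⁻¹ * ∑ σ : Equiv.Perm (Fin n),
            (if l = m then cdb φ ψ (σ l : ℕ) (σ l : ℕ) else
              (cda φ ψ (σ l : ℕ) (σ l : ℕ) * cda φ ψ (σ m : ℕ) (σ m : ℕ) -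
                cda φ ψ (σ l : ℕ) (σ m : ℕ) * cda φ ψ (σ m : ℕ) (σ l : ℕ))) := by
      intro l m
      rw [(hmaster2 l m).2, Finset.mul_sum]
      refine Finset.sum_congr rfl fun σ _ => ?_
      rw [Finset.sum_congr rfl fun τ _ => mul_assoc ((n.factorial : ℝ)⁻¹) _ _,
        ← Finset.mul_sum]
      congr 1
      by_cases hlm : l = m
      · subst hlm
        rw [if_pos rfl]
        have hE : ∀ k, k ≠ l → ∀ j j' : Fin n,
            (∫ t : ℝ, ((if k = l then φ t else 1) * (if k = l then φ t else 1)) *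
              (ψ (j:ℕ) t * ψ (j':ℕ) t)) = if j = j' then (1:ℝ) else 0 := by
          intro k hk j j'
          simp only [if_neg hk, one_mul]
          rw [horth _ (hkn j) _ (hkn j')]
          simp [Fin.val_eq_val]
        rw [cdaux_collapse_one
          (fun k (j j' : Fin n) => ∫ t : ℝ, ((if k = l then φ t else 1) *
            (if k = l then φ t else 1)) * (ψ (j:ℕ) t * ψ (j':ℕ) t)) l hE σ]
        rw [cdb]
        congr 1
        funext t
        rw [if_pos rfl]
      · rw [if_neg hlm]
        have hE : ∀ k, k ≠ l → k ≠ m → ∀ j j' : Fin n,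
            (∫ t : ℝ, ((if k = l then φ t else 1) * (if k = m then φ t else 1)) *
              (ψ (j:ℕ) t * ψ (j':ℕ) t)) = if j = j' then (1:ℝ) else 0 := by
          intro k hk1 hk2 j j'
          simp only [if_neg hk1, if_neg hk2, one_mul]
          rw [horth _ (hkn j) _ (hkn j')]
          simp [Fin.val_eq_val]
        rw [cdaux_collapse_two
          (fun k (j j' : Fin n) => ∫ t : ℝ, ((if k = l then φ t else 1) *
            (if k = m then φ t else 1)) * (ψ (j:ℕ) t * ψ (j':ℕ) t)) l m hlm hE σ]
        have hEl : ∀ j j' : Fin n, (∫ t : ℝ, ((if l = l then φ t else 1) *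
            (if l = m then φ t else 1)) * (ψ (j:ℕ) t * ψ (j':ℕ) t)) = cda φ ψ (j:ℕ) (j':ℕ) := by
          intro j j'
          rw [cda]
          congr 1
          funext t
          rw [if_pos rfl, if_neg hlm, mul_one]
        have hEm : ∀ j j' : Fin n, (∫ t : ℝ, ((if m = l then φ t else 1) *
            (if m = m then φ t else 1)) * (ψ (j:ℕ) t * ψ (j':ℕ) t)) = cda φ ψ (j:ℕ) (j':ℕ) := by
          intro j j'
          rw [cda]
          congr 1
          funext t
          rw [if_pos rfl, if_neg (Ne.symm hlm), one_mul]
        rw [hEl, hEl, hEm, hEm]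
    simp only [hval2]
    have hGsum : ∀ σ : Equiv.Perm (Fin n),
        (∑ l : Fin n, ∑ m : Fin n, (if l = m then cdb φ ψ (σ l : ℕ) (σ l : ℕ) else
          (cda φ ψ (σ l : ℕ) (σ l : ℕ) * cda φ ψ (σ m : ℕ) (σ m : ℕ) -
            cda φ ψ (σ l : ℕ) (σ m : ℕ) * cda φ ψ (σ m : ℕ) (σ l : ℕ))))
        = ∑ j : Fin n, cdb φ ψ j j + ∑ j : Fin n, ∑ k : Fin n,
            (cda φ ψ j j * cda φ ψ k k - cda φ ψ j k * cda φ ψ k j) := by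
      intro σ
      have hsplit : ∀ l m : Fin n,
          (if l = m then cdb φ ψ (σ l : ℕ) (σ l : ℕ) else
            (cda φ ψ (σ l : ℕ) (σ l : ℕ) * cda φ ψ (σ m : ℕ) (σ m : ℕ) -
              cda φ ψ (σ l : ℕ) (σ m : ℕ) * cda φ ψ (σ m : ℕ) (σ l : ℕ)))
          = (if l = m then cdb φ ψ (σ l : ℕ) (σ l : ℕ) else 0) +
            (cda φ ψ (σ l : ℕ) (σ l : ℕ) * cda φ ψ (σ m : ℕ) (σ m : ℕ) -
              cda φ ψ (σ l : ℕ) (σ m : ℕ) * cda φ ψ (σ m : ℕ) (σ l : ℕ)) := by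
        intro l m
        by_cases h : l = m
        · subst h
          rw [if_pos rfl, if_pos rfl]
          ring
        · rw [if_neg h, if_neg h]
          ring
      rw [Finset.sum_congr rfl fun l (_ : l ∈ Finset.univ) =>
        Finset.sum_congr rfl fun m (_ : m ∈ Finset.univ) => hsplit l m]
      simp only [Finset.sum_add_distrib]
      congr 1
      · -- diagonal part
        have hdiag : ∀ l : Fin n,
            (∑ m : Fin n, if l = m then cdb φ ψ (σ l : ℕ) (σ l : ℕ) else 0)
            = cdb φ ψ (σ l : ℕ) (σ l : ℕ) := by
          intro l
          rw [Finset.sum_ite_eq]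
          simp
        rw [Finset.sum_congr rfl fun l (_ : l ∈ Finset.univ) => hdiag l]
        exact Equiv.sum_comp σ (fun j : Fin n => cdb φ ψ (j:ℕ) (j:ℕ))
      · -- off-diagonal part
        have hinner : ∀ l : Fin n,
            (∑ m : Fin n, (cda φ ψ (σ l : ℕ) (σ l : ℕ) * cda φ ψ (σ m : ℕ) (σ m : ℕ) -
              cda φ ψ (σ l : ℕ) (σ m : ℕ) * cda φ ψ (σ m : ℕ) (σ l : ℕ)))
            = ∑ k : Fin n, (cda φ ψ (σ l : ℕ) (σ l : ℕ) * cda φ ψ (k : ℕ) (k : ℕ) -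
              cda φ ψ (σ l : ℕ) (k : ℕ) * cda φ ψ (k : ℕ) (σ l : ℕ)) := by
          intro l
          exact Equiv.sum_comp σ (fun k : Fin n =>
            cda φ ψ (σ l : ℕ) (σ l : ℕ) * cda φ ψ (k : ℕ) (k : ℕ) -
              cda φ ψ (σ l : ℕ) (k : ℕ) * cda φ ψ (k : ℕ) (σ l : ℕ))
        rw [Finset.sum_congr rfl fun l (_ : l ∈ Finset.univ) => hinner l]
        exact Equiv.sum_comp σ (fun j : Fin n => ∑ k : Fin n,
          (cda φ ψ (j : ℕ) (j : ℕ) * cda φ ψ (k : ℕ) (k : ℕ) -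
            cda φ ψ (j : ℕ) (k : ℕ) * cda φ ψ (k : ℕ) (j : ℕ)))
    simp only [← Finset.mul_sum]
    rw [Finset.sum_congr rfl fun l (_ : l ∈ Finset.univ) => Finset.sum_comm, Finset.sum_comm]
    rw [Finset.sum_congr rfl fun σ (_ : σ ∈ Finset.univ) => hGsum σ]
    rw [Finset.sum_const, Finset.card_univ, Fintype.card_perm, Fintype.card_fin, nsmul_eq_mul]
    field_simp
  -- the right-hand side
  have hRHS : (∫ t₁ : ℝ, ∫ t₂ : ℝ, ((φ t₁ - φ t₂) / (t₁ - t₂)) ^ 2 *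
      ((r (n - 1) * (ψ n t₁ * ψ (n - 1) t₂ - ψ (n - 1) t₁ * ψ n t₂)) ^ 2 / 2)) =
      ∑ j : Fin n, cdb φ ψ j j - ∑ j : Fin n, ∑ k : Fin n, cda φ ψ j k * cda φ ψ k j := by
    have hasymm : ∀ j k : Fin n, cda φ ψ (j:ℕ) (k:ℕ) = cda φ ψ (k:ℕ) (j:ℕ) := by
      intro j k
      rw [cda, cda]
      congr 1
      funext t
      ring
    have hptR : ∀ t₁ t₂ : ℝ, ((φ t₁ - φ t₂) / (t₁ - t₂)) ^ 2 *
        ((r (n - 1) * (ψ n t₁ * ψ (n - 1) t₂ - ψ (n - 1) t₁ * ψ n t₂)) ^ 2 / 2)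
        = (φ t₁ - φ t₂) ^ 2 * (∑ j : Fin n, ψ (j:ℕ) t₁ * ψ (j:ℕ) t₂) ^ 2 / 2 := by
      intro t₁ t₂
      rw [cdaux_CD n hn ψ r s hrec t₁ t₂,
        ← Fin.sum_univ_eq_sum_range (fun j => ψ j t₁ * ψ j t₂) n]
      by_cases h : t₁ = t₂
      · subst h
        simp
      · have hne : t₁ - t₂ ≠ 0 := sub_ne_zero.mpr h
        field_simp
    simp only [hptR]
    have hInner : ∀ t₁ : ℝ,
        (∫ t₂ : ℝ, (φ t₁ - φ t₂) ^ 2 * (∑ j : Fin n, ψ (j:ℕ) t₁ * ψ (j:ℕ) t₂) ^ 2 / 2)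
        = ∑ j : Fin n, ∑ k : Fin n, (ψ (j:ℕ) t₁ * ψ (k:ℕ) t₁) *
            (φ t₁ * φ t₁ / 2 * cdA ψ (j:ℕ) (k:ℕ) - φ t₁ * cda φ ψ (j:ℕ) (k:ℕ)
              + cdb φ ψ (j:ℕ) (k:ℕ) / 2) := by
      intro t₁
      have hpt2 : ∀ t₂ : ℝ,
          (φ t₁ - φ t₂) ^ 2 * (∑ j : Fin n, ψ (j:ℕ) t₁ * ψ (j:ℕ) t₂) ^ 2 / 2
          = ∑ j : Fin n, ∑ k : Fin n, (ψ (j:ℕ) t₁ * ψ (k:ℕ) t₁) *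
              (φ t₁ * φ t₁ / 2 * (ψ (j:ℕ) t₂ * ψ (k:ℕ) t₂)
                - φ t₁ * (φ t₂ * (ψ (j:ℕ) t₂ * ψ (k:ℕ) t₂))
                + φ t₂ * φ t₂ * (ψ (j:ℕ) t₂ * ψ (k:ℕ) t₂) / 2) := by
        intro t₂
        rw [pow_two (∑ j : Fin n, ψ (j:ℕ) t₁ * ψ (j:ℕ) t₂), Finset.sum_mul_sum]
        simp only [Finset.mul_sum, Finset.sum_div]
        refine Finset.sum_congr rfl fun j _ => Finset.sum_congr rfl fun k _ => ?_
        ring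
      rw [show (fun t₂ : ℝ => (φ t₁ - φ t₂) ^ 2 *
          (∑ j : Fin n, ψ (j:ℕ) t₁ * ψ (j:ℕ) t₂) ^ 2 / 2) = _ from funext hpt2]
      have hint : ∀ j k : Fin n, Integrable (fun t₂ : ℝ =>
          (ψ (j:ℕ) t₁ * ψ (k:ℕ) t₁) *
            (φ t₁ * φ t₁ / 2 * (ψ (j:ℕ) t₂ * ψ (k:ℕ) t₂)
              - φ t₁ * (φ t₂ * (ψ (j:ℕ) t₂ * ψ (k:ℕ) t₂))
              + φ t₂ * φ t₂ * (ψ (j:ℕ) t₂ * ψ (k:ℕ) t₂) / 2)) (volume : Measure ℝ) := by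
        intro j k
        exact ((((hFint j k).const_mul (φ t₁ * φ t₁ / 2)).sub
          ((haIntN _ (hkn j) _ (hkn k)).const_mul (φ t₁))).add
          ((hbIntN _ (hkn j) _ (hkn k)).div_const 2)).const_mul _
      rw [integral_finset_sum _ (fun j _ => integrable_finset_sum _ (fun k _ => hint j k))]
      refine Finset.sum_congr rfl fun j _ => ?_
      rw [integral_finset_sum _ (fun k _ => hint j k)]
      refine Finset.sum_congr rfl fun k _ => ?_
      rw [integral_const_mul]
      congr 1
      rw [integral_add
          (f := fun t₂ : ℝ => φ t₁ * φ t₁ / 2 * (ψ (j:ℕ) t₂ * ψ (k:ℕ) t₂)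
            - φ t₁ * (φ t₂ * (ψ (j:ℕ) t₂ * ψ (k:ℕ) t₂)))
          (g := fun t₂ : ℝ => φ t₂ * φ t₂ * (ψ (j:ℕ) t₂ * ψ (k:ℕ) t₂) / 2)
          (((hFint j k).const_mul (φ t₁ * φ t₁ / 2)).sub
            ((haIntN _ (hkn j) _ (hkn k)).const_mul (φ t₁)))
          ((hbIntN _ (hkn j) _ (hkn k)).div_const 2)]
      rw [integral_sub
          (f := fun t₂ : ℝ => φ t₁ * φ t₁ / 2 * (ψ (j:ℕ) t₂ * ψ (k:ℕ) t₂))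
          (g := fun t₂ : ℝ => φ t₁ * (φ t₂ * (ψ (j:ℕ) t₂ * ψ (k:ℕ) t₂)))
          ((hFint j k).const_mul (φ t₁ * φ t₁ / 2))
          ((haIntN _ (hkn j) _ (hkn k)).const_mul (φ t₁))]
      rw [integral_const_mul]
      rw [integral_const_mul]
      rw [integral_div]
      rfl
    simp only [hInner]
    have hOpt : ∀ t₁ : ℝ,
        (∑ j : Fin n, ∑ k : Fin n, (ψ (j:ℕ) t₁ * ψ (k:ℕ) t₁) *
            (φ t₁ * φ t₁ / 2 * cdA ψ (j:ℕ) (k:ℕ) - φ t₁ * cda φ ψ (j:ℕ) (k:ℕ)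
              + cdb φ ψ (j:ℕ) (k:ℕ) / 2))
        = ∑ j : Fin n, ∑ k : Fin n,
            ((cdA ψ (j:ℕ) (k:ℕ) / 2) * (φ t₁ * φ t₁ * (ψ (j:ℕ) t₁ * ψ (k:ℕ) t₁))
              - cda φ ψ (j:ℕ) (k:ℕ) * (φ t₁ * (ψ (j:ℕ) t₁ * ψ (k:ℕ) t₁))
              + (cdb φ ψ (j:ℕ) (k:ℕ) / 2) * (ψ (j:ℕ) t₁ * ψ (k:ℕ) t₁)) := by
      intro t₁
      refine Finset.sum_congr rfl fun j _ => Finset.sum_congr rfl fun k _ => ?_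
      ring
    simp only [hOpt]
    have hint2 : ∀ j k : Fin n, Integrable (fun t₁ : ℝ =>
        (cdA ψ (j:ℕ) (k:ℕ) / 2) * (φ t₁ * φ t₁ * (ψ (j:ℕ) t₁ * ψ (k:ℕ) t₁))
          - cda φ ψ (j:ℕ) (k:ℕ) * (φ t₁ * (ψ (j:ℕ) t₁ * ψ (k:ℕ) t₁))
          + (cdb φ ψ (j:ℕ) (k:ℕ) / 2) * (ψ (j:ℕ) t₁ * ψ (k:ℕ) t₁)) (volume : Measure ℝ) := by
      intro j k
      exact (((hbIntN _ (hkn j) _ (hkn k)).const_mul _).sub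
        ((haIntN _ (hkn j) _ (hkn k)).const_mul _)).add ((hFint j k).const_mul _)
    rw [integral_finset_sum _ (fun j _ => integrable_finset_sum _ (fun k _ => hint2 j k))]
    have hrow : ∀ j : Fin n,
        (∑ k : Fin n, ∫ t₁ : ℝ,
          ((cdA ψ (j:ℕ) (k:ℕ) / 2) * (φ t₁ * φ t₁ * (ψ (j:ℕ) t₁ * ψ (k:ℕ) t₁))
            - cda φ ψ (j:ℕ) (k:ℕ) * (φ t₁ * (ψ (j:ℕ) t₁ * ψ (k:ℕ) t₁))
            + (cdb φ ψ (j:ℕ) (k:ℕ) / 2) * (ψ (j:ℕ) t₁ * ψ (k:ℕ) t₁)))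
        = ∑ k : Fin n, ((if j = k then cdb φ ψ (j:ℕ) (k:ℕ) else 0)
            - cda φ ψ (j:ℕ) (k:ℕ) * cda φ ψ (k:ℕ) (j:ℕ)) := by
      intro j
      refine Finset.sum_congr rfl fun k _ => ?_
      rw [integral_add
          (f := fun t₁ : ℝ => (cdA ψ (j:ℕ) (k:ℕ) / 2) * (φ t₁ * φ t₁ * (ψ (j:ℕ) t₁ * ψ (k:ℕ) t₁))
            - cda φ ψ (j:ℕ) (k:ℕ) * (φ t₁ * (ψ (j:ℕ) t₁ * ψ (k:ℕ) t₁)))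
          (g := fun t₁ : ℝ => (cdb φ ψ (j:ℕ) (k:ℕ) / 2) * (ψ (j:ℕ) t₁ * ψ (k:ℕ) t₁))
          (((hbIntN _ (hkn j) _ (hkn k)).const_mul _).sub
            ((haIntN _ (hkn j) _ (hkn k)).const_mul _)) ((hFint j k).const_mul _),
        integral_sub
          (f := fun t₁ : ℝ => (cdA ψ (j:ℕ) (k:ℕ) / 2) * (φ t₁ * φ t₁ * (ψ (j:ℕ) t₁ * ψ (k:ℕ) t₁)))
          (g := fun t₁ : ℝ => cda φ ψ (j:ℕ) (k:ℕ) * (φ t₁ * (ψ (j:ℕ) t₁ * ψ (k:ℕ) t₁)))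
          ((hbIntN _ (hkn j) _ (hkn k)).const_mul _)
          ((haIntN _ (hkn j) _ (hkn k)).const_mul _),
        integral_const_mul, integral_const_mul, integral_const_mul]
      have e1 : (∫ t : ℝ, φ t * φ t * (ψ (j:ℕ) t * ψ (k:ℕ) t)) = cdb φ ψ (j:ℕ) (k:ℕ) := rfl
      have e2 : (∫ t : ℝ, φ t * (ψ (j:ℕ) t * ψ (k:ℕ) t)) = cda φ ψ (j:ℕ) (k:ℕ) := rfl
      have e3 : (∫ t : ℝ, ψ (j:ℕ) t * ψ (k:ℕ) t) = cdA ψ (j:ℕ) (k:ℕ) := rfl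
      rw [e1, e2, e3, hAfin j k, hasymm j k]
      by_cases h : j = k
      · subst h
        rw [if_pos rfl, if_pos rfl]
        ring
      · rw [if_neg h, if_neg h]
        ring
    rw [Finset.sum_congr rfl fun j (_ : j ∈ Finset.univ) =>
      integral_finset_sum _ (fun k _ => hint2 j k)]
    rw [Finset.sum_congr rfl fun j (_ : j ∈ Finset.univ) => hrow j]
    simp only [Finset.sum_sub_distrib]
    congr 1
    refine Finset.sum_congr rfl fun j _ => ?_
    rw [Finset.sum_ite_eq]
    simp
  rw [hM1, hM2, hRHS, pow_two, Finset.sum_mul_sum]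
  simp only [Finset.sum_sub_distrib]
  ring
end

section
/- Let n ≥ 1 and let ψ_0, …, ψ_n be real-valued functions in L²(ℝ) with ∫_ℝ ψ_l ψ_m dλ = δ_{lm} for 0 ≤ l, m ≤ n, satisfying for some reals r_0, …, r_{n-1} > 0 and s_0, …, s_{n-1} (r_{-1} = 0, ψ_{-1} = 0) the recurrence λ ψ_l(λ) = r_l ψ_{l+1}(λ) + s_l ψ_l(λ) + r_{l-1} ψ_{l-1}(λ) for all λ ∈ ℝ and 0 ≤ l ≤ n-1. Define p_n(λ_1, …, λ_n) = (det{ψ_{j-1}(λ_k)}_{j,k=1}^n)² / n!. Then for every bounded differentiable φ : ℝ → ℝ with sup_{λ ∈ ℝ} |φ'(λ)| < ∞, the variance of N_n[φ] = Σ_{l=1}^n φ(λ_l) with respect to p_n satisfies Var{N_n[φ]} ≤ (r_{n-1})² · ( sup_{λ ∈ ℝ} |φ'(λ)| )². -/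
open MeasureTheory

open Finset

section Aux

variable {n : ℕ}

lemma aux_perm_off_single {a : Fin n} {σ τ : Equiv.Perm (Fin n)}
    (h : ∀ k, k ≠ a → σ k = τ k) : σ = τ := by
  have ha : σ a = τ a := by
    rcases eq_or_ne (τ.symm (σ a)) a with hk | hk
    · conv_rhs => rw [← hk]
      simp
    · exfalso
      have h1 : σ (τ.symm (σ a)) = τ (τ.symm (σ a)) := h _ hk
      rw [Equiv.apply_symm_apply] at h1
      exact hk (σ.injective h1)
  apply Equiv.ext
  intro k
  rcases eq_or_ne k a with rfl | hk
  · exact ha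
  · exact h k hk

lemma aux_perm_off_pair {a b : Fin n} (hab : a ≠ b) {π : Equiv.Perm (Fin n)}
    (h : ∀ k, k ≠ a → k ≠ b → π k = k) : π = 1 ∨ π = Equiv.swap a b := by
  have ha : π a = a ∨ π a = b := by
    by_contra hc
    push_neg at hc
    have h1 : π (π a) = π a := h (π a) hc.1 hc.2
    exact hc.1 (π.injective h1)
  rcases ha with ha | ha
  · left
    have hb : π b = b := by
      rcases eq_or_ne (π b) a with h1 | h1
      · exact absurd (π.injective (h1.trans ha.symm)) hab.symm
      rcases eq_or_ne (π b) b with h2 | h2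
      · exact h2
      · exact absurd (π.injective (h (π b) h1 h2)) h2
    apply Equiv.ext
    intro k
    rcases eq_or_ne k a with rfl | h1
    · exact ha
    rcases eq_or_ne k b with rfl | h2
    · exact hb
    · exact h k h1 h2
  · right
    have hb : π b = a := by
      rcases eq_or_ne (π b) a with h1 | h1
      · exact h1
      exfalso
      rcases eq_or_ne (π b) b with h2 | h2
      · exact hab (π.injective (ha.trans h2.symm))
      · exact h2 (π.injective (h (π b) h1 h2))
    apply Equiv.ext
    intro k
    rcases eq_or_ne k a with rfl | h1
    · rw [Equiv.swap_apply_left]; exact ha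
    rcases eq_or_ne k b with rfl | h2
    · rw [Equiv.swap_apply_right]; exact hb
    · rw [Equiv.swap_apply_of_ne_of_ne h1 h2]; exact h k h1 h2

end Aux

open MeasureTheory Finset

section Aux3

variable {n : ℕ}

noncomputable def eps (σ : Equiv.Perm (Fin n)) : ℝ := ((Equiv.Perm.sign σ : ℤ) : ℝ)

lemma eps_mul_self (σ : Equiv.Perm (Fin n)) : eps σ * eps σ = 1 := by
  unfold eps
  rcases Int.units_eq_one_or (Equiv.Perm.sign σ) with h | h <;> rw [h] <;> norm_num

noncomputable def TT (Ψ : Fin n → ℝ → ℝ) (f : ℝ → ℝ) (j k : Fin n) : ℝ :=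
  ∫ t : ℝ, f t * (Ψ j t * Ψ k t)

variable {Ψ : Fin n → ℝ → ℝ}

lemma TT_symm (f : ℝ → ℝ) (j k : Fin n) : TT Ψ f j k = TT Ψ f k j := by
  unfold TT
  congr 1
  funext t
  ring

lemma aux_single_eval (hΨδ : ∀ j k : Fin n, (∫ t : ℝ, Ψ j t * Ψ k t) = if j = k then 1 else 0)
    (f : ℝ → ℝ) (a : Fin n) :
    (∑ σ : Equiv.Perm (Fin n), ∑ τ : Equiv.Perm (Fin n),
      (eps σ * eps τ) * ∏ k, ∫ t : ℝ, (if k = a then f t else 1) * (Ψ (σ k) t * Ψ (τ k) t)) =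
    ∑ σ : Equiv.Perm (Fin n), TT Ψ f (σ a) (σ a) := by
  classical
  refine Finset.sum_congr rfl fun σ _ => ?_
  have hval : ∀ (τ : Equiv.Perm (Fin n)) (k : Fin n),
      (∫ t : ℝ, (if k = a then f t else 1) * (Ψ (σ k) t * Ψ (τ k) t)) =
      if k = a then TT Ψ f (σ k) (τ k) else (if σ k = τ k then (1:ℝ) else 0) := by
    intro τ k
    rcases eq_or_ne k a with rfl | h
    · simp only [if_pos rfl]
      rfl
    · simp only [if_neg h, one_mul]
      exact hΨδ _ _
  refine Finset.sum_eq_single_of_mem σ (mem_univ σ) ?_ |>.trans ?_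
  · intro τ _ hτ
    have hex : ∃ k, k ≠ a ∧ σ k ≠ τ k := by
      by_contra hc
      push_neg at hc
      exact hτ.symm (aux_perm_off_single hc)
    obtain ⟨k, hka, hkv⟩ := hex
    have : (∏ k, ∫ t : ℝ, (if k = a then f t else 1) * (Ψ (σ k) t * Ψ (τ k) t)) = 0 := by
      refine Finset.prod_eq_zero (mem_univ k) ?_
      rw [hval, if_neg hka, if_neg hkv]
    rw [this, mul_zero]
  · have : (∏ k, ∫ t : ℝ, (if k = a then f t else 1) * (Ψ (σ k) t * Ψ (σ k) t)) =
        TT Ψ f (σ a) (σ a) := by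
      rw [← Finset.mul_prod_erase univ _ (mem_univ a)]
      rw [hval, if_pos rfl]
      have hrest : (∏ k ∈ univ.erase a,
          ∫ t : ℝ, (if k = a then f t else 1) * (Ψ (σ k) t * Ψ (σ k) t)) = 1 := by
        refine Finset.prod_eq_one fun k hk => ?_
        rw [hval, if_neg (Finset.ne_of_mem_erase hk), if_pos rfl]
      rw [hrest, mul_one]
    rw [this, eps_mul_self, one_mul]

lemma aux_pair_eval (hΨδ : ∀ j k : Fin n, (∫ t : ℝ, Ψ j t * Ψ k t) = if j = k then 1 else 0)
    (f g : ℝ → ℝ) (a b : Fin n) (hab : a ≠ b) :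
    (∑ σ : Equiv.Perm (Fin n), ∑ τ : Equiv.Perm (Fin n),
      (eps σ * eps τ) * ∏ k, ∫ t : ℝ,
        ((if k = a then f t else 1) * (if k = b then g t else 1)) * (Ψ (σ k) t * Ψ (τ k) t)) =
    ∑ σ : Equiv.Perm (Fin n),
      (TT Ψ f (σ a) (σ a) * TT Ψ g (σ b) (σ b) - TT Ψ f (σ a) (σ b) * TT Ψ g (σ b) (σ a)) := by
  classical
  refine Finset.sum_congr rfl fun σ _ => ?_
  have hval : ∀ (τ : Equiv.Perm (Fin n)) (k : Fin n),
      (∫ t : ℝ, ((if k = a then f t else 1) * (if k = b then g t else 1)) *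
          (Ψ (σ k) t * Ψ (τ k) t)) =
      if k = a then TT Ψ f (σ k) (τ k)
      else if k = b then TT Ψ g (σ k) (τ k)
      else (if σ k = τ k then (1:ℝ) else 0) := by
    intro τ k
    rcases eq_or_ne k a with rfl | hka
    · simp only [if_pos rfl, if_neg hab, mul_one]
      rfl
    rcases eq_or_ne k b with rfl | hkb
    · simp only [if_neg hka, if_pos rfl, one_mul]
      rfl
    · simp only [if_neg hka, if_neg hkb, one_mul]
      exact hΨδ _ _
  -- the inner sum over τ reduces to τ ∈ {σ, σ * swap a b}
  have hSne : σ ≠ σ * Equiv.swap a b := by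
    intro h
    have : (1 : Equiv.Perm (Fin n)) = Equiv.swap a b := mul_left_cancel (by rw [mul_one, ← h])
    exact hab (Equiv.swap_eq_one_iff.mp this.symm)
  have hzero : ∀ τ ∈ (univ : Finset (Equiv.Perm (Fin n))),
      τ ∉ ({σ, σ * Equiv.swap a b} : Finset (Equiv.Perm (Fin n))) →
      (eps σ * eps τ) * (∏ k, ∫ t : ℝ,
        ((if k = a then f t else 1) * (if k = b then g t else 1)) * (Ψ (σ k) t * Ψ (τ k) t)) = 0 := by
    intro τ _ hτ
    simp only [Finset.mem_insert, Finset.mem_singleton] at hτ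
    push_neg at hτ
    have hex : ∃ k, k ≠ a ∧ k ≠ b ∧ σ k ≠ τ k := by
      by_contra hc
      push_neg at hc
      have hfix : ∀ k, k ≠ a → k ≠ b → (σ⁻¹ * τ) k = k := by
        intro k h1 h2
        have := (hc k h1 h2).symm
        simp [Equiv.Perm.mul_apply, this]
      rcases aux_perm_off_pair hab hfix with h | h
      · exact hτ.1 (by
          have : τ = σ * (σ⁻¹ * τ) := by group
          rw [h, mul_one] at this
          exact this)
      · exact hτ.2 (by
          have : τ = σ * (σ⁻¹ * τ) := by group
          rw [h] at this
          exact this)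
    obtain ⟨k, h1, h2, h3⟩ := hex
    have : (∏ k, ∫ t : ℝ,
        ((if k = a then f t else 1) * (if k = b then g t else 1)) * (Ψ (σ k) t * Ψ (τ k) t)) = 0 := by
      refine Finset.prod_eq_zero (mem_univ k) ?_
      rw [hval, if_neg h1, if_neg h2, if_neg h3]
    rw [this, mul_zero]
  rw [← Finset.sum_subset (Finset.subset_univ ({σ, σ * Equiv.swap a b} : Finset (Equiv.Perm (Fin n))))
    hzero]
  rw [Finset.sum_pair hSne]
  have hprod : ∀ τ : Equiv.Perm (Fin n),
      (∏ k, ∫ t : ℝ, ((if k = a then f t else 1) * (if k = b then g t else 1)) *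
        (Ψ (σ k) t * Ψ (τ k) t)) =
      TT Ψ f (σ a) (τ a) * (TT Ψ g (σ b) (τ b) *
        ∏ k ∈ (univ.erase a).erase b, (if σ k = τ k then (1:ℝ) else 0)) := by
    intro τ
    rw [← Finset.mul_prod_erase univ _ (mem_univ a)]
    rw [hval, if_pos rfl]
    congr 1
    rw [← Finset.mul_prod_erase (univ.erase a) _
      (Finset.mem_erase.mpr ⟨hab.symm, mem_univ b⟩)]
    rw [hval, if_neg (Ne.symm hab), if_pos rfl]
    congr 1
    refine Finset.prod_congr rfl fun k hk => ?_
    have h1 : k ≠ b := Finset.ne_of_mem_erase hk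
    have h2 : k ≠ a := Finset.ne_of_mem_erase (Finset.mem_of_mem_erase hk)
    rw [hval, if_neg h2, if_neg h1]
  -- value at τ = σ
  have hv1 : (∏ k ∈ (univ.erase a).erase b, (if σ k = σ k then (1:ℝ) else 0)) = 1 :=
    Finset.prod_eq_one fun k _ => if_pos rfl
  -- value at τ = σ * swap a b
  have hswapa : (σ * Equiv.swap a b) a = σ b := by
    simp [Equiv.Perm.mul_apply, Equiv.swap_apply_left]
  have hswapb : (σ * Equiv.swap a b) b = σ a := by
    simp [Equiv.Perm.mul_apply, Equiv.swap_apply_right]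
  have hv2 : (∏ k ∈ (univ.erase a).erase b,
      (if σ k = (σ * Equiv.swap a b) k then (1:ℝ) else 0)) = 1 := by
    refine Finset.prod_eq_one fun k hk => ?_
    have h1 : k ≠ b := Finset.ne_of_mem_erase hk
    have h2 : k ≠ a := Finset.ne_of_mem_erase (Finset.mem_of_mem_erase hk)
    rw [if_pos]
    simp [Equiv.Perm.mul_apply, Equiv.swap_apply_of_ne_of_ne h2 h1]
  have heps2 : eps (σ * Equiv.swap a b) = -eps σ := by
    unfold eps
    rw [map_mul, Equiv.Perm.sign_swap hab]
    push_cast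
    ring
  rw [hprod σ, hprod (σ * Equiv.swap a b), hv1, hv2, hswapa, hswapb, heps2, eps_mul_self,
    mul_neg, eps_mul_self]
  ring
end Aux3

section Aux2b
variable {n : ℕ} {Ψ : Fin n → ℝ → ℝ}
lemma aux_int_mul (hΨm : ∀ j, Measurable (Ψ j)) (hΨ2 : ∀ j, MemLp (Ψ j) 2 (volume : Measure ℝ))
    {f : ℝ → ℝ} {c : ℝ} (hf : Measurable f) (hfb : ∀ t, |f t| ≤ c) (j k : Fin n) :
    Integrable (fun t => f t * (Ψ j t * Ψ k t)) (volume : Measure ℝ) := by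
  have hjk : Integrable (fun t => Ψ j t * Ψ k t) (volume : Measure ℝ) := by
    have := (hΨ2 k).smul (φ := Ψ j) (hΨ2 j) (r := 1)
    rw [memLp_one_iff_integrable] at this
    exact this
  exact hjk.bdd_mul (hf.aestronglyMeasurable) (Filter.Eventually.of_forall fun t => by
    simpa [Real.norm_eq_abs] using hfb t)

/-- Andréief-type expansion of `∫ (∏ w_k(λ_k)) det² ` -/
lemma aux_elem (hΨm : ∀ j, Measurable (Ψ j)) (hΨ2 : ∀ j, MemLp (Ψ j) 2 (volume : Measure ℝ))
    (w : Fin n → ℝ → ℝ) (hwm : ∀ k, Measurable (w k)) (hwb : ∀ k, ∃ c, ∀ t, |w k t| ≤ c) :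
    Integrable (fun lam : Fin n → ℝ =>
        (∏ k, w k (lam k)) * (Matrix.of fun j k : Fin n => Ψ j (lam k)).det ^ 2)
      (volume : Measure (Fin n → ℝ)) ∧
    ∫ lam : Fin n → ℝ,
        (∏ k, w k (lam k)) * (Matrix.of fun j k : Fin n => Ψ j (lam k)).det ^ 2 =
      ∑ σ : Equiv.Perm (Fin n), ∑ τ : Equiv.Perm (Fin n),
        (eps σ * eps τ) * ∏ k, ∫ t : ℝ, w k t * (Ψ (σ k) t * Ψ (τ k) t) := by
  classical
  set g : Equiv.Perm (Fin n) → Equiv.Perm (Fin n) → Fin n → ℝ → ℝ :=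
    fun σ τ k t => w k t * (Ψ (σ k) t * Ψ (τ k) t) with hg
  have hkey : ∀ lam : Fin n → ℝ,
      (∏ k, w k (lam k)) * (Matrix.of fun j k : Fin n => Ψ j (lam k)).det ^ 2 =
      ∑ σ : Equiv.Perm (Fin n), ∑ τ : Equiv.Perm (Fin n),
        (eps σ * eps τ) * ∏ k, g σ τ k (lam k) := by
    intro lam
    rw [Matrix.det_apply']
    rw [sq, Finset.sum_mul_sum, Finset.mul_sum]
    refine Finset.sum_congr rfl fun σ _ => ?_
    rw [Finset.mul_sum]
    refine Finset.sum_congr rfl fun τ _ => ?_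
    have : ∀ k : Fin n, g σ τ k (lam k) = w k (lam k) * (Ψ (σ k) (lam k) * Ψ (τ k) (lam k)) :=
      fun k => rfl
    simp only [this, Finset.prod_mul_distrib, Matrix.of_apply, eps]
    ring
  have hgi : ∀ σ τ : Equiv.Perm (Fin n),
      Integrable (fun lam : Fin n → ℝ => ∏ k, g σ τ k (lam k))
        (volume : Measure (Fin n → ℝ)) := by
    intro σ τ
    refine Integrable.fintype_prod (𝕜 := ℝ) fun k => ?_
    obtain ⟨c, hc⟩ := hwb k
    exact aux_int_mul hΨm hΨ2 (hwm k) hc _ _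
  constructor
  · have : (fun lam : Fin n → ℝ =>
        (∏ k, w k (lam k)) * (Matrix.of fun j k : Fin n => Ψ j (lam k)).det ^ 2) =
        fun lam => ∑ σ : Equiv.Perm (Fin n), ∑ τ : Equiv.Perm (Fin n),
          (eps σ * eps τ) * ∏ k, g σ τ k (lam k) := funext hkey
    rw [this]
    exact integrable_finset_sum _ fun σ _ => integrable_finset_sum _ fun τ _ =>
      ((hgi σ τ).const_mul _)
  · simp only [hkey]
    rw [integral_finset_sum _ fun σ _ => integrable_finset_sum _ fun τ _ =>
      ((hgi σ τ).const_mul _)]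
    refine Finset.sum_congr rfl fun σ _ => ?_
    rw [integral_finset_sum _ fun τ _ => ((hgi σ τ).const_mul _)]
    refine Finset.sum_congr rfl fun τ _ => ?_
    rw [integral_const_mul, MeasureTheory.integral_fintype_prod_volume_eq_prod (𝕜 := ℝ)
      (f := fun k => g σ τ k)]


end Aux2b
section Aux4

open MeasureTheory Finset

variable {n : ℕ} {Ψ : Fin n → ℝ → ℝ}

lemma aux_reindex1 (F : Fin n → ℝ) :
    (∑ σ : Equiv.Perm (Fin n), ∑ a : Fin n, F (σ a)) =
      (n.factorial : ℝ) * ∑ j : Fin n, F j := by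
  have h : ∀ σ : Equiv.Perm (Fin n), (∑ a : Fin n, F (σ a)) = ∑ j : Fin n, F j :=
    fun σ => Equiv.sum_comp σ F
  simp only [h, Finset.sum_const, card_univ, Fintype.card_perm, Fintype.card_fin,
    nsmul_eq_mul]

lemma aux_reindex2 (F : Fin n → Fin n → ℝ) :
    (∑ σ : Equiv.Perm (Fin n), ∑ a : Fin n, ∑ b : Fin n, (if a = b then 0 else F (σ a) (σ b))) =
      (n.factorial : ℝ) * ∑ j : Fin n, ∑ k : Fin n, (if j = k then 0 else F j k) := by
  have h : ∀ σ : Equiv.Perm (Fin n),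
      (∑ a : Fin n, ∑ b : Fin n, (if a = b then 0 else F (σ a) (σ b))) =
      ∑ j : Fin n, ∑ k : Fin n, (if j = k then 0 else F j k) := by
    intro σ
    have h1 : ∀ a : Fin n,
        (∑ b : Fin n, (if a = b then 0 else F (σ a) (σ b))) =
        ∑ k : Fin n, (if σ a = k then 0 else F (σ a) k) := by
      intro a
      have := Equiv.sum_comp σ (fun y => if σ a = y then 0 else F (σ a) y)
      rw [← this]
      refine Finset.sum_congr rfl fun b _ => ?_
      congr 1
      simp [EmbeddingLike.apply_eq_iff_eq]
    simp only [h1]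
    exact Equiv.sum_comp σ (fun j => ∑ k : Fin n, (if j = k then 0 else F j k))
  simp only [h, Finset.sum_const, card_univ, Fintype.card_perm, Fintype.card_fin, nsmul_eq_mul]

lemma aux_E1 (hΨm : ∀ j, Measurable (Ψ j)) (hΨ2 : ∀ j, MemLp (Ψ j) 2 (volume : Measure ℝ))
    (hΨδ : ∀ j k : Fin n, (∫ t : ℝ, Ψ j t * Ψ k t) = if j = k then 1 else 0)
    (f : ℝ → ℝ) (hfm : Measurable f) {c : ℝ} (hfb : ∀ t, |f t| ≤ c) :
    ∫ lam : Fin n → ℝ,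
        (∑ l, f (lam l)) * (Matrix.of fun j k : Fin n => Ψ j (lam k)).det ^ 2 =
      (n.factorial : ℝ) * ∑ j : Fin n, TT Ψ f j j := by
  classical
  have hwm : ∀ a k : Fin n, Measurable (fun t : ℝ => if k = a then f t else 1) := by
    intro a k
    rcases eq_or_ne k a with rfl | h
    · simpa using hfm
    · simp only [if_neg h]; exact measurable_const
  have hwb : ∀ a k : Fin n, ∃ C, ∀ t : ℝ, |if k = a then f t else 1| ≤ C := by
    intro a k
    rcases eq_or_ne k a with rfl | h
    · exact ⟨c, by simpa using hfb⟩
    · exact ⟨1, fun t => by simp [if_neg h]⟩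
  have hpt : ∀ lam : Fin n → ℝ,
      (∑ l, f (lam l)) * (Matrix.of fun j k : Fin n => Ψ j (lam k)).det ^ 2 =
      ∑ a : Fin n, (∏ k, (if k = a then f (lam k) else 1)) *
        (Matrix.of fun j k : Fin n => Ψ j (lam k)).det ^ 2 := by
    intro lam
    rw [Finset.sum_mul]
    refine Finset.sum_congr rfl fun a _ => ?_
    congr 1
    rw [Finset.prod_ite_eq' univ a (fun k => f (lam k))]
    simp
  simp only [hpt]
  rw [integral_finset_sum _ fun a _ =>
    (aux_elem hΨm hΨ2 _ (hwm a) (hwb a)).1]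
  have hI : ∀ a : Fin n,
      (∫ lam : Fin n → ℝ, (∏ k, (if k = a then f (lam k) else 1)) *
        (Matrix.of fun j k : Fin n => Ψ j (lam k)).det ^ 2) =
      ∑ σ : Equiv.Perm (Fin n), TT Ψ f (σ a) (σ a) := by
    intro a
    rw [(aux_elem hΨm hΨ2 _ (hwm a) (hwb a)).2]
    exact aux_single_eval hΨδ f a
  simp only [hI]
  rw [Finset.sum_comm]
  exact aux_reindex1 (fun j => TT Ψ f j j)

lemma aux_E2 (hΨm : ∀ j, Measurable (Ψ j)) (hΨ2 : ∀ j, MemLp (Ψ j) 2 (volume : Measure ℝ))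
    (hΨδ : ∀ j k : Fin n, (∫ t : ℝ, Ψ j t * Ψ k t) = if j = k then 1 else 0)
    (f : ℝ → ℝ) (hfm : Measurable f) {c : ℝ} (hfb : ∀ t, |f t| ≤ c) :
    ∫ lam : Fin n → ℝ,
        (∑ l, f (lam l)) ^ 2 * (Matrix.of fun j k : Fin n => Ψ j (lam k)).det ^ 2 =
      (n.factorial : ℝ) * ∑ j : Fin n, TT Ψ (fun t => f t * f t) j j +
      (n.factorial : ℝ) * ∑ j : Fin n, ∑ k : Fin n,
        (if j = k then 0 else TT Ψ f j j * TT Ψ f k k - TT Ψ f j k * TT Ψ f k j) := by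
  classical
  set w : Fin n → Fin n → Fin n → ℝ → ℝ :=
    fun a b k t => (if k = a then f t else 1) * (if k = b then f t else 1) with hw
  have hwm : ∀ a b k : Fin n, Measurable (w a b k) := by
    intro a b k
    apply Measurable.mul
    · rcases eq_or_ne k a with rfl | h
      · simpa using hfm
      · simp only [if_neg h]; exact measurable_const
    · rcases eq_or_ne k b with rfl | h
      · simpa using hfm
      · simp only [if_neg h]; exact measurable_const
  have habs : ∀ (p : Prop) [Decidable p] (t : ℝ), |if p then f t else 1| ≤ max c 1 := by
    intro p _ t
    split_ifs
    · exact le_max_of_le_left (hfb t)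
    · simp
  have hwb : ∀ a b k : Fin n, ∃ C, ∀ t : ℝ, |w a b k t| ≤ C := by
    intro a b k
    refine ⟨max c 1 * max c 1, fun t => ?_⟩
    rw [hw, abs_mul]
    have h0 : (0:ℝ) ≤ max c 1 := le_trans (abs_nonneg _) (habs (k = a) t)
    exact mul_le_mul (habs _ t) (habs _ t) (abs_nonneg _) h0
  have hpt : ∀ lam : Fin n → ℝ,
      (∑ l, f (lam l)) ^ 2 * (Matrix.of fun j k : Fin n => Ψ j (lam k)).det ^ 2 =
      ∑ a : Fin n, ∑ b : Fin n, (∏ k, w a b k (lam k)) *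
        (Matrix.of fun j k : Fin n => Ψ j (lam k)).det ^ 2 := by
    intro lam
    rw [sq, Finset.sum_mul_sum]
    rw [Finset.sum_mul]
    refine Finset.sum_congr rfl fun a _ => ?_
    rw [Finset.sum_mul]
    refine Finset.sum_congr rfl fun b _ => ?_
    congr 1
    rw [hw]
    simp only []
    rw [Finset.prod_mul_distrib, Finset.prod_ite_eq' univ a (fun k => f (lam k)),
      Finset.prod_ite_eq' univ b (fun k => f (lam k))]
    simp
  simp only [hpt]
  rw [integral_finset_sum _ fun a _ => integrable_finset_sum _ fun b _ =>
    (aux_elem hΨm hΨ2 _ (hwm a b) (hwb a b)).1]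
  have hswap : ∀ a : Fin n, (∫ lam : Fin n → ℝ, ∑ b : Fin n, (∏ k, w a b k (lam k)) *
      (Matrix.of fun j k : Fin n => Ψ j (lam k)).det ^ 2) =
      ∑ b : Fin n, ∫ lam : Fin n → ℝ, (∏ k, w a b k (lam k)) *
      (Matrix.of fun j k : Fin n => Ψ j (lam k)).det ^ 2 :=
    fun a => integral_finset_sum _ fun b _ => (aux_elem hΨm hΨ2 _ (hwm a b) (hwb a b)).1
  simp only [hswap]
  have hI : ∀ a b : Fin n,
      (∫ lam : Fin n → ℝ, (∏ k, w a b k (lam k)) *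
        (Matrix.of fun j k : Fin n => Ψ j (lam k)).det ^ 2) =
      if a = b then (∑ σ : Equiv.Perm (Fin n), TT Ψ (fun t => f t * f t) (σ a) (σ a))
      else ∑ σ : Equiv.Perm (Fin n),
        (TT Ψ f (σ a) (σ a) * TT Ψ f (σ b) (σ b) - TT Ψ f (σ a) (σ b) * TT Ψ f (σ b) (σ a)) := by
    intro a b
    rw [(aux_elem hΨm hΨ2 _ (hwm a b) (hwb a b)).2]
    rcases eq_or_ne a b with rfl | hab
    · rw [if_pos rfl]
      have : ∀ (σ τ : Equiv.Perm (Fin n)) (k : Fin n),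
          (∫ t : ℝ, w a a k t * (Ψ (σ k) t * Ψ (τ k) t)) =
          ∫ t : ℝ, (if k = a then f t * f t else 1) * (Ψ (σ k) t * Ψ (τ k) t) := by
        intro σ τ k
        congr 1
        funext t
        rw [hw]
        rcases eq_or_ne k a with rfl | h
        · simp
        · simp [if_neg h]
      simp only [this]
      exact aux_single_eval hΨδ (fun t => f t * f t) a
    · rw [if_neg hab]
      exact aux_pair_eval hΨδ f f a b hab
  simp only [hI]
  -- split diagonal and off-diagonal
  have hsplit : ∀ a b : Fin n,
      (if a = b then (∑ σ : Equiv.Perm (Fin n), TT Ψ (fun t => f t * f t) (σ a) (σ a))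
      else ∑ σ : Equiv.Perm (Fin n),
        (TT Ψ f (σ a) (σ a) * TT Ψ f (σ b) (σ b) - TT Ψ f (σ a) (σ b) * TT Ψ f (σ b) (σ a))) =
      (if a = b then (∑ σ : Equiv.Perm (Fin n), TT Ψ (fun t => f t * f t) (σ a) (σ a)) else 0) +
      ∑ σ : Equiv.Perm (Fin n), (if a = b then 0 else
        TT Ψ f (σ a) (σ a) * TT Ψ f (σ b) (σ b) - TT Ψ f (σ a) (σ b) * TT Ψ f (σ b) (σ a)) := by
    intro a b
    split_ifs with h <;> simp
  simp only [hsplit, Finset.sum_add_distrib]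
  congr 1
  · -- diagonal part
    have hdiag : ∀ a : Fin n,
        (∑ b : Fin n, (if a = b then
          (∑ σ : Equiv.Perm (Fin n), TT Ψ (fun t => f t * f t) (σ a) (σ a)) else 0)) =
        ∑ σ : Equiv.Perm (Fin n), TT Ψ (fun t => f t * f t) (σ a) (σ a) := by
      intro a
      rw [Finset.sum_ite_eq univ a]
      simp
    simp only [hdiag]
    rw [Finset.sum_comm]
    exact aux_reindex1 (fun j => TT Ψ (fun t => f t * f t) j j)
  · -- off-diagonal part
    have hcomm : (∑ a : Fin n, ∑ b : Fin n, ∑ σ : Equiv.Perm (Fin n), (if a = b then 0 else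
        TT Ψ f (σ a) (σ a) * TT Ψ f (σ b) (σ b) - TT Ψ f (σ a) (σ b) * TT Ψ f (σ b) (σ a))) =
        ∑ σ : Equiv.Perm (Fin n), ∑ a : Fin n, ∑ b : Fin n, (if a = b then 0 else
        TT Ψ f (σ a) (σ a) * TT Ψ f (σ b) (σ b) - TT Ψ f (σ a) (σ b) * TT Ψ f (σ b) (σ a)) := by
      calc (∑ a : Fin n, ∑ b : Fin n, ∑ σ : Equiv.Perm (Fin n), (if a = b then 0 else
          TT Ψ f (σ a) (σ a) * TT Ψ f (σ b) (σ b) - TT Ψ f (σ a) (σ b) * TT Ψ f (σ b) (σ a))) =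
          ∑ a : Fin n, ∑ σ : Equiv.Perm (Fin n), ∑ b : Fin n, (if a = b then 0 else
          TT Ψ f (σ a) (σ a) * TT Ψ f (σ b) (σ b) - TT Ψ f (σ a) (σ b) * TT Ψ f (σ b) (σ a)) :=
            Finset.sum_congr rfl fun a _ => Finset.sum_comm
        _ = ∑ σ : Equiv.Perm (Fin n), ∑ a : Fin n, ∑ b : Fin n, (if a = b then 0 else
          TT Ψ f (σ a) (σ a) * TT Ψ f (σ b) (σ b) - TT Ψ f (σ a) (σ b) * TT Ψ f (σ b) (σ a)) :=
            Finset.sum_comm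
    rw [hcomm]
    exact aux_reindex2 (fun j k => TT Ψ f j j * TT Ψ f k k - TT Ψ f j k * TT Ψ f k j)

end Aux4
section Aux5

open MeasureTheory Finset

lemma aux_cd (ψ : ℕ → ℝ → ℝ) (r s : ℕ → ℝ) (n : ℕ)
    (hrec : ∀ l < n, ∀ t : ℝ, t * ψ l t =
      r l * ψ (l + 1) t + s l * ψ l t +
        (if l = 0 then 0 else r (l - 1) * ψ (l - 1) t)) :
    ∀ N, 1 ≤ N → N ≤ n → ∀ x y : ℝ,
      (x - y) * ∑ j ∈ Finset.range N, ψ j x * ψ j y =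
        r (N - 1) * (ψ N x * ψ (N - 1) y - ψ (N - 1) x * ψ N y) := by
  intro N hN1
  induction N, hN1 using Nat.le_induction with
  | base =>
    intro h1n x y
    have hx := hrec 0 (by omega) x
    have hy := hrec 0 (by omega) y
    rw [if_pos rfl, add_zero] at hx hy
    simp only [Finset.sum_range_one]
    norm_num
    linear_combination ψ 0 y * hx - ψ 0 x * hy
  | succ N hN ih =>
    intro hNn x y
    have hx := hrec N (by omega) x
    have hy := hrec N (by omega) y
    rw [if_neg (by omega)] at hx hy
    have hih := ih (by omega) x y
    rw [Finset.sum_range_succ]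
    simp only [Nat.add_sub_cancel]
    linear_combination hih + ψ N y * hx - ψ N x * hy

end Aux5

/-- Variance bound: for orthonormal `ψ_0, …, ψ_n` in `L²(ℝ)` satisfying the three-term
recurrence, and a bounded differentiable test function `φ` with bounded derivative,
`Var{Σ_l φ(λ_l)} ≤ r_{n-1}² (sup_λ |φ'(λ)|)²` with respect to `p_n`. -/
theorem variance_linear_statistic_bound (n : ℕ) (hn : 1 ≤ n)
    (ψ : ℕ → ℝ → ℝ) (r s : ℕ → ℝ)
    (hmeas : ∀ l ≤ n, Measurable (ψ l))
    (hL2 : ∀ l ≤ n, MemLp (ψ l) 2 (volume : Measure ℝ))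
    (horth : ∀ l ≤ n, ∀ m ≤ n,
      (∫ t : ℝ, ψ l t * ψ m t) = if l = m then (1 : ℝ) else 0)
    (hr : ∀ l < n, 0 < r l)
    (hrec : ∀ l < n, ∀ t : ℝ, t * ψ l t =
      r l * ψ (l + 1) t + s l * ψ l t +
        (if l = 0 then 0 else r (l - 1) * ψ (l - 1) t))
    (φ : ℝ → ℝ) (hφdiff : Differentiable ℝ φ) (hφb : ∃ M : ℝ, ∀ t, |φ t| ≤ M)
    (hφd : BddAbove (Set.range fun t => |deriv φ t|)) :
    (∫ lam : Fin n → ℝ,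
        (∑ l, φ (lam l)) ^ 2 * detDensity n (fun l : Fin n => ψ l) lam) -
        (∫ lam : Fin n → ℝ,
          (∑ l, φ (lam l)) * detDensity n (fun l : Fin n => ψ l) lam) ^ 2 ≤
      (r (n - 1)) ^ 2 * (⨆ t : ℝ, |deriv φ t|) ^ 2 := by
  classical
  obtain ⟨M, hM⟩ := hφb
  have hφm : Measurable φ := hφdiff.continuous.measurable
  set M' : ℝ := ⨆ t : ℝ, |deriv φ t| with hM'def
  have hM'le : ∀ t, |deriv φ t| ≤ M' := fun t => le_ciSup hφd t
  have hM'0 : (0:ℝ) ≤ M' := (abs_nonneg _).trans (hM'le 0)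
  have hM0 : (0:ℝ) ≤ M := (abs_nonneg _).trans (hM 0)
  have hlip : ∀ x y : ℝ, |φ x - φ y| ≤ M' * |x - y| := by
    intro x y
    have h := Convex.norm_image_sub_le_of_norm_deriv_le (f := φ) (s := Set.univ)
      (fun z _ => hφdiff z) (fun z _ => by simpa [Real.norm_eq_abs] using hM'le z)
      convex_univ (Set.mem_univ y) (Set.mem_univ x)
    simpa [Real.norm_eq_abs] using h
  set Ψ : Fin n → ℝ → ℝ := fun l : Fin n => ψ l with hΨdef
  have hΨm : ∀ j : Fin n, Measurable (Ψ j) := fun j => hmeas j j.isLt.le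
  have hΨ2 : ∀ j : Fin n, MemLp (Ψ j) 2 (volume : Measure ℝ) := fun j => hL2 j j.isLt.le
  have hΨδ : ∀ j k : Fin n, (∫ t : ℝ, Ψ j t * Ψ k t) = if j = k then (1:ℝ) else 0 := by
    intro j k
    rw [hΨdef]
    simp only []
    rw [horth j j.isLt.le k k.isLt.le]
    simp [Fin.val_inj]
  have hfac0 : (n.factorial : ℝ) ≠ 0 := Nat.cast_ne_zero.mpr (Nat.factorial_ne_zero n)
  -- first moment
  have hE1 : (∫ lam : Fin n → ℝ,
      (∑ l, φ (lam l)) * detDensity n (fun l : Fin n => ψ l) lam) =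
      ∑ j : Fin n, TT Ψ φ j j := by
    have hpt : ∀ lam : Fin n → ℝ,
        (∑ l, φ (lam l)) * detDensity n (fun l : Fin n => ψ l) lam =
        ((∑ l, φ (lam l)) * (Matrix.of fun j k : Fin n => Ψ j (lam k)).det ^ 2) /
          (n.factorial : ℝ) := by
      intro lam
      rw [mul_div_assoc]
      rfl
    simp only [hpt]
    rw [integral_div, aux_E1 hΨm hΨ2 hΨδ φ hφm hM, mul_div_cancel_left₀ _ hfac0]
  -- second moment
  have hE2 : (∫ lam : Fin n → ℝ,
      (∑ l, φ (lam l)) ^ 2 * detDensity n (fun l : Fin n => ψ l) lam) =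
      (∑ j : Fin n, TT Ψ (fun t => φ t * φ t) j j) +
      ∑ j : Fin n, ∑ k : Fin n,
        (if j = k then 0 else TT Ψ φ j j * TT Ψ φ k k - TT Ψ φ j k * TT Ψ φ k j) := by
    have hpt : ∀ lam : Fin n → ℝ,
        (∑ l, φ (lam l)) ^ 2 * detDensity n (fun l : Fin n => ψ l) lam =
        ((∑ l, φ (lam l)) ^ 2 * (Matrix.of fun j k : Fin n => Ψ j (lam k)).det ^ 2) /
          (n.factorial : ℝ) := by
      intro lam
      rw [mul_div_assoc]
      rfl
    simp only [hpt]
    rw [integral_div, aux_E2 hΨm hΨ2 hΨδ φ hφm hM, add_div,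
      mul_div_cancel_left₀ _ hfac0, mul_div_cancel_left₀ _ hfac0]
  rw [hE1, hE2]
  -- variance identity
  have hterm : ∀ j k : Fin n,
      (if j = k then 0 else TT Ψ φ j j * TT Ψ φ k k - TT Ψ φ j k * TT Ψ φ k j) =
      TT Ψ φ j j * TT Ψ φ k k - TT Ψ φ j k * TT Ψ φ j k := by
    intro j k
    rw [TT_symm φ k j]
    split_ifs with h
    · subst h; ring
    · rfl
  have hvar : ((∑ j : Fin n, TT Ψ (fun t => φ t * φ t) j j) +
      ∑ j : Fin n, ∑ k : Fin n,
        (if j = k then 0 else TT Ψ φ j j * TT Ψ φ k k - TT Ψ φ j k * TT Ψ φ k j)) -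
      (∑ j : Fin n, TT Ψ φ j j) ^ 2 =
      (∑ j : Fin n, TT Ψ (fun t => φ t * φ t) j j) -
      ∑ j : Fin n, ∑ k : Fin n, TT Ψ φ j k * TT Ψ φ j k := by
    simp only [hterm, Finset.sum_sub_distrib]
    rw [sq, Finset.sum_mul_sum]
    ring
  rw [hvar]
  -- integrability of elementary products
  have hIntMul : ∀ a b : ℕ, a ≤ n → b ≤ n →
      Integrable (fun t : ℝ => ψ a t * ψ b t) (volume : Measure ℝ) := by
    intro a b ha hb
    have h := (hL2 b hb).smul (φ := ψ a) (hL2 a ha) (r := 1)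
    rw [memLp_one_iff_integrable] at h
    exact h
  have huI : ∀ j k : Fin n, Integrable (fun t : ℝ => Ψ j t * Ψ k t) (volume : Measure ℝ) :=
    fun j k => hIntMul _ _ j.isLt.le k.isLt.le
  have hφuI : ∀ j k : Fin n,
      Integrable (fun t : ℝ => φ t * (Ψ j t * Ψ k t)) (volume : Measure ℝ) :=
    fun j k => aux_int_mul hΨm hΨ2 hφm hM j k
  have hφφm : Measurable (fun t : ℝ => φ t * φ t) := hφm.mul hφm
  have hφφb : ∀ t, |φ t * φ t| ≤ M * M := fun t => by
    rw [abs_mul]; exact mul_le_mul (hM t) (hM t) (abs_nonneg _) hM0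
  have hφφuI : ∀ j k : Fin n,
      Integrable (fun t : ℝ => (φ t * φ t) * (Ψ j t * Ψ k t)) (volume : Measure ℝ) :=
    fun j k => aux_int_mul hΨm hΨ2 hφφm hφφb j k
  -- the two-point integral for each pair (j,k)
  have hquad : ∀ j k : Fin n,
      (∫ p : ℝ × ℝ, (φ p.1 - φ p.2) ^ 2 * ((Ψ j p.1 * Ψ k p.1) * (Ψ j p.2 * Ψ k p.2))) =
      2 * (if j = k then TT Ψ (fun t => φ t * φ t) j k else 0) -
      2 * (TT Ψ φ j k * TT Ψ φ j k) := by
    intro j k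
    have hpt : ∀ p : ℝ × ℝ,
        (φ p.1 - φ p.2) ^ 2 * ((Ψ j p.1 * Ψ k p.1) * (Ψ j p.2 * Ψ k p.2)) =
        ((φ p.1 * φ p.1) * (Ψ j p.1 * Ψ k p.1)) * (Ψ j p.2 * Ψ k p.2)
        + (Ψ j p.1 * Ψ k p.1) * ((φ p.2 * φ p.2) * (Ψ j p.2 * Ψ k p.2))
        - 2 * ((φ p.1 * (Ψ j p.1 * Ψ k p.1)) * (φ p.2 * (Ψ j p.2 * Ψ k p.2))) := by
      intro p; ring
    simp only [hpt]
    rw [MeasureTheory.Measure.volume_eq_prod ℝ ℝ]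
    have h1 : Integrable (fun p : ℝ × ℝ =>
        ((φ p.1 * φ p.1) * (Ψ j p.1 * Ψ k p.1)) * (Ψ j p.2 * Ψ k p.2))
        ((volume : Measure ℝ).prod volume) := (hφφuI j k).mul_prod (huI j k)
    have h2 : Integrable (fun p : ℝ × ℝ =>
        (Ψ j p.1 * Ψ k p.1) * ((φ p.2 * φ p.2) * (Ψ j p.2 * Ψ k p.2)))
        ((volume : Measure ℝ).prod volume) := (huI j k).mul_prod (hφφuI j k)
    have h3 : Integrable (fun p : ℝ × ℝ =>
        2 * ((φ p.1 * (Ψ j p.1 * Ψ k p.1)) * (φ p.2 * (Ψ j p.2 * Ψ k p.2))))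
        ((volume : Measure ℝ).prod volume) := ((hφuI j k).mul_prod (hφuI j k)).const_mul 2
    have h12 : Integrable (fun p : ℝ × ℝ =>
        ((φ p.1 * φ p.1) * (Ψ j p.1 * Ψ k p.1)) * (Ψ j p.2 * Ψ k p.2)
        + (Ψ j p.1 * Ψ k p.1) * ((φ p.2 * φ p.2) * (Ψ j p.2 * Ψ k p.2)))
        ((volume : Measure ℝ).prod volume) := h1.add h2
    rw [integral_sub h12 h3, integral_add h1 h2,
      integral_prod_mul (fun x => (φ x * φ x) * (Ψ j x * Ψ k x)) (fun y => Ψ j y * Ψ k y),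
      integral_prod_mul (fun x => Ψ j x * Ψ k x) (fun y => (φ y * φ y) * (Ψ j y * Ψ k y)),
      integral_const_mul,
      integral_prod_mul (fun x => φ x * (Ψ j x * Ψ k x)) (fun y => φ y * (Ψ j y * Ψ k y))]
    have hδ := hΨδ j k
    rw [hδ]
    have hTφφ : (∫ t : ℝ, (φ t * φ t) * (Ψ j t * Ψ k t)) = TT Ψ (fun t => φ t * φ t) j k := rfl
    have hTφ : (∫ t : ℝ, φ t * (Ψ j t * Ψ k t)) = TT Ψ φ j k := rfl
    rw [hTφφ, hTφ]
    split_ifs with h <;> ring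
  -- integrability of each two-point term
  have hcont2 : Continuous (fun p : ℝ × ℝ => (φ p.1 - φ p.2) ^ 2) :=
    ((hφdiff.continuous.comp continuous_fst).sub (hφdiff.continuous.comp continuous_snd)).pow 2
  have hqI : ∀ j k : Fin n, Integrable (fun p : ℝ × ℝ =>
      (φ p.1 - φ p.2) ^ 2 * ((Ψ j p.1 * Ψ k p.1) * (Ψ j p.2 * Ψ k p.2)))
      (volume : Measure (ℝ × ℝ)) := by
    intro j k
    have hbase : Integrable (fun p : ℝ × ℝ => (Ψ j p.1 * Ψ k p.1) * (Ψ j p.2 * Ψ k p.2))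
        (volume : Measure (ℝ × ℝ)) := by
      rw [MeasureTheory.Measure.volume_eq_prod ℝ ℝ]
      exact (huI j k).mul_prod (huI j k)
    refine hbase.bdd_mul (c := (M + M) ^ 2) hcont2.aestronglyMeasurable
      (Filter.Eventually.of_forall fun p => ?_)
    have hb : |φ p.1 - φ p.2| ≤ M + M :=
      (abs_sub _ _).trans (add_le_add (hM p.1) (hM p.2))
    calc ‖(φ p.1 - φ p.2) ^ 2‖ = |φ p.1 - φ p.2| ^ 2 := by
          rw [Real.norm_eq_abs, abs_pow, sq_abs, ← sq_abs]
      _ ≤ (M + M) ^ 2 := pow_le_pow_left₀ (abs_nonneg _) hb 2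
  -- sum of the two-point integrals equals the full two-point integral
  have hGpt : ∀ p : ℝ × ℝ,
      (φ p.1 - φ p.2) ^ 2 * (∑ j : Fin n, Ψ j p.1 * Ψ j p.2) ^ 2 =
      ∑ j : Fin n, ∑ k : Fin n,
        (φ p.1 - φ p.2) ^ 2 * ((Ψ j p.1 * Ψ k p.1) * (Ψ j p.2 * Ψ k p.2)) := by
    intro p
    rw [sq (∑ j : Fin n, Ψ j p.1 * Ψ j p.2), Finset.sum_mul_sum, Finset.mul_sum]
    refine Finset.sum_congr rfl fun j _ => ?_
    rw [Finset.mul_sum]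
    exact Finset.sum_congr rfl fun k _ => by ring
  have hGI : Integrable (fun p : ℝ × ℝ =>
      (φ p.1 - φ p.2) ^ 2 * (∑ j : Fin n, Ψ j p.1 * Ψ j p.2) ^ 2)
      (volume : Measure (ℝ × ℝ)) := by
    rw [show (fun p : ℝ × ℝ =>
        (φ p.1 - φ p.2) ^ 2 * (∑ j : Fin n, Ψ j p.1 * Ψ j p.2) ^ 2) =
        fun p : ℝ × ℝ => ∑ j : Fin n, ∑ k : Fin n,
          (φ p.1 - φ p.2) ^ 2 * ((Ψ j p.1 * Ψ k p.1) * (Ψ j p.2 * Ψ k p.2)) from funext hGpt]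
    exact integrable_finset_sum _ fun j _ => integrable_finset_sum _ fun k _ => hqI j k
  have hhalf : (∑ j : Fin n, TT Ψ (fun t => φ t * φ t) j j) -
      (∑ j : Fin n, ∑ k : Fin n, TT Ψ φ j k * TT Ψ φ j k) =
      (1/2) * ∫ p : ℝ × ℝ,
        (φ p.1 - φ p.2) ^ 2 * (∑ j : Fin n, Ψ j p.1 * Ψ j p.2) ^ 2 := by
    simp only [hGpt]
    rw [integral_finset_sum _ fun j _ => integrable_finset_sum _ fun k _ => hqI j k]
    have hswap : ∀ j : Fin n, (∫ p : ℝ × ℝ, ∑ k : Fin n,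
        (φ p.1 - φ p.2) ^ 2 * ((Ψ j p.1 * Ψ k p.1) * (Ψ j p.2 * Ψ k p.2))) =
        ∑ k : Fin n, ∫ p : ℝ × ℝ,
        (φ p.1 - φ p.2) ^ 2 * ((Ψ j p.1 * Ψ k p.1) * (Ψ j p.2 * Ψ k p.2)) :=
      fun j => integral_finset_sum _ fun k _ => hqI j k
    simp only [hswap, hquad]
    simp only [Finset.sum_sub_distrib, ← Finset.mul_sum, Finset.sum_ite_eq,
      Finset.mem_univ, if_true]
    ring
  rw [hhalf]
  -- Christoffel–Darboux and final bound
  have hnm : n ≠ n - 1 := by omega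
  have hm_le : n - 1 ≤ n := by omega
  have hHpt : ∀ p : ℝ × ℝ,
      (r (n-1) * (ψ n p.1 * ψ (n-1) p.2 - ψ (n-1) p.1 * ψ n p.2)) ^ 2 =
      (r (n-1))^2 * ((ψ n p.1 * ψ n p.1) * (ψ (n-1) p.2 * ψ (n-1) p.2))
      + (r (n-1))^2 * ((ψ (n-1) p.1 * ψ (n-1) p.1) * (ψ n p.2 * ψ n p.2))
      - (2 * (r (n-1))^2) * ((ψ n p.1 * ψ (n-1) p.1) * (ψ n p.2 * ψ (n-1) p.2)) := by
    intro p; ring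
  have hH1 : Integrable (fun p : ℝ × ℝ => (ψ n p.1 * ψ n p.1) * (ψ (n-1) p.2 * ψ (n-1) p.2))
      (volume : Measure (ℝ × ℝ)) := by
    rw [MeasureTheory.Measure.volume_eq_prod ℝ ℝ]
    exact (hIntMul n n le_rfl le_rfl).mul_prod (hIntMul _ _ hm_le hm_le)
  have hH2 : Integrable (fun p : ℝ × ℝ => (ψ (n-1) p.1 * ψ (n-1) p.1) * (ψ n p.2 * ψ n p.2))
      (volume : Measure (ℝ × ℝ)) := by
    rw [MeasureTheory.Measure.volume_eq_prod ℝ ℝ]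
    exact (hIntMul _ _ hm_le hm_le).mul_prod (hIntMul n n le_rfl le_rfl)
  have hH3 : Integrable (fun p : ℝ × ℝ => (ψ n p.1 * ψ (n-1) p.1) * (ψ n p.2 * ψ (n-1) p.2))
      (volume : Measure (ℝ × ℝ)) := by
    rw [MeasureTheory.Measure.volume_eq_prod ℝ ℝ]
    exact (hIntMul n _ le_rfl hm_le).mul_prod (hIntMul n _ le_rfl hm_le)
  have hHI : Integrable (fun p : ℝ × ℝ =>
      (r (n-1) * (ψ n p.1 * ψ (n-1) p.2 - ψ (n-1) p.1 * ψ n p.2)) ^ 2)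
      (volume : Measure (ℝ × ℝ)) := by
    simp only [hHpt]
    exact ((hH1.const_mul _).add (hH2.const_mul _)).sub (hH3.const_mul _)
  have hHval : (∫ p : ℝ × ℝ,
      (r (n-1) * (ψ n p.1 * ψ (n-1) p.2 - ψ (n-1) p.1 * ψ n p.2)) ^ 2) =
      2 * (r (n-1))^2 := by
    simp only [hHpt]
    have g1 := hH1.const_mul ((r (n-1))^2)
    have g2 := hH2.const_mul ((r (n-1))^2)
    have g3 := hH3.const_mul (2 * (r (n-1))^2)
    have g12 : Integrable (fun p : ℝ × ℝ =>
        (r (n-1))^2 * ((ψ n p.1 * ψ n p.1) * (ψ (n-1) p.2 * ψ (n-1) p.2))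
        + (r (n-1))^2 * ((ψ (n-1) p.1 * ψ (n-1) p.1) * (ψ n p.2 * ψ n p.2)))
        (volume : Measure (ℝ × ℝ)) := g1.add g2
    rw [integral_sub g12 g3, integral_add g1 g2,
      integral_const_mul, integral_const_mul, integral_const_mul]
    rw [MeasureTheory.Measure.volume_eq_prod ℝ ℝ,
      integral_prod_mul (fun x => ψ n x * ψ n x) (fun y => ψ (n-1) y * ψ (n-1) y),
      integral_prod_mul (fun x => ψ (n-1) x * ψ (n-1) x) (fun y => ψ n y * ψ n y),
      integral_prod_mul (fun x => ψ n x * ψ (n-1) x) (fun y => ψ n y * ψ (n-1) y)]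
    rw [horth n le_rfl n le_rfl, horth _ hm_le _ hm_le, horth n le_rfl _ hm_le]
    rw [if_pos rfl, if_pos rfl, if_neg hnm]
    ring
  have hdom : ∀ p : ℝ × ℝ,
      (φ p.1 - φ p.2) ^ 2 * (∑ j : Fin n, Ψ j p.1 * Ψ j p.2) ^ 2 ≤
      M' ^ 2 * (r (n-1) * (ψ n p.1 * ψ (n-1) p.2 - ψ (n-1) p.1 * ψ n p.2)) ^ 2 := by
    intro p
    have hcd := aux_cd ψ r s n hrec n hn le_rfl p.1 p.2
    have hfin : (∑ j : Fin n, Ψ j p.1 * Ψ j p.2) =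
        ∑ j ∈ Finset.range n, ψ j p.1 * ψ j p.2 :=
      Fin.sum_univ_eq_sum_range (fun j => ψ j p.1 * ψ j p.2) n
    calc (φ p.1 - φ p.2) ^ 2 * (∑ j : Fin n, Ψ j p.1 * Ψ j p.2) ^ 2 =
        (|φ p.1 - φ p.2| * |∑ j : Fin n, Ψ j p.1 * Ψ j p.2|) ^ 2 := by
          rw [mul_pow, sq_abs, sq_abs]
      _ ≤ ((M' * |p.1 - p.2|) * |∑ j : Fin n, Ψ j p.1 * Ψ j p.2|) ^ 2 := by
          refine pow_le_pow_left₀ (by positivity) ?_ 2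
          exact mul_le_mul_of_nonneg_right (hlip _ _) (abs_nonneg _)
      _ = M' ^ 2 * ((p.1 - p.2) * (∑ j : Fin n, Ψ j p.1 * Ψ j p.2)) ^ 2 := by
          rw [mul_assoc, mul_pow, ← abs_mul, sq_abs]
      _ = M' ^ 2 * (r (n-1) * (ψ n p.1 * ψ (n-1) p.2 - ψ (n-1) p.1 * ψ n p.2)) ^ 2 := by
          rw [hfin, hcd]
  have hle := integral_mono hGI (hHI.const_mul (M' ^ 2)) hdom
  calc (1/2 : ℝ) * ∫ p : ℝ × ℝ,
        (φ p.1 - φ p.2) ^ 2 * (∑ j : Fin n, Ψ j p.1 * Ψ j p.2) ^ 2 ≤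
      (1/2) * ∫ p : ℝ × ℝ,
        M' ^ 2 * (r (n-1) * (ψ n p.1 * ψ (n-1) p.2 - ψ (n-1) p.1 * ψ n p.2)) ^ 2 := by
        apply mul_le_mul_of_nonneg_left hle (by norm_num)
    _ = (1/2) * (M' ^ 2 * (2 * (r (n-1))^2)) := by rw [integral_const_mul, hHval]
    _ = (r (n-1)) ^ 2 * M' ^ 2 := by ring
end
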